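/- arXiv:2308.02755 — 6 statements merged into one kernel-verified Lean document; each statement's English description precedes it below -/
import Mathlib

section
/- Let A be a real n×n matrix and suppose there exist a switching matrix Θ and a permutation matrix P such that A' = ΘPAPᵀΘ is either eventually positive, or entrywise nonnegative and irreducible. Then there exists a vector v' ∈ ℝⁿ with all entries strictly positive such that A'v' = ρ(A)v', and the vector v := PᵀΘv' (which has all entries nonzero) is an eigenvector of A for the eigenvalue ρ(A): Av = ρ(A)v. -/
open Matrix Polynomial

/-- The spectrum of a real square matrix: the multiset of complex roots of its
characteristic polynomial. -/
noncomputable def spectrumM {m : Type*} [Fintype m] [DecidableEq m]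
    (A : Matrix m m ℝ) : Multiset ℂ :=
  ((A.map Complex.ofReal).charpoly).roots

/-- The spectral radius: the maximum modulus of the eigenvalues. -/
noncomputable def specRadius {m : Type*} [Fintype m] [DecidableEq m]
    (A : Matrix m m ℝ) : ℝ :=
  sSup {r : ℝ | ∃ z ∈ spectrumM A, ‖z‖ = r}

/-- A switching matrix: diagonal with ±1 entries. -/
def IsSwitching {n : ℕ} (Θ : Matrix (Fin n) (Fin n) ℝ) : Prop :=
  ∃ θ : Fin n → ℝ, (∀ i, θ i = 1 ∨ θ i = -1) ∧ Θ = Matrix.diagonal θ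

/-- A permutation matrix. -/
def IsPermMatrix {n : ℕ} (P : Matrix (Fin n) (Fin n) ℝ) : Prop :=
  ∃ σ : Equiv.Perm (Fin n), P = Matrix.of fun i j => if σ j = i then 1 else 0

/-- Eventually positive matrix: all entries of all high enough powers are positive. -/
def EventuallyPositive {n : ℕ} (B : Matrix (Fin n) (Fin n) ℝ) : Prop :=
  ∃ k₀ : ℕ, ∀ k : ℕ, k₀ ≤ k → ∀ i j, 0 < (B ^ k) i j

/-- Entrywise nonnegative and irreducible matrix. -/
def IrreducibleNonneg {n : ℕ} (B : Matrix (Fin n) (Fin n) ℝ) : Prop :=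
  (∀ i j, 0 ≤ B i j) ∧ ∀ i j, ∃ k : ℕ, 0 < k ∧ 0 < (B ^ k) i j

section Spec
variable {n : ℕ}

lemma eval_charpoly' {R : Type*} [CommRing R] {m : Type*} [Fintype m] [DecidableEq m]
    (M : Matrix m m R) (r : R) : M.charpoly.eval r = (Matrix.scalar m r - M).det := by
  rw [Matrix.charpoly, _root_.eval_det, matPolyEquiv_charmatrix, eval_sub, eval_X, eval_C]

lemma mem_spec_iff_root (N : Matrix (Fin n) (Fin n) ℂ) (z : ℂ) :
    z ∈ spectrum ℂ N ↔ N.charpoly.eval z = 0 := by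
  have halg : (algebraMap ℂ (Matrix (Fin n) (Fin n) ℂ)) z = Matrix.scalar (Fin n) z := by
    ext i j; simp [Matrix.algebraMap_matrix_apply, Matrix.scalar, Matrix.smul_one_eq_diagonal,
      Matrix.diagonal_apply]
  rw [spectrum.mem_iff, eval_charpoly', halg, Matrix.isUnit_iff_isUnit_det, isUnit_iff_ne_zero,
    not_ne_iff]

lemma mem_spectrumM_iff (A : Matrix (Fin n) (Fin n) ℝ) (z : ℂ) :
    z ∈ spectrumM A ↔ z ∈ spectrum ℂ (A.map Complex.ofReal) := by
  rw [spectrumM, Polynomial.mem_roots ((Matrix.charpoly_monic _).ne_zero), mem_spec_iff_root]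
  exact Iff.rfl

/-- The set of moduli of eigenvalues. -/
def SRset (A : Matrix (Fin n) (Fin n) ℝ) : Set ℝ :=
  {r : ℝ | ∃ z ∈ spectrumM A, ‖z‖ = r}

lemma specRadius_eq_sSup (A : Matrix (Fin n) (Fin n) ℝ) : specRadius A = sSup (SRset A) := rfl

lemma SRset_eq_image (A : Matrix (Fin n) (Fin n) ℝ) :
    SRset A = (fun z : ℂ => ‖z‖) '' (spectrum ℂ (A.map Complex.ofReal)) := by
  ext r
  simp only [SRset, Set.mem_setOf_eq, Set.mem_image]
  constructor
  · rintro ⟨z, hz, rfl⟩; exact ⟨z, (mem_spectrumM_iff A z).1 hz, rfl⟩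
  · rintro ⟨z, hz, rfl⟩; exact ⟨z, (mem_spectrumM_iff A z).2 hz, rfl⟩

lemma SRset_finite (A : Matrix (Fin n) (Fin n) ℝ) : (SRset A).Finite := by
  have : SRset A = (fun z : ℂ => ‖z‖) '' {z | z ∈ spectrumM A} := by
    ext r
    simp only [SRset, Set.mem_setOf_eq, Set.mem_image]
  rw [this]
  exact (Multiset.finite_toSet _).image _

lemma SRset_nonneg (A : Matrix (Fin n) (Fin n) ℝ) {r : ℝ} (hr : r ∈ SRset A) : 0 ≤ r := by
  obtain ⟨z, _, rfl⟩ := hr; exact norm_nonneg z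

lemma SRset_nonempty (hn : 0 < n) (A : Matrix (Fin n) (Fin n) ℝ) : (SRset A).Nonempty := by
  have hdeg : 0 < (A.map Complex.ofReal).charpoly.degree := by
    rw [Matrix.charpoly_degree_eq_dim]
    simpa using hn
  obtain ⟨z, hz⟩ := Complex.exists_root hdeg
  refine ⟨‖z‖, z, ?_, rfl⟩
  rw [mem_spectrumM_iff, mem_spec_iff_root]
  exact hz

lemma specRadius_eq_of_isGreatest {A : Matrix (Fin n) (Fin n) ℝ} {r : ℝ}
    (h : IsGreatest (SRset A) r) : specRadius A = r :=
  h.csSup_eq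

lemma specRadius_mem (hn : 0 < n) (A : Matrix (Fin n) (Fin n) ℝ) :
    specRadius A ∈ SRset A := by
  rw [specRadius_eq_sSup]
  exact (SRset_nonempty hn A).csSup_mem (SRset_finite A)

lemma specRadius_nonneg (hn : 0 < n) (A : Matrix (Fin n) (Fin n) ℝ) : 0 ≤ specRadius A :=
  SRset_nonneg A (specRadius_mem hn A)

end Spec

section Perron
variable {n : ℕ}


lemma pow_entry_nonneg {B : Matrix (Fin n) (Fin n) ℝ} (hB : ∀ i j, 0 ≤ B i j) (k : ℕ) :
    ∀ i j, 0 ≤ (B ^ k) i j := by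
  induction k with
  | zero => intro i j; simp [Matrix.one_apply]; split <;> norm_num
  | succ k ih =>
      intro i j
      rw [pow_succ, Matrix.mul_apply]
      exact Finset.sum_nonneg fun l _ => mul_nonneg (ih i l) (hB l j)

lemma mulVec_pos {M : Matrix (Fin n) (Fin n) ℝ} (hM : ∀ i j, 0 < M i j)
    {x : Fin n → ℝ} (hx : ∀ i, 0 ≤ x i) (hx' : ∃ i, 0 < x i) :
    ∀ i, 0 < M.mulVec x i := by
  intro i
  obtain ⟨l, hl⟩ := hx'
  rw [Matrix.mulVec, dotProduct]
  refine Finset.sum_pos' (fun j _ => mul_nonneg (hM i j).le (hx j)) ⟨l, Finset.mem_univ l, ?_⟩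
  exact mul_pos (hM i l) hl

lemma mulVec_nonneg {M : Matrix (Fin n) (Fin n) ℝ} (hM : ∀ i j, 0 ≤ M i j)
    {x : Fin n → ℝ} (hx : ∀ i, 0 ≤ x i) : ∀ i, 0 ≤ M.mulVec x i := by
  intro i
  rw [Matrix.mulVec, dotProduct]
  exact Finset.sum_nonneg fun j _ => mul_nonneg (hM i j) (hx j)

lemma row_pos {B : Matrix (Fin n) (Fin n) ℝ} (hB : IrreducibleNonneg B) (i : Fin n) :
    ∃ j, 0 < B i j := by
  obtain ⟨k, hk, hpos⟩ := hB.2 i i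
  by_contra hcon
  push_neg at hcon
  have hrow : ∀ j, B i j = 0 := fun j => le_antisymm (hcon j) (hB.1 i j)
  obtain ⟨k', rfl⟩ := Nat.exists_eq_succ_of_ne_zero hk.ne'
  rw [pow_succ'] at hpos
  rw [Matrix.mul_apply] at hpos
  have : ∀ l ∈ Finset.univ, B i l * (B ^ k') l i = 0 := fun l _ => by rw [hrow l, zero_mul]
  rw [Finset.sum_eq_zero this] at hpos
  exact lt_irrefl _ hpos

/-- The key summed matrix with all positive entries. -/
lemma exists_posComm {B : Matrix (Fin n) (Fin n) ℝ} (hB : IrreducibleNonneg B) :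
    ∃ M : Matrix (Fin n) (Fin n) ℝ, (∀ i j, 0 < M i j) ∧ M * B = B * M := by
  classical
  choose K hK1 hK2 using hB.2
  set N := Finset.sup Finset.univ (fun p : Fin n × Fin n => K p.1 p.2) with hN
  refine ⟨∑ k ∈ Finset.range (N + 1), B ^ k, fun i j => ?_, ?_⟩
  · rw [Matrix.sum_apply]
    have hmem : K i j ∈ Finset.range (N + 1) := by
      rw [Finset.mem_range]
      have : K i j ≤ N := Finset.le_sup (f := fun p : Fin n × Fin n => K p.1 p.2)
        (Finset.mem_univ (i, j))
      omega
    refine lt_of_lt_of_le (hK2 i j) ?_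
    exact Finset.single_le_sum (f := fun k => (B ^ k) i j)
      (fun k _ => pow_entry_nonneg hB.1 k i j) hmem
  · rw [Finset.sum_mul, Finset.mul_sum]
    exact Finset.sum_congr rfl fun k _ => by rw [← pow_succ, ← pow_succ']

lemma continuous_mulVecFun (M : Matrix (Fin n) (Fin n) ℝ) :
    Continuous fun x : Fin n → ℝ => M.mulVec x := by
  refine continuous_pi fun i => ?_
  simp only [Matrix.mulVec, dotProduct]
  exact continuous_finset_sum _ fun j _ => (continuous_const.mul (continuous_apply j))

lemma continuousOn_finset_inf' {α : Type*} [TopologicalSpace α] {ι : Type*}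
    (s : Finset ι) (hs : s.Nonempty) {f : ι → α → ℝ} {t : Set α}
    (hf : ∀ i ∈ s, ContinuousOn (f i) t) :
    ContinuousOn (fun x => s.inf' hs (fun i => f i x)) t := by
  induction hs using Finset.Nonempty.cons_induction with
  | singleton a =>
      simp only [Finset.inf'_singleton]
      exact hf _ (by simp)
  | cons a s ha hs ih =>
      simp only [Finset.inf'_cons (H := hs)]
      have h1 : ContinuousOn (f a) t := hf a (by simp)
      have h2 := ih (fun j hj => hf j (Finset.mem_cons_of_mem hj))
      exact h1.inf h2

lemma perron_aux (hn : 0 < n) (B : Matrix (Fin n) (Fin n) ℝ) (hB : IrreducibleNonneg B) :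
    ∃ r : ℝ, 0 < r ∧ ∃ z : Fin n → ℝ, (∀ i, 0 < z i) ∧ B.mulVec z = r • z := by
  classical
  haveI : Nonempty (Fin n) := ⟨⟨0, hn⟩⟩
  obtain ⟨M, hMpos, hMB⟩ := exists_posComm hB
  set S : Set (Fin n → ℝ) := {x | (∀ i, 0 ≤ x i) ∧ ∑ i, x i = 1} with hSdef
  have hSclosed : IsClosed S := by
    have h1 : IsClosed {x : Fin n → ℝ | ∀ i, 0 ≤ x i} := by
      have he : {x : Fin n → ℝ | ∀ i, 0 ≤ x i} = ⋂ i, (fun x : Fin n → ℝ => x i) ⁻¹' (Set.Ici 0) := by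
        ext x; simp
      rw [he]
      exact isClosed_iInter fun i => isClosed_Ici.preimage (continuous_apply i)
    have h2 : IsClosed {x : Fin n → ℝ | ∑ i, x i = 1} :=
      isClosed_eq (continuous_finset_sum _ fun i _ => continuous_apply i) continuous_const
    have : S = {x : Fin n → ℝ | ∀ i, 0 ≤ x i} ∩ {x : Fin n → ℝ | ∑ i, x i = 1} := by
      ext x; simp [hSdef, Set.mem_inter_iff]
    rw [this]; exact h1.inter h2
  have hScomp : IsCompact S := by
    refine (isCompact_univ_pi fun _ : Fin n => isCompact_Icc (a := (0:ℝ)) (b := 1)).of_isClosed_subset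
      hSclosed ?_
    rintro x ⟨hx0, hx1⟩ i _
    refine ⟨hx0 i, ?_⟩
    calc x i ≤ ∑ j, x j := Finset.single_le_sum (fun j _ => hx0 j) (Finset.mem_univ i)
    _ = 1 := hx1
  have hSne : S.Nonempty := by
    refine ⟨fun _ => (n : ℝ)⁻¹, fun i => by positivity, ?_⟩
    rw [Finset.sum_const, Finset.card_univ, Fintype.card_fin, nsmul_eq_mul]
    field_simp
  have hSpos : ∀ x ∈ S, ∃ l, 0 < x l := by
    rintro x ⟨hx0, hx1⟩
    by_contra h; push_neg at h
    have : ∀ l, x l = 0 := fun l => le_antisymm (h l) (hx0 l)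
    rw [Finset.sum_congr rfl (fun l _ => this l), Finset.sum_const, smul_zero] at hx1
    norm_num at hx1
  set c : (Fin n → ℝ) → ℝ := fun x => ∑ i, M.mulVec x i with hcdef
  have hccont : Continuous c := continuous_finset_sum _ fun i _ =>
    (continuous_apply i).comp (continuous_mulVecFun M)
  have hcpos : ∀ x ∈ S, 0 < c x := by
    intro x hx
    have := mulVec_pos hMpos hx.1 (hSpos x hx)
    exact Finset.sum_pos (fun i _ => this i) Finset.univ_nonempty
  set Φ : (Fin n → ℝ) → (Fin n → ℝ) := fun x => (c x)⁻¹ • M.mulVec x with hΦdef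
  have hΦcont : ContinuousOn Φ S :=
    (hccont.continuousOn.inv₀ fun x hx => (hcpos x hx).ne').smul
      (continuous_mulVecFun M).continuousOn
  set S' := Φ '' S with hS'def
  have hS'comp : IsCompact S' := hScomp.image_of_continuousOn hΦcont
  have hS'ne : S'.Nonempty := hSne.image Φ
  have hS'pos : ∀ y ∈ S', ∀ i, 0 < y i := by
    rintro y ⟨x, hx, rfl⟩ i
    exact mul_pos (inv_pos.2 (hcpos x hx)) (mulVec_pos hMpos hx.1 (hSpos x hx) i)
  have hS'S : S' ⊆ S := by
    rintro y ⟨x, hx, rfl⟩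
    refine ⟨fun i => (hS'pos _ ⟨x, hx, rfl⟩ i).le, ?_⟩
    simp only [hΦdef, Pi.smul_apply, smul_eq_mul, ← Finset.mul_sum]
    exact inv_mul_cancel₀ (hcpos x hx).ne'
  set g : (Fin n → ℝ) → ℝ :=
    fun y => Finset.univ.inf' Finset.univ_nonempty (fun i => B.mulVec y i / y i) with hgdef
  have hgcont : ContinuousOn g S' := by
    refine continuousOn_finset_inf' _ _ fun i _ => ContinuousOn.div ?_ ?_ ?_
    · exact ((continuous_apply i).comp (continuous_mulVecFun B)).continuousOn
    · exact (continuous_apply i).continuousOn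
    · exact fun y hy => (hS'pos y hy i).ne'
  obtain ⟨z, hzS', hzmax⟩ := hS'comp.exists_isMaxOn hS'ne hgcont
  set r := g z with hrdef
  have hzpos : ∀ i, 0 < z i := hS'pos z hzS'
  have hBzpos : ∀ i, 0 < B.mulVec z i := by
    intro i
    obtain ⟨j, hj⟩ := row_pos hB i
    rw [Matrix.mulVec, dotProduct]
    exact Finset.sum_pos' (fun l _ => mul_nonneg (hB.1 i l) (hzpos l).le)
      ⟨j, Finset.mem_univ j, mul_pos hj (hzpos j)⟩
  have hrle : ∀ i, r * z i ≤ B.mulVec z i := by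
    intro i
    have h := Finset.inf'_le (fun i => B.mulVec z i / z i) (Finset.mem_univ i)
    exact (le_div_iff₀ (hzpos i)).1 h
  have hrpos : 0 < r := by
    rw [hrdef, hgdef]
    refine Finset.lt_inf'_iff _ |>.2 fun i _ => div_pos (hBzpos i) (hzpos i)
  have key : B.mulVec z = r • z := by
    by_contra hne
    have hex : ∃ i₀, r * z i₀ < B.mulVec z i₀ := by
      by_contra h; push_neg at h
      exact hne (funext fun i => le_antisymm (h i) (hrle i) ▸ by
        simp [Pi.smul_apply, smul_eq_mul, le_antisymm (h i) (hrle i)])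
    obtain ⟨i₀, hi₀⟩ := hex
    set w : Fin n → ℝ := fun i => B.mulVec z i - r * z i with hwdef
    have hw0 : ∀ i, 0 ≤ w i := fun i => sub_nonneg.2 (hrle i)
    have hwi₀ : 0 < w i₀ := sub_pos.2 hi₀
    set y := M.mulVec z with hydef
    have hypos : ∀ i, 0 < y i :=
      mulVec_pos hMpos (fun i => (hzpos i).le) ⟨i₀, hzpos i₀⟩
    have hMw : ∀ i, 0 < M.mulVec w i := mulVec_pos hMpos hw0 ⟨i₀, hwi₀⟩
    have hMweq : ∀ i, M.mulVec w i = B.mulVec y i - r * y i := by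
      have hw' : w = B.mulVec z - r • z := by
        funext i; simp [hwdef, Pi.smul_apply, smul_eq_mul]
      intro i
      rw [hw', Matrix.mulVec_sub, Matrix.mulVec_smul, Matrix.mulVec_mulVec, hMB,
        ← Matrix.mulVec_mulVec]
      simp [hydef, Pi.smul_apply, smul_eq_mul]
    have hu : ∀ i, r * y i < B.mulVec y i := by
      intro i
      have h := hMw i
      rw [hMweq i] at h
      linarith
    have hzS : z ∈ S := hS'S hzS'
    have hΦz : Φ z ∈ S' := Set.mem_image_of_mem _ hzS
    have htpos : 0 < (c z)⁻¹ := inv_pos.2 (hcpos z hzS)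
    have hgy : r < g (Φ z) := by
      rw [hgdef]
      refine Finset.lt_inf'_iff _ |>.2 fun i _ => ?_
      have hΦzi : Φ z i = (c z)⁻¹ * y i := by simp [hΦdef, hydef, Pi.smul_apply, smul_eq_mul]
      have hBΦz : B.mulVec (Φ z) i = (c z)⁻¹ * B.mulVec y i := by
        simp only [hΦdef, Matrix.mulVec_smul, Pi.smul_apply, smul_eq_mul, hydef]
      rw [hΦzi, hBΦz, mul_div_mul_left _ _ htpos.ne']
      exact (lt_div_iff₀ (hypos i)).2 (hu i)
    exact absurd (hzmax hΦz) (not_le.2 hgy)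
  exact ⟨r, hrpos, z, hzpos, key⟩

lemma transpose_irr {B : Matrix (Fin n) (Fin n) ℝ} (hB : IrreducibleNonneg B) :
    IrreducibleNonneg Bᵀ := by
  refine ⟨fun i j => hB.1 j i, fun i j => ?_⟩
  obtain ⟨k, hk, hpos⟩ := hB.2 j i
  exact ⟨k, hk, by rwa [← Matrix.transpose_pow, Matrix.transpose_apply]⟩

/-- Complex eigenvalue modulus bound via a positive left eigenvector. -/
lemma abs_le_of_leftEig {B : Matrix (Fin n) (Fin n) ℝ} (hB0 : ∀ i j, 0 ≤ B i j)
    {w : Fin n → ℝ} (hw : ∀ i, 0 < w i) {r' : ℝ} (hweig : Bᵀ.mulVec w = r' • w)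
    {μ : ℂ} (hμ : μ ∈ spectrum ℂ (B.map Complex.ofReal)) : ‖μ‖ ≤ r' := by
  classical
  rw [mem_spec_iff_root, eval_charpoly'] at hμ
  obtain ⟨x, hx0, hx⟩ := (Matrix.exists_mulVec_eq_zero_iff).2 hμ
  have heig : (B.map Complex.ofReal).mulVec x = μ • x := by
    have := hx
    rw [Matrix.sub_mulVec] at this
    have h1 : (Matrix.scalar (Fin n) μ).mulVec x = μ • x := by
      funext i
      simp [Matrix.scalar, Matrix.smul_one_eq_diagonal, Matrix.mulVec_diagonal]
    rw [h1] at this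
    linear_combination (norm := module) -this
  set a : Fin n → ℝ := fun i => ‖x i‖ with hadef
  have ha0 : ∀ i, 0 ≤ a i := fun i => norm_nonneg _
  have hax : ∃ j, 0 < a j := by
    by_contra h; push_neg at h
    refine hx0 (funext fun j => ?_)
    have h2 : ‖x j‖ = 0 := le_antisymm (h j) (ha0 j)
    simpa using h2
  have hkey : ∀ i, ‖μ‖ * a i ≤ B.mulVec a i := by
    intro i
    have h1 : ‖μ‖ * a i = ‖((B.map Complex.ofReal).mulVec x i)‖ := by
      rw [heig]; simp [hadef, _root_.map_mul, Pi.smul_apply, smul_eq_mul]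
    rw [h1, Matrix.mulVec, dotProduct]
    refine le_trans (norm_sum_le _ _) ?_
    rw [Matrix.mulVec, dotProduct]
    refine le_of_eq (Finset.sum_congr rfl fun j _ => ?_)
    simp [Matrix.map_apply, _root_.map_mul, Complex.norm_real, abs_of_nonneg (hB0 i j), hadef]
  have hdot : ‖μ‖ * (w ⬝ᵥ a) ≤ r' * (w ⬝ᵥ a) := by
    have h2 : w ⬝ᵥ B.mulVec a = r' * (w ⬝ᵥ a) := by
      rw [dotProduct_mulVec, ← Matrix.mulVec_transpose, hweig]
      simp [dotProduct, Finset.mul_sum, Pi.smul_apply, smul_eq_mul]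
      ring_nf
    calc ‖μ‖ * (w ⬝ᵥ a) = ∑ i, w i * (‖μ‖ * a i) := by
          rw [dotProduct, Finset.mul_sum]
          exact Finset.sum_congr rfl fun i _ => by ring
    _ ≤ ∑ i, w i * B.mulVec a i :=
          Finset.sum_le_sum fun i _ => mul_le_mul_of_nonneg_left (hkey i) (hw i).le
    _ = r' * (w ⬝ᵥ a) := h2
  have hwa : 0 < w ⬝ᵥ a := by
    obtain ⟨j, hj⟩ := hax
    exact Finset.sum_pos' (fun i _ => mul_nonneg (hw i).le (ha0 i))
      ⟨j, Finset.mem_univ j, mul_pos (hw j) hj⟩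
  exact le_of_mul_le_mul_right (by linarith [hdot]) hwa

/-- A real eigenpair gives membership in the complex spectrum. -/
lemma real_eig_mem_spectrum {B : Matrix (Fin n) (Fin n) ℝ} {z : Fin n → ℝ} {r : ℝ}
    (hz0 : z ≠ 0) (heig : B.mulVec z = r • z) :
    (r : ℂ) ∈ spectrum ℂ (B.map Complex.ofReal) := by
  rw [mem_spec_iff_root]
  have hmap : (B.map Complex.ofReal).charpoly
      = B.charpoly.map Complex.ofRealHom :=
    B.charpoly_map Complex.ofRealHom
  have hdet : B.charpoly.eval r = 0 := by
    rw [eval_charpoly']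
    rw [← Matrix.exists_mulVec_eq_zero_iff]
    refine ⟨z, hz0, ?_⟩
    rw [Matrix.sub_mulVec, heig]
    have h1 : (Matrix.scalar (Fin n) r).mulVec z = r • z := by
      funext i
      simp [Matrix.scalar, Matrix.smul_one_eq_diagonal, Matrix.mulVec_diagonal]
    rw [h1, sub_self]
  rw [hmap, Polynomial.eval_map]
  have h3 := Polynomial.eval₂_at_apply (Complex.ofRealHom) (p := B.charpoly) r
  have h4 : (Complex.ofRealHom r) = (r : ℂ) := rfl
  rw [h4] at h3
  rw [h3, hdet, map_zero]

theorem perron_main (hn : 0 < n) (B : Matrix (Fin n) (Fin n) ℝ) (hB : IrreducibleNonneg B) :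
    ∃ z : Fin n → ℝ, (∀ i, 0 < z i) ∧ B.mulVec z = specRadius B • z ∧ 0 < specRadius B := by
  obtain ⟨r, hrpos, z, hzpos, heig⟩ := perron_aux hn B hB
  obtain ⟨r', hr'pos, w, hwpos, hweig⟩ := perron_aux hn Bᵀ (transpose_irr hB)
  haveI : Nonempty (Fin n) := ⟨⟨0, hn⟩⟩
  have hz0 : z ≠ 0 := fun h => by
    have := hzpos ⟨0, hn⟩
    rw [h] at this
    simp at this
  have hw0 : w ≠ 0 := fun h => by
    have := hwpos ⟨0, hn⟩
    rw [h] at this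
    simp at this
  -- r ≤ r' and r' ≤ r
  have hrmem : (r : ℂ) ∈ spectrum ℂ (B.map Complex.ofReal) := real_eig_mem_spectrum hz0 heig
  have hr'mem : (r' : ℂ) ∈ spectrum ℂ (Bᵀ.map Complex.ofReal) := real_eig_mem_spectrum hw0 hweig
  have hrr' : r ≤ r' := by
    have := abs_le_of_leftEig hB.1 hwpos hweig hrmem
    simpa [Complex.norm_real, abs_of_pos hrpos] using this
  have hr'r : r' ≤ r := by
    have heig' : (Bᵀ)ᵀ.mulVec z = r • z := by rwa [Matrix.transpose_transpose]
    have := abs_le_of_leftEig (transpose_irr hB).1 hzpos heig' hr'mem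
    simpa [Complex.norm_real, abs_of_pos hr'pos] using this
  have hrr : r = r' := le_antisymm hrr' hr'r
  have hgreat : IsGreatest (SRset B) r := by
    constructor
    · exact ⟨(r : ℂ), (mem_spectrumM_iff B _).2 hrmem, by simp [Complex.norm_real, abs_of_pos hrpos]⟩
    · rintro s ⟨μ, hμ, rfl⟩
      have := abs_le_of_leftEig hB.1 hwpos hweig ((mem_spectrumM_iff B _).1 hμ)
      rw [← hrr] at this
      exact this
  rw [specRadius_eq_of_isGreatest hgreat]
  exact ⟨z, hzpos, heig, hrpos⟩

lemma map_matrix_pow (B : Matrix (Fin n) (Fin n) ℝ) (k : ℕ) :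
    (B ^ k).map Complex.ofReal = (B.map Complex.ofReal) ^ k := by
  have h := map_pow
    (Complex.ofRealHom.mapMatrix : Matrix (Fin n) (Fin n) ℝ →+* Matrix (Fin n) (Fin n) ℂ) B k
  exact h

lemma SRset_pow (hn : 0 < n) (B : Matrix (Fin n) (Fin n) ℝ) {k : ℕ} (hk : 0 < k) :
    SRset (B ^ k) = (fun t => t ^ k) '' SRset B := by
  rw [SRset_eq_image, SRset_eq_image, map_matrix_pow,
    spectrum.map_pow_of_pos (B.map Complex.ofReal) hk, Set.image_image, Set.image_image]
  exact Set.image_congr fun z _ => norm_pow z k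

lemma specRadius_pow (hn : 0 < n) (B : Matrix (Fin n) (Fin n) ℝ) {k : ℕ} (hk : 0 < k) :
    specRadius (B ^ k) = (specRadius B) ^ k := by
  have hgreat : IsGreatest (SRset (B ^ k)) ((specRadius B) ^ k) := by
    rw [SRset_pow hn B hk]
    constructor
    · exact ⟨specRadius B, specRadius_mem hn B, rfl⟩
    · rintro s ⟨t, ht, rfl⟩
      have h1 : t ≤ specRadius B :=
        le_csSup ((SRset_finite B).bddAbove) ht
      exact pow_le_pow_left₀ (SRset_nonneg B ht) h1 k
  exact specRadius_eq_of_isGreatest hgreat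

/-- Geometric simplicity of the Perron root for a positive matrix. -/
lemma pos_simple {C : Matrix (Fin n) (Fin n) ℝ} (hC : ∀ i j, 0 < C i j)
    {z : Fin n → ℝ} (hz : ∀ i, 0 < z i) {ρ : ℝ} (hρ : 0 < ρ)
    (hzeig : C.mulVec z = ρ • z) (u : Fin n → ℝ) (hueig : C.mulVec u = ρ • u) :
    ∃ t : ℝ, u = t • z := by
  classical
  -- Helper: if u has a positive entry then u is a multiple of z
  have H : ∀ u : Fin n → ℝ, C.mulVec u = ρ • u → (∃ i, 0 < u i) → ∃ t : ℝ, u = t • z := by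
    intro u hueig hupos
    set s : Finset (Fin n) := Finset.univ.filter (fun i => 0 < u i) with hsdef
    have hsne : s.Nonempty := by
      obtain ⟨i, hi⟩ := hupos
      exact ⟨i, by simp [hsdef, hi]⟩
    set t := s.inf' hsne (fun i => z i / u i) with htdef
    obtain ⟨i₀, hi₀s, hi₀⟩ := Finset.exists_mem_eq_inf' hsne (fun i => z i / u i)
    have hui₀ : 0 < u i₀ := by simpa [hsdef] using hi₀s
    have htpos : 0 < t := by
      rw [htdef]
      refine Finset.lt_inf'_iff _ |>.2 fun i hi => ?_
      have hui : 0 < u i := by simpa [hsdef] using hi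
      exact div_pos (hz i) hui
    set w : Fin n → ℝ := fun i => z i - t * u i with hwdef
    have hw0 : ∀ i, 0 ≤ w i := by
      intro i
      by_cases hui : 0 < u i
      · have his : i ∈ s := by simp [hsdef, hui]
        have := Finset.inf'_le (fun i => z i / u i) his
        rw [← htdef] at this
        have := (le_div_iff₀ hui).1 this
        simp only [hwdef]; linarith
      · push_neg at hui
        have : t * u i ≤ 0 := mul_nonpos_of_nonneg_of_nonpos htpos.le hui
        simp only [hwdef]; nlinarith [hz i]
    have hwi₀ : w i₀ = 0 := by
      have h5 : t = z i₀ / u i₀ := hi₀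
      simp only [hwdef]
      rw [h5]
      field_simp
      ring
    have hweig : C.mulVec w = ρ • w := by
      have hw' : w = z - t • u := funext fun i => by simp [hwdef, Pi.smul_apply, smul_eq_mul]
      rw [hw', Matrix.mulVec_sub, Matrix.mulVec_smul, hzeig, hueig]
      funext i
      simp [Pi.smul_apply, smul_eq_mul]
      ring
    by_cases hwz : w = 0
    · refine ⟨t⁻¹, ?_⟩
      funext i
      have : z i - t * u i = 0 := by
        have := congrFun hwz i
        simpa [hwdef] using this
      have : z i = t * u i := by linarith
      simp [Pi.smul_apply, smul_eq_mul]
      field_simp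
      linarith
    · exfalso
      have hex : ∃ l, 0 < w l := by
        by_contra h; push_neg at h
        exact hwz (funext fun l => le_antisymm (h l) (hw0 l))
      have hCw : 0 < C.mulVec w i₀ := mulVec_pos hC hw0 hex i₀
      rw [hweig] at hCw
      simp only [Pi.smul_apply, smul_eq_mul, hwi₀, mul_zero] at hCw
      exact lt_irrefl _ hCw
  by_cases hu0 : u = 0
  · exact ⟨0, by simp [hu0]⟩
  by_cases hupos : ∃ i, 0 < u i
  · exact H u hueig hupos
  · push_neg at hupos
    have hneg : ∃ i, 0 < -u i := by
      by_contra h; push_neg at h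
      refine hu0 (funext fun i => ?_)
      have h1 := hupos i
      have h2 := h i
      simp only [Pi.zero_apply]
      linarith [h2]
    have hnueig : C.mulVec (-u) = ρ • (-u) := by
      rw [Matrix.mulVec_neg, hueig]
      simp
    obtain ⟨t, ht⟩ := H (-u) hnueig (by simpa using hneg)
    refine ⟨-t, funext fun i => ?_⟩
    have := congrFun ht i
    simp only [Pi.neg_apply, Pi.smul_apply, smul_eq_mul] at this ⊢
    linarith


theorem perron_evpos (hn : 0 < n) (B : Matrix (Fin n) (Fin n) ℝ) (hB : EventuallyPositive B) :
    ∃ z : Fin n → ℝ, (∀ i, 0 < z i) ∧ B.mulVec z = specRadius B • z := by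
  obtain ⟨k₀, hk₀⟩ := hB
  set k := max k₀ 1 with hkdef
  have hk1 : 0 < k := lt_of_lt_of_le one_pos (le_max_right _ _)
  have hkk₀ : k₀ ≤ k := le_max_left _ _
  set C := B ^ k with hCdef
  have hCpos : ∀ i j, 0 < C i j := hk₀ k hkk₀
  have hCirr : IrreducibleNonneg C :=
    ⟨fun i j => (hCpos i j).le, fun i j => ⟨1, one_pos, by simpa [pow_one] using hCpos i j⟩⟩
  obtain ⟨z, hz, heig, hρpos⟩ := perron_main hn C hCirr
  set ρ := specRadius C with hρdef
  have hcomm : C * B = B * C := by rw [hCdef, ← pow_succ, ← pow_succ']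
  have hueig : C.mulVec (B.mulVec z) = ρ • (B.mulVec z) := by
    rw [Matrix.mulVec_mulVec, hcomm, ← Matrix.mulVec_mulVec, heig, Matrix.mulVec_smul]
  obtain ⟨t, ht⟩ := pos_simple hCpos hz hρpos heig _ hueig
  have hk1pos : ∀ i j, 0 < (B ^ (k+1)) i j := hk₀ (k+1) (le_trans hkk₀ (Nat.le_succ k))
  have hBk1z : (B ^ (k+1)).mulVec z = (t * ρ) • z := by
    rw [pow_succ, ← Matrix.mulVec_mulVec, ht, Matrix.mulVec_smul, ← hCdef, heig]
    funext i
    simp [Pi.smul_apply, smul_eq_mul]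
    ring
  have i₀ : Fin n := ⟨0, hn⟩
  have htpos : 0 < t := by
    have h0 : 0 < (B ^ (k+1)).mulVec z i₀ :=
      mulVec_pos hk1pos (fun i => (hz i).le) ⟨i₀, hz i₀⟩ i₀
    rw [hBk1z] at h0
    simp only [Pi.smul_apply, smul_eq_mul] at h0
    have hpz : 0 < ρ * z i₀ := mul_pos hρpos (hz i₀)
    by_contra hneg
    push_neg at hneg
    have h2 : t * (ρ * z i₀) ≤ 0 := mul_nonpos_iff.2 (Or.inr ⟨hneg, hpz.le⟩)
    nlinarith
  have hpowz : ∀ j : ℕ, (B ^ j).mulVec z = t ^ j • z := by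
    intro j
    induction j with
    | zero => simp [Matrix.one_mulVec]
    | succ j ih =>
        rw [pow_succ, ← Matrix.mulVec_mulVec, ht, Matrix.mulVec_smul, ih]
        funext i
        simp [Pi.smul_apply, smul_eq_mul]
        ring
  have htk : t ^ k = ρ := by
    have h1 := hpowz k
    rw [← hCdef, heig] at h1
    have h2 := congrFun h1 i₀
    simp only [Pi.smul_apply, smul_eq_mul] at h2
    exact mul_right_cancel₀ (hz i₀).ne' h2.symm
  have hsr : ρ = (specRadius B) ^ k := by
    rw [hρdef, hCdef]
    exact specRadius_pow hn B hk1
  have ht' : t = specRadius B := by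
    have h0 : 0 ≤ specRadius B := specRadius_nonneg hn B
    have heq : t ^ k = (specRadius B) ^ k := by rw [htk, hsr]
    by_contra hne
    rcases lt_or_gt_of_ne hne with h | h
    · have := pow_lt_pow_left₀ h htpos.le hk1.ne'
      rw [heq] at this
      exact lt_irrefl _ this
    · have := pow_lt_pow_left₀ h h0 hk1.ne'
      rw [heq] at this
      exact lt_irrefl _ this
  exact ⟨z, hz, by rw [← ht']; exact ht⟩

lemma specRadius_conj {A Q Q' : Matrix (Fin n) (Fin n) ℝ}
    (h1 : Q * Q' = 1) (h2 : Q' * Q = 1) :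
    specRadius (Q * A * Q') = specRadius A := by
  classical
  set f := (Complex.ofRealHom.mapMatrix : Matrix (Fin n) (Fin n) ℝ →+* Matrix (Fin n) (Fin n) ℂ)
    with hfdef
  have hmap : ∀ M : Matrix (Fin n) (Fin n) ℝ, f M = M.map Complex.ofReal := fun M => rfl
  set u : (Matrix (Fin n) (Fin n) ℂ)ˣ :=
    ⟨f Q, f Q', by rw [← _root_.map_mul, h1, _root_.map_one],
      by rw [← _root_.map_mul, h2, _root_.map_one]⟩ with hudef
  have hspec : spectrum ℂ ((Q * A * Q').map Complex.ofReal)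
      = spectrum ℂ (A.map Complex.ofReal) := by
    have he : (Q * A * Q').map Complex.ofReal
        = (↑u : Matrix (Fin n) (Fin n) ℂ) * (A.map Complex.ofReal) * (↑u⁻¹ : Matrix (Fin n) (Fin n) ℂ) := by
      rw [← hmap, _root_.map_mul, _root_.map_mul]
      rfl
    rw [he, spectrum.units_conjugate]
  rw [specRadius_eq_sSup, specRadius_eq_sSup, SRset_eq_image, SRset_eq_image, hspec]

theorem stmt2 {n : ℕ} (hn : 0 < n) (A Θ P : Matrix (Fin n) (Fin n) ℝ)
    (hΘ : IsSwitching Θ) (hP : IsPermMatrix P)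
    (hA' : EventuallyPositive (Θ * P * A * Pᵀ * Θ) ∨
      IrreducibleNonneg (Θ * P * A * Pᵀ * Θ)) :
    ∃ v' : Fin n → ℝ, (∀ i, 0 < v' i) ∧
      (Θ * P * A * Pᵀ * Θ).mulVec v' = specRadius A • v' ∧
      (∀ i, (Pᵀ * Θ).mulVec v' i ≠ 0) ∧
      A.mulVec ((Pᵀ * Θ).mulVec v') = specRadius A • ((Pᵀ * Θ).mulVec v') := by
  classical
  obtain ⟨θ, hθ, rfl⟩ := hΘ
  obtain ⟨σ, rfl⟩ := hP
  set Pm : Matrix (Fin n) (Fin n) ℝ := Matrix.of fun i j => if σ j = i then 1 else 0 with hPm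
  set Θm : Matrix (Fin n) (Fin n) ℝ := Matrix.diagonal θ with hΘm
  have hΘΘ : Θm * Θm = 1 := by
    have hθθ : (fun i => θ i * θ i) = fun _ : Fin n => (1:ℝ) :=
      funext fun i => by rcases hθ i with h | h <;> rw [h] <;> norm_num
    rw [hΘm, Matrix.diagonal_mul_diagonal, hθθ, Matrix.diagonal_one]
  have hPPt : Pm * Pmᵀ = 1 := by
    ext i j
    rw [Matrix.mul_apply]
    simp only [hPm, Matrix.transpose_apply, Matrix.of_apply]
    rw [← Equiv.sum_comp σ.symm
      (fun k => (if σ k = i then (1:ℝ) else 0) * (if σ k = j then (1:ℝ) else 0))]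
    simp [Matrix.one_apply, Finset.sum_ite_eq, eq_comm]
  have hPtP : Pmᵀ * Pm = 1 := by
    ext i j
    rw [Matrix.mul_apply]
    simp only [hPm, Matrix.transpose_apply, Matrix.of_apply]
    simp [Matrix.one_apply, Finset.sum_ite_eq, σ.injective.eq_iff, eq_comm]
  have hQQ' : (Θm * Pm) * (Pmᵀ * Θm) = 1 := by
    rw [mul_assoc, ← mul_assoc Pm, hPPt, one_mul, hΘΘ]
  have hQ'Q : (Pmᵀ * Θm) * (Θm * Pm) = 1 := by
    rw [mul_assoc, ← mul_assoc Θm, hΘΘ, one_mul, hPtP]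
  set B : Matrix (Fin n) (Fin n) ℝ := Θm * Pm * A * Pmᵀ * Θm with hBdef
  have hBQ : B = (Θm * Pm) * A * (Pmᵀ * Θm) := by
    rw [hBdef, mul_assoc (Θm * Pm * A)]
  have hsr : specRadius B = specRadius A := by
    rw [hBQ]
    exact specRadius_conj hQQ' hQ'Q
  have hz : ∃ z : Fin n → ℝ, (∀ i, 0 < z i) ∧ B.mulVec z = specRadius B • z := by
    rcases hA' with h | h
    · exact perron_evpos hn B h
    · obtain ⟨z, h1, h2, _⟩ := perron_main hn B h
      exact ⟨z, h1, h2⟩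
  obtain ⟨z, hzpos, hzeig⟩ := hz
  rw [hsr] at hzeig
  have hv : ∀ i, (Pmᵀ * Θm).mulVec z i = θ (σ i) * z (σ i) := by
    intro i
    rw [← Matrix.mulVec_mulVec]
    have h1 : Θm.mulVec z = fun k => θ k * z k := by
      funext k
      rw [hΘm, Matrix.mulVec_diagonal]
    rw [h1]
    rw [Matrix.mulVec, dotProduct]
    simp only [Matrix.transpose_apply, hPm, Matrix.of_apply, ite_mul, one_mul, zero_mul]
    rw [Finset.sum_ite_eq Finset.univ (σ i) (fun k => θ k * z k)]
    simp
  have hvne : ∀ i, (Pmᵀ * Θm).mulVec z i ≠ 0 := by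
    intro i
    rw [hv i]
    rcases hθ (σ i) with h | h <;> rw [h] <;>
      simp [ne_eq, (hzpos (σ i)).ne']
  have h6 : (Pmᵀ * Θm) * B = A * (Pmᵀ * Θm) := by
    rw [hBQ]
    calc (Pmᵀ * Θm) * (Θm * Pm * A * (Pmᵀ * Θm))
        = ((Pmᵀ * Θm) * (Θm * Pm)) * (A * (Pmᵀ * Θm)) := by
          rw [mul_assoc (Θm * Pm) A (Pmᵀ * Θm),
            ← mul_assoc (Pmᵀ * Θm) (Θm * Pm) (A * (Pmᵀ * Θm))]
      _ = A * (Pmᵀ * Θm) := by rw [hQ'Q, one_mul]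
  have hfin : A.mulVec ((Pmᵀ * Θm).mulVec z) = specRadius A • ((Pmᵀ * Θm).mulVec z) := by
    rw [Matrix.mulVec_mulVec, ← h6, ← Matrix.mulVec_mulVec, hzeig, Matrix.mulVec_smul]
  exact ⟨z, hzpos, hzeig, hvne, hfin⟩
end Perron
end

section
/- Let A_a be a real N_a×N_a matrix, A_o a real N_o×N_o matrix, and d, u, α, β, γ, δ real numbers. Define J(u) := (−d + uα) I_{N_aN_o} + uγ (A_a ⊗ I_{N_o}) + uβ (I_{N_a} ⊗ A_o) + uδ (A_a ⊗ A_o). Then the multiset of complex eigenvalues of J(u) equals the multiset { −d + u(α + γλ + βμ + δλμ) : λ ∈ σ(A_a), μ ∈ σ(A_o) }, where eigenvalues are counted with multiplicity (each of the N_aN_o pairs (λ,μ) of roots contributes one eigenvalue of J(u)). -/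
open Matrix Polynomial

open Kronecker in
/-- The Jacobian at the neutral equilibrium of the homogeneous multi-topic
belief-formation model:
`J(u) = (−d + uα) I + uγ (A_a ⊗ I) + uβ (I ⊗ A_o) + uδ (A_a ⊗ A_o)`. -/
noncomputable def Jmat {Na No : ℕ} (Aa : Matrix (Fin Na) (Fin Na) ℝ)
    (Ao : Matrix (Fin No) (Fin No) ℝ) (d u α β γ δ : ℝ) :
    Matrix (Fin Na × Fin No) (Fin Na × Fin No) ℝ :=
  (-d + u * α) • (1 : Matrix (Fin Na × Fin No) (Fin Na × Fin No) ℝ)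
    + (u * γ) • (Aa ⊗ₖ (1 : Matrix (Fin No) (Fin No) ℝ))
    + (u * β) • ((1 : Matrix (Fin Na) (Fin Na) ℝ) ⊗ₖ Ao)
    + (u * δ) • (Aa ⊗ₖ Ao)



lemma charpoly_conj' {n : Type*} [Fintype n] [DecidableEq n] (M P Pi : Matrix n n ℂ)
    (h1 : Pi * P = 1) : (Pi * M * P).charpoly = M.charpoly := by
  have hmap : Pi.map C * P.map C = 1 := by
    rw [← Matrix.map_mul, h1, Matrix.map_one C (map_zero C) (map_one C)]
  have hmap2 : P.map C * Pi.map C = 1 := mul_eq_one_comm.mp hmap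
  have key : charmatrix (Pi * M * P) = Pi.map C * charmatrix M * P.map C := by
    rw [charmatrix, charmatrix, Matrix.mul_sub, Matrix.sub_mul]
    congr 1
    · rw [Matrix.mul_assoc, (Matrix.scalar_commute (X : ℂ[X]) (Commute.all X) (P.map C)).eq,
        ← Matrix.mul_assoc, hmap, Matrix.one_mul]
    · simp [RingHom.mapMatrix_apply, Matrix.map_mul, Matrix.mul_assoc]
  rw [Matrix.charpoly, key, det_mul, det_mul, mul_comm, ← mul_assoc, ← det_mul, hmap2]
  simp [Matrix.charpoly]


noncomputable def emb {n : ℕ} (B : Matrix (Fin n) (Fin n) ℂ) :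
    Matrix (Fin (n+1)) (Fin (n+1)) ℂ :=
  Matrix.of (Fin.cons (Fin.cons 1 (fun _ => 0)) (fun i' => Fin.cons 0 (fun j' => B i' j')))

@[simp] lemma emb_zero_zero {n : ℕ} (B : Matrix (Fin n) (Fin n) ℂ) : emb B 0 0 = 1 := rfl
@[simp] lemma emb_zero_succ {n : ℕ} (B : Matrix (Fin n) (Fin n) ℂ) (j : Fin n) :
    emb B 0 j.succ = 0 := rfl
@[simp] lemma emb_succ_zero {n : ℕ} (B : Matrix (Fin n) (Fin n) ℂ) (i : Fin n) :
    emb B i.succ 0 = 0 := by simp [emb]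
@[simp] lemma emb_succ_succ {n : ℕ} (B : Matrix (Fin n) (Fin n) ℂ) (i j : Fin n) :
    emb B i.succ j.succ = B i j := by simp [emb]

lemma emb_mul {n : ℕ} (B C : Matrix (Fin n) (Fin n) ℂ) : emb B * emb C = emb (B * C) := by
  ext i j
  induction i using Fin.cases with
  | zero =>
    induction j using Fin.cases with
    | zero => simp [Matrix.mul_apply, Fin.sum_univ_succ]
    | succ j => simp [Matrix.mul_apply, Fin.sum_univ_succ]
  | succ i =>
    induction j using Fin.cases with
    | zero => simp [Matrix.mul_apply, Fin.sum_univ_succ]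
    | succ j => simp [Matrix.mul_apply, Fin.sum_univ_succ]

lemma emb_one {n : ℕ} : emb (1 : Matrix (Fin n) (Fin n) ℂ) = 1 := by
  ext i j
  induction i using Fin.cases with
  | zero =>
    induction j using Fin.cases with
    | zero => simp
    | succ j => simp [Matrix.one_apply, (Fin.succ_ne_zero j).symm]
  | succ i =>
    induction j using Fin.cases with
    | zero => simp [Matrix.one_apply, Fin.succ_ne_zero i]
    | succ j => simp [Matrix.one_apply, Fin.succ_inj]

lemma tri : ∀ (n : ℕ) (M : Matrix (Fin n) (Fin n) ℂ),
    ∃ P Pi : Matrix (Fin n) (Fin n) ℂ, Pi * P = 1 ∧ (Pi * M * P).BlockTriangular id := by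
  intro n
  induction n with
  | zero => exact fun M => ⟨1, 1, by simp, fun i j _ => i.elim0⟩
  | succ n ih =>
    intro M
    obtain ⟨μ, hμ⟩ := Module.End.exists_eigenvalue (Matrix.mulVecLin M)
    obtain ⟨v, hv⟩ := hμ.exists_hasEigenvector
    have hv0 : v ≠ 0 := hv.right
    have hvs : M.mulVec v = μ • v := hv.apply_eq_smul
    have hli : LinearIndepOn ℂ id ({v} : Set (Fin (n+1) → ℂ)) :=
      LinearIndependent.of_subsingleton (⟨v, rfl⟩ : ({v} : Set (Fin (n+1) → ℂ))) hv0
    let b0 := Module.Basis.extend hli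
    haveI : Fintype ↥(hli.extend (Set.subset_univ _)) :=
      FiniteDimensional.fintypeBasisIndex b0
    have hcard : Fintype.card (Fin (n+1)) = Fintype.card ↥(hli.extend (Set.subset_univ _)) := by
      rw [← Module.finrank_eq_card_basis b0]
      simp
    let e := Fintype.equivOfCardEq hcard
    have hvmem : v ∈ hli.extend (Set.subset_univ _) := hli.subset_extend _ rfl
    let i0 : ↥(hli.extend (Set.subset_univ _)) := ⟨v, hvmem⟩
    let σ := e.trans (Equiv.swap (e 0) i0)
    let c : Module.Basis (Fin (n+1)) ℂ (Fin (n+1) → ℂ) := b0.reindex σ.symm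
    have hc0 : c 0 = v := by
      simp only [c, Module.Basis.reindex_apply, Equiv.symm_symm, σ, Equiv.trans_apply,
        Equiv.swap_apply_left]
      exact Module.Basis.extend_apply_self hli i0
    let π := Pi.basisFun ℂ (Fin (n+1))
    let Q := π.toMatrix c
    let Qi := c.toMatrix π
    have hQ : Q * Qi = 1 := π.toMatrix_mul_toMatrix_flip c
    have hQi : Qi * Q = 1 := c.toMatrix_mul_toMatrix_flip π
    have hQcol : ∀ i, Q i 0 = v i := by
      intro i
      simp only [Q, Module.Basis.toMatrix_apply, hc0, π, Pi.basisFun_repr]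
    set T := Qi * M * Q with hT
    have hcol : ∀ i, T i 0 = if i = 0 then μ else 0 := by
      intro i
      have h1 : T i 0 = ((Qi * M) *ᵥ v) i := by
        rw [hT, Matrix.mul_apply]
        simp only [Matrix.mulVec, dotProduct]
        exact Finset.sum_congr rfl fun k _ => by rw [hQcol k]
      rw [h1, ← Matrix.mulVec_mulVec, hvs, Matrix.mulVec_smul]
      have h2 : Qi *ᵥ v = fun i => (1 : Matrix (Fin (n+1)) (Fin (n+1)) ℂ) i 0 := by
        funext i
        rw [← hQi, Matrix.mul_apply]
        simp only [Matrix.mulVec, dotProduct]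
        exact Finset.sum_congr rfl fun k _ => by rw [hQcol k]
      rw [h2]
      simp [Matrix.one_apply, smul_eq_mul]
    obtain ⟨P', Pi', hP', htri'⟩ := ih (T.submatrix Fin.succ Fin.succ)
    refine ⟨Q * emb P', emb Pi' * Qi, ?_, ?_⟩
    · rw [Matrix.mul_assoc, ← Matrix.mul_assoc Qi, hQi, Matrix.one_mul, emb_mul, hP', emb_one]
    · have hU : emb Pi' * Qi * M * (Q * emb P') = emb Pi' * T * emb P' := by
        rw [hT]; simp only [Matrix.mul_assoc]
      rw [hU]
      intro i j hij
      simp only [id] at hij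
      induction j using Fin.cases with
      | zero =>
        induction i using Fin.cases with
        | zero => exact absurd hij (lt_irrefl _)
        | succ i =>
          rw [Matrix.mul_apply]
          rw [Fin.sum_univ_succ]
          simp only [emb_zero_zero, emb_succ_zero, mul_zero, Finset.sum_const_zero, add_zero,
            mul_one]
          rw [Matrix.mul_apply, Fin.sum_univ_succ]
          simp only [emb_succ_zero, zero_mul, zero_add]
          refine Finset.sum_eq_zero fun k _ => ?_
          rw [hcol k.succ]
          simp [Fin.succ_ne_zero]
      | succ j =>
        induction i using Fin.cases with
        | zero => exact absurd hij (Fin.not_lt_zero _)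
        | succ i =>
          have hij' : j < i := by
            exact Fin.succ_lt_succ_iff.mp hij
          rw [Matrix.mul_apply, Fin.sum_univ_succ]
          simp only [emb_zero_succ, mul_zero, zero_add, emb_succ_succ]
          have : ∀ l : Fin n, (emb Pi' * T) i.succ l.succ = (Pi' * T.submatrix Fin.succ Fin.succ) i l := by
            intro l
            rw [Matrix.mul_apply, Fin.sum_univ_succ]
            simp only [emb_succ_zero, zero_mul, zero_add, emb_succ_succ]
            rfl
          calc (∑ l : Fin n, (emb Pi' * T) i.succ l.succ * P' l j)
              = ∑ l : Fin n, (Pi' * T.submatrix Fin.succ Fin.succ) i l * P' l j := by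
                exact Finset.sum_congr rfl fun l _ => by rw [this l]
            _ = (Pi' * T.submatrix Fin.succ Fin.succ * P') i j := (Matrix.mul_apply).symm
            _ = 0 := htri' hij'

lemma roots_of_triangular {n : Type*} [Fintype n] [DecidableEq n] [LinearOrder n]
    (U : Matrix n n ℂ) (h : U.BlockTriangular id) :
    U.charpoly.roots = Finset.univ.val.map (fun i => U i i) := by
  rw [Matrix.charpoly_of_upperTriangular U h, Finset.prod_eq_multiset_prod]
  have : (Multiset.map (fun i => X - C (U i i)) Finset.univ.val) =
      ((Finset.univ.val.map fun i => U i i).map fun a => X - C a) := by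
    rw [Multiset.map_map]; rfl
  rw [this, Polynomial.roots_multiset_prod_X_sub_C]


theorem stmt4 {Na No : ℕ} (Aa : Matrix (Fin Na) (Fin Na) ℝ)
    (Ao : Matrix (Fin No) (Fin No) ℝ) (d u α β γ δ : ℝ) :
    spectrumM (Jmat Aa Ao d u α β γ δ) =
      (spectrumM Aa).bind (fun lam => (spectrumM Ao).map (fun mu =>
        -(d : ℂ) + (u : ℂ) * ((α : ℂ) + (γ : ℂ) * lam + (β : ℂ) * mu
          + (δ : ℂ) * lam * mu))) := by
  classical
  obtain ⟨PA, PiA, hA1, hAt⟩ := tri Na (Aa.map Complex.ofReal)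
  obtain ⟨PB, PiB, hB1, hBt⟩ := tri No (Ao.map Complex.ofReal)
  set Aa' := Aa.map Complex.ofReal with hAa'
  set Ao' := Ao.map Complex.ofReal with hAo'
  set Ta := PiA * Aa' * PA with hTa
  set Tb := PiB * Ao' * PB with hTb
  have hsA : spectrumM Aa = Finset.univ.val.map (fun i => Ta i i) := by
    rw [spectrumM, ← charpoly_conj' Aa' PA PiA hA1, ← hTa, roots_of_triangular Ta hAt]
  have hsB : spectrumM Ao = Finset.univ.val.map (fun i => Tb i i) := by
    rw [spectrumM, ← charpoly_conj' Ao' PB PiB hB1, ← hTb, roots_of_triangular Tb hBt]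
  -- the complexified Jacobian
  set Jc : Matrix (Fin Na × Fin No) (Fin Na × Fin No) ℂ :=
      (-(d:ℂ) + u*α) • (kroneckerMap (· * ·) 1 1)
      + ((u:ℂ)*γ) • (kroneckerMap (· * ·) Aa' 1)
      + ((u:ℂ)*β) • (kroneckerMap (· * ·) 1 Ao')
      + ((u:ℂ)*δ) • (kroneckerMap (· * ·) Aa' Ao') with hJc
  have hmapJ : (Jmat Aa Ao d u α β γ δ).map Complex.ofReal = Jc := by
    ext ⟨i, j⟩ ⟨k, l⟩
    simp only [Jmat, hJc, Matrix.map_apply, Matrix.add_apply, Matrix.smul_apply,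
      Matrix.kroneckerMap_apply, smul_eq_mul, hAa', hAo', Matrix.one_apply, Prod.mk.injEq]
    push_cast [apply_ite Complex.ofReal]
    split_ifs <;> simp_all <;> ring
  set K := kroneckerMap (· * ·) PA PB with hK
  set Ki := kroneckerMap (· * ·) PiA PiB with hKi
  have hK1 : Ki * K = 1 := by
    rw [hK, hKi, ← Matrix.mul_kronecker_mul, hA1, hB1, Matrix.one_kronecker_one]
  have hterm : ∀ (X : Matrix (Fin Na) (Fin Na) ℂ) (Y : Matrix (Fin No) (Fin No) ℂ),
      Ki * (kroneckerMap (· * ·) X Y) * K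
        = kroneckerMap (· * ·) (PiA * X * PA) (PiB * Y * PB) := by
    intro X Y
    rw [hK, hKi, ← Matrix.mul_kronecker_mul, ← Matrix.mul_kronecker_mul]
  have hconj : Ki * Jc * K =
      (-(d:ℂ) + u*α) • (kroneckerMap (· * ·) 1 1)
      + ((u:ℂ)*γ) • (kroneckerMap (· * ·) Ta 1)
      + ((u:ℂ)*β) • (kroneckerMap (· * ·) 1 Tb)
      + ((u:ℂ)*δ) • (kroneckerMap (· * ·) Ta Tb) := by
    have h11 : PiA * 1 * PA = (1 : Matrix (Fin Na) (Fin Na) ℂ) := by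
      rw [Matrix.mul_one, hA1]
    have h12 : PiB * 1 * PB = (1 : Matrix (Fin No) (Fin No) ℂ) := by
      rw [Matrix.mul_one, hB1]
    rw [hJc]
    simp only [Matrix.mul_add, Matrix.add_mul, Matrix.mul_smul, Matrix.smul_mul]
    rw [hterm, hterm, hterm, hterm, h11, h12, ← hTa, ← hTb]
  -- reindex to the lexicographic order
  set eL : (Fin Na × Fin No) ≃ Lex (Fin Na × Fin No) := toLex with heL
  set U := reindex eL eL (Ki * Jc * K) with hU
  have hUt : U.BlockTriangular id := by
    intro p q hlt
    have hlt' : (ofLex q).1 < (ofLex p).1 ∨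
        (ofLex q).1 = (ofLex p).1 ∧ (ofLex q).2 < (ofLex p).2 :=
      Prod.Lex.lt_iff.mp hlt
    have hentry : U p q = (Ki * Jc * K) (ofLex p) (ofLex q) := by
      rw [hU, Matrix.reindex_apply, Matrix.submatrix_apply]; rfl
    rw [hentry, hconj]
    simp only [Matrix.add_apply, Matrix.smul_apply, Matrix.kroneckerMap_apply, smul_eq_mul]
    rcases hlt' with h | ⟨h1, h2⟩
    · have e1 : (1 : Matrix (Fin Na) (Fin Na) ℂ) (ofLex p).1 (ofLex q).1 = 0 :=
        Matrix.one_apply_ne (ne_of_gt h)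
      have e2 : Ta (ofLex p).1 (ofLex q).1 = 0 := hAt h
      rw [e1, e2]
      ring
    · have e1 : (1 : Matrix (Fin No) (Fin No) ℂ) (ofLex p).2 (ofLex q).2 = 0 :=
        Matrix.one_apply_ne (ne_of_gt h2)
      have e2 : Tb (ofLex p).2 (ofLex q).2 = 0 := hBt h2
      rw [e1, e2]
      ring
  have hcp : spectrumM (Jmat Aa Ao d u α β γ δ) = U.charpoly.roots := by
    rw [spectrumM, hmapJ, hU, Matrix.charpoly_reindex, charpoly_conj' Jc K Ki hK1]
  rw [hcp, roots_of_triangular U hUt]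
  have hdiag : ∀ p : Lex (Fin Na × Fin No), U p p =
      -(d:ℂ) + (u:ℂ) * ((α:ℂ) + (γ:ℂ) * Ta (ofLex p).1 (ofLex p).1
        + (β:ℂ) * Tb (ofLex p).2 (ofLex p).2
        + (δ:ℂ) * Ta (ofLex p).1 (ofLex p).1 * Tb (ofLex p).2 (ofLex p).2) := by
    intro p
    have hentry : U p p = (Ki * Jc * K) (ofLex p) (ofLex p) := by
      rw [hU, Matrix.reindex_apply, Matrix.submatrix_apply]; rfl
    rw [hentry, hconj]
    simp only [Matrix.add_apply, Matrix.smul_apply, Matrix.kroneckerMap_apply, smul_eq_mul,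
      Matrix.one_apply_eq]
    ring
  rw [hsA, hsB]
  have hbind : ((Finset.univ.val.map fun i => Ta i i).bind fun lam =>
      (Finset.univ.val.map fun i => Tb i i).map fun mu =>
        -(d:ℂ) + (u:ℂ) * ((α:ℂ) + (γ:ℂ) * lam + (β:ℂ) * mu + (δ:ℂ) * lam * mu))
      = (Finset.univ : Finset (Fin Na × Fin No)).val.map (fun x =>
        -(d:ℂ) + (u:ℂ) * ((α:ℂ) + (γ:ℂ) * Ta x.1 x.1 + (β:ℂ) * Tb x.2 x.2
          + (δ:ℂ) * Ta x.1 x.1 * Tb x.2 x.2)) := by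
    rw [Multiset.bind_map, ← Finset.univ_product_univ, Finset.product_val]
    simp only [SProd.sprod, Multiset.product, Multiset.map_bind, Multiset.map_map]
    rfl
  rw [hbind]
  have huniv : (Finset.univ : Finset (Lex (Fin Na × Fin No))).val
      = (Finset.univ : Finset (Fin Na × Fin No)).val.map toLex := by
    exact (Multiset.map_id' _).symm
  rw [huniv]
  simp only [Multiset.map_map]
  refine Multiset.map_congr rfl fun x _ => ?_
  exact hdiag (toLex x)
end

section
/- Let A_a be a real N_a×N_a matrix, A_o a real N_o×N_o matrix, d > 0, and α, β, γ, δ ≥ 0. Set ξ_max := max over (λ,μ) ∈ σ(A_a)×σ(A_o) of (α + γ Re λ + β Re μ + δ Re(λμ)), assume ξ_max > 0, and let u* := d/ξ_max. Define J(u) := (−d + uα) I_{N_aN_o} + uγ (A_a ⊗ I_{N_o}) + uβ (I_{N_a} ⊗ A_o) + uδ (A_a ⊗ A_o). Then: (1) for every u with 0 ≤ u < u*, every complex eigenvalue η of J(u) satisfies Re η < 0; (2) for every u > u*, J(u) has a complex eigenvalue η with Re η > 0. -/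
open Matrix Polynomial

namespace StmtAux

open Kronecker

variable {na no : ℕ}

/-- Pure tensor of two vectors. -/
def pt (v : Fin na → ℂ) (w : Fin no → ℂ) : Fin na × Fin no → ℂ := fun p => v p.1 * w p.2

lemma pt_zero_left (w : Fin no → ℂ) : pt (0 : Fin na → ℂ) w = 0 := by
  funext p; simp [pt]

lemma pt_zero_right (v : Fin na → ℂ) : pt v (0 : Fin no → ℂ) = 0 := by
  funext p; simp [pt]

lemma pt_single (i : Fin na) (j : Fin no) :
    pt (Pi.single i (1:ℂ)) (Pi.single j (1:ℂ)) = Pi.single (i, j) (1:ℂ) := by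
  funext q
  rcases q with ⟨a, b⟩
  simp only [pt, Pi.single_apply, Prod.mk.injEq, ite_mul, one_mul, Prod.ext_iff]
  by_cases h1 : a = i <;> by_cases h2 : b = j <;> simp [h1, h2, Pi.single_apply, eq_comm]

lemma sub_kron (X Y : Matrix (Fin na) (Fin na) ℂ) (Z : Matrix (Fin no) (Fin no) ℂ) :
    (X - Y) ⊗ₖ Z = X ⊗ₖ Z - Y ⊗ₖ Z := by
  ext p q; simp [kroneckerMap_apply, sub_mul]

lemma kron_sub (X : Matrix (Fin na) (Fin na) ℂ) (Y Z : Matrix (Fin no) (Fin no) ℂ) :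
    X ⊗ₖ (Y - Z) = X ⊗ₖ Y - X ⊗ₖ Z := by
  ext p q; simp [kroneckerMap_apply, mul_sub]

lemma kron_comm' (X : Matrix (Fin na) (Fin na) ℂ) (Y : Matrix (Fin no) (Fin no) ℂ) :
    Commute (X ⊗ₖ (1 : Matrix (Fin no) (Fin no) ℂ)) ((1 : Matrix (Fin na) (Fin na) ℂ) ⊗ₖ Y) := by
  unfold Commute SemiconjBy
  rw [← mul_kronecker_mul, ← mul_kronecker_mul, one_mul, one_mul, mul_one, mul_one]

lemma one_kron_comm {Y Z : Matrix (Fin no) (Fin no) ℂ} (h : Commute Y Z) :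
    Commute ((1 : Matrix (Fin na) (Fin na) ℂ) ⊗ₖ Y) ((1 : Matrix (Fin na) (Fin na) ℂ) ⊗ₖ Z) := by
  unfold Commute SemiconjBy
  rw [← mul_kronecker_mul, ← mul_kronecker_mul, one_mul, h.eq]

lemma kron_one_pow (X : Matrix (Fin na) (Fin na) ℂ) (k : ℕ) :
    (X ⊗ₖ (1 : Matrix (Fin no) (Fin no) ℂ)) ^ k = (X ^ k) ⊗ₖ (1 : Matrix (Fin no) (Fin no) ℂ) := by
  induction k with
  | zero => simp [Matrix.one_kronecker_one]
  | succ k ih => rw [pow_succ, ih, ← mul_kronecker_mul, mul_one, ← pow_succ]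

lemma one_kron_pow (Y : Matrix (Fin no) (Fin no) ℂ) (k : ℕ) :
    ((1 : Matrix (Fin na) (Fin na) ℂ) ⊗ₖ Y) ^ k = (1 : Matrix (Fin na) (Fin na) ℂ) ⊗ₖ (Y ^ k) := by
  induction k with
  | zero => simp [Matrix.one_kronecker_one]
  | succ k ih => rw [pow_succ, ih, ← mul_kronecker_mul, mul_one, ← pow_succ]

lemma kron_mulVec (X : Matrix (Fin na) (Fin na) ℂ) (Y : Matrix (Fin no) (Fin no) ℂ)
    (v : Fin na → ℂ) (w : Fin no → ℂ) :
    (X ⊗ₖ Y) *ᵥ pt v w = pt (X *ᵥ v) (Y *ᵥ w) := by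
  funext p
  simp only [pt, mulVec, dotProduct, kroneckerMap_apply, Fintype.sum_prod_type]
  rw [Finset.sum_mul_sum]
  exact Finset.sum_congr rfl fun k _ => Finset.sum_congr rfl fun l _ => by ring

lemma sum_mulVec' {ι : Type*} (s : Finset ι) (f : ι → Matrix (Fin na × Fin no) (Fin na × Fin no) ℂ)
    (x : Fin na × Fin no → ℂ) : (∑ i ∈ s, f i) *ᵥ x = ∑ i ∈ s, (f i) *ᵥ x := by
  classical
  induction s using Finset.induction_on with
  | empty => simp [Matrix.zero_mulVec]
  | insert _ _ h ih => rw [Finset.sum_insert h, Finset.sum_insert h, Matrix.add_mulVec, ih]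

lemma mulVec_sum' {ι : Type*} (s : Finset ι) (M : Matrix (Fin na × Fin no) (Fin na × Fin no) ℂ)
    (f : ι → (Fin na × Fin no → ℂ)) :
    M *ᵥ (∑ i ∈ s, f i) = ∑ i ∈ s, M *ᵥ f i := by
  classical
  induction s using Finset.induction_on with
  | empty => simp [Matrix.mulVec_zero]
  | insert _ _ h ih => rw [Finset.sum_insert h, Finset.sum_insert h, Matrix.mulVec_add, ih]

lemma pt_finsupp (c : ℂ →₀ (Fin na → ℂ)) (b : ℂ →₀ (Fin no → ℂ)) :
    pt (c.sum fun _ x => x) (b.sum fun _ x => x)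
      = ∑ lam ∈ c.support, ∑ mu ∈ b.support, pt (c lam) (b mu) := by
  funext p
  rw [Finsupp.sum, Finsupp.sum]
  simp only [pt, Finset.sum_apply, Finset.sum_mul, Finset.mul_sum]
  rw [Finset.sum_comm]

lemma eval_charpoly' {n : Type*} [Fintype n] [DecidableEq n] (M : Matrix n n ℂ) (μ : ℂ) :
    M.charpoly.eval μ = (μ • (1 : Matrix n n ℂ) - M).det := by
  rw [Matrix.charpoly, eval_det, matPolyEquiv_charmatrix]
  simp only [eval_sub, eval_X, eval_C, Matrix.scalar_apply, Matrix.smul_one_eq_diagonal]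

lemma mem_roots_iff_eigen {n : Type*} [Fintype n] [DecidableEq n] (M : Matrix n n ℂ) (μ : ℂ) :
    μ ∈ M.charpoly.roots ↔ ∃ v, v ≠ 0 ∧ M *ᵥ v = μ • v := by
  rw [mem_roots M.charpoly_monic.ne_zero, IsRoot.def, eval_charpoly',
    ← Matrix.exists_mulVec_eq_zero_iff]
  constructor <;> rintro ⟨v, hv, h⟩ <;> refine ⟨v, hv, ?_⟩
  · rw [sub_mulVec, smul_mulVec, one_mulVec, sub_eq_zero] at h; exact h.symm
  · rw [sub_mulVec, smul_mulVec, one_mulVec, h, sub_self]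

lemma aeval_mulVec {n : Type*} [Fintype n] [DecidableEq n] (M : Matrix n n ℂ) (x : n → ℂ)
    (η : ℂ) (hx : M *ᵥ x = η • x) (q : Polynomial ℂ) :
    (aeval M q) *ᵥ x = q.eval η • x := by
  induction q using Polynomial.induction_on with
  | C a => rw [aeval_C, eval_C, Algebra.algebraMap_eq_smul_one, Matrix.smul_mulVec,
      Matrix.one_mulVec]
  | add p q hp hq => rw [map_add, Matrix.add_mulVec, hp, hq, eval_add, add_smul]
  | monomial n a ih =>
      rw [pow_succ, ← mul_assoc, _root_.map_mul, aeval_X, ← Matrix.mulVec_mulVec, hx,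
        Matrix.mulVec_smul, ih, eval_mul, eval_mul, eval_C, eval_pow, eval_X, eval_mul, eval_pow,
        eval_X, eval_C, smul_smul]
      ring_nf

lemma gen_decomp {n : ℕ} (M : Matrix (Fin n) (Fin n) ℂ) (x : Fin n → ℂ) :
    ∃ c : ℂ →₀ (Fin n → ℂ),
      (∀ μ ∈ c.support, ((M - μ • 1) ^ n) *ᵥ c μ = 0 ∧
        (μ • (1 : Matrix (Fin n) (Fin n) ℂ) - M).det = 0) ∧
      (c.sum fun _ v => v) = x := by
  classical
  set f : Module.End ℂ (Fin n → ℂ) := Matrix.toLinAlgEquiv' M with hf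
  have htop := Module.End.iSup_maxGenEigenspace_eq_top (K := ℂ) (V := Fin n → ℂ) f
  have hx : x ∈ ⨆ μ : ℂ, f.maxGenEigenspace μ := htop ▸ Submodule.mem_top
  obtain ⟨c, hc, hsum⟩ := (Submodule.mem_iSup_iff_exists_finsupp _ x).mp hx
  refine ⟨c, fun μ hμ => ?_, hsum⟩
  have hμ0 : c μ ≠ 0 := Finsupp.mem_support_iff.mp hμ
  have h1 : c μ ∈ f.genEigenspace μ (Module.finrank ℂ (Fin n → ℂ)) :=
    Module.End.genEigenspace_le_genEigenspace_finrank f μ ⊤ (hc μ)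
  rw [Module.finrank_fin_fun ℂ, Module.End.mem_genEigenspace_nat, LinearMap.mem_ker] at h1
  have key : (f - μ • 1) ^ n
      = Matrix.toLinAlgEquiv' ((M - μ • (1 : Matrix (Fin n) (Fin n) ℂ)) ^ n) := by
    rw [map_pow, map_sub, _root_.map_smul, _root_.map_one]
  rw [key, Matrix.toLinAlgEquiv'_apply] at h1
  refine ⟨h1, ?_⟩
  have hdet : ((M - μ • (1 : Matrix (Fin n) (Fin n) ℂ)) ^ n).det = 0 :=
    Matrix.exists_mulVec_eq_zero_iff.mp ⟨c μ, hμ0, h1⟩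
  rw [det_pow] at hdet
  have h2 : (M - μ • (1 : Matrix (Fin n) (Fin n) ℂ)).det = 0 := (pow_eq_zero_iff'.mp hdet).1
  have h3 : μ • (1 : Matrix (Fin n) (Fin n) ℂ) - M = -(M - μ • 1) := by rw [neg_sub]
  rw [h3, det_neg, h2, mul_zero]

set_option maxHeartbeats 1000000 in
lemma kill (A : Matrix (Fin na) (Fin na) ℂ) (B : Matrix (Fin no) (Fin no) ℂ)
    (c0 c1 c2 c3 lam mu : ℂ) (v : Fin na → ℂ) (w : Fin no → ℂ)
    (hv : ((A - lam • 1) ^ na) *ᵥ v = 0) (hw : ((B - mu • 1) ^ no) *ᵥ w = 0) :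
    ((c0 • 1 + c1 • (A ⊗ₖ (1 : Matrix (Fin no) (Fin no) ℂ))
        + c2 • ((1 : Matrix (Fin na) (Fin na) ℂ) ⊗ₖ B) + c3 • (A ⊗ₖ B)
      - (c0 + c1 * lam + c2 * mu + c3 * (lam * mu)) • 1) ^ (na + no)) *ᵥ pt v w = 0 := by
  set N1 := A - lam • (1 : Matrix (Fin na) (Fin na) ℂ) with hN1
  set N2 := B - mu • (1 : Matrix (Fin no) (Fin no) ℂ) with hN2
  set M0 := c1 • (1 : Matrix (Fin na × Fin no) (Fin na × Fin no) ℂ)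
      + c3 • ((1 : Matrix (Fin na) (Fin na) ℂ) ⊗ₖ B) with hM0
  set K1 := N1 ⊗ₖ (1 : Matrix (Fin no) (Fin no) ℂ) with hK1
  set K2 := (1 : Matrix (Fin na) (Fin na) ℂ) ⊗ₖ N2 with hK2
  have hBN2 : Commute B N2 := by
    rw [hN2]
    exact (Commute.refl B).sub_right ((Commute.one_right B).smul_right mu)
  have hBK1 : Commute ((1 : Matrix (Fin na) (Fin na) ℂ) ⊗ₖ B) K1 := (kron_comm' N1 B).symm
  have hM0K1 : Commute M0 K1 :=
    ((Commute.one_left K1).smul_left c1).add_left (hBK1.smul_left c3)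
  have hK1K2 : Commute K1 K2 := kron_comm' N1 N2
  have hM0K2 : Commute M0 K2 :=
    ((Commute.one_left K2).smul_left c1).add_left ((one_kron_comm hBN2).smul_left c3)
  have hST : Commute (M0 * K1) ((c2 + c3 * lam) • K2) :=
    (hM0K2.mul_left hK1K2).smul_right _
  have hD : c0 • 1 + c1 • (A ⊗ₖ (1 : Matrix (Fin no) (Fin no) ℂ))
        + c2 • ((1 : Matrix (Fin na) (Fin na) ℂ) ⊗ₖ B) + c3 • (A ⊗ₖ B)
      - (c0 + c1 * lam + c2 * mu + c3 * (lam * mu)) • 1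
      = M0 * K1 + (c2 + c3 * lam) • K2 := by
    rw [hM0, hK1, hK2, hN1, hN2, add_mul, smul_mul_assoc, smul_mul_assoc, one_mul,
      ← mul_kronecker_mul, one_mul, mul_one, sub_kron, sub_kron, kron_sub,
      Matrix.smul_kronecker, Matrix.smul_kronecker, Matrix.kronecker_smul,
      Matrix.one_kronecker_one]
    module
  rw [hD, hST.add_pow, sum_mulVec']
  apply Finset.sum_eq_zero
  intro k hk
  have hpt0 : M0 ^ k *ᵥ pt (N1 ^ k *ᵥ v) (N2 ^ (na + no - k) *ᵥ w) = 0 := by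
    rcases le_or_gt na k with h | h
    · have h0 : N1 ^ k *ᵥ v = 0 := by
        rw [show k = (k - na) + na by omega, pow_add, ← Matrix.mulVec_mulVec, hv,
          Matrix.mulVec_zero]
      rw [h0, pt_zero_left, Matrix.mulVec_zero]
    · have h0 : N2 ^ (na + no - k) *ᵥ w = 0 := by
        rw [show na + no - k = (na + no - k - no) + no by omega, pow_add,
          ← Matrix.mulVec_mulVec, hw, Matrix.mulVec_zero]
      rw [h0, pt_zero_right, Matrix.mulVec_zero]
  rw [← Matrix.mulVec_mulVec, Matrix.natCast_mulVec, Matrix.mulVec_smul,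
    hM0K1.mul_pow, _root_.smul_pow, hK1, hK2, kron_one_pow, one_kron_pow,
    Algebra.mul_smul_comm, Matrix.smul_mulVec,
    mul_assoc, ← mul_kronecker_mul, mul_one, one_mul,
    ← Matrix.mulVec_mulVec, kron_mulVec, hpt0, smul_zero, smul_zero]

lemma eig_form (A : Matrix (Fin na) (Fin na) ℂ) (B : Matrix (Fin no) (Fin no) ℂ)
    (c0 c1 c2 c3 η : ℂ)
    (hη : η ∈ (c0 • 1 + c1 • (A ⊗ₖ (1 : Matrix (Fin no) (Fin no) ℂ))
        + c2 • ((1 : Matrix (Fin na) (Fin na) ℂ) ⊗ₖ B) + c3 • (A ⊗ₖ B)).charpoly.roots) :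
    ∃ lam ∈ A.charpoly.roots, ∃ mu ∈ B.charpoly.roots,
      η = c0 + c1 * lam + c2 * mu + c3 * (lam * mu) := by
  classical
  set Jc := c0 • 1 + c1 • (A ⊗ₖ (1 : Matrix (Fin no) (Fin no) ℂ))
      + c2 • ((1 : Matrix (Fin na) (Fin na) ℂ) ⊗ₖ B) + c3 • (A ⊗ₖ B) with hJc
  obtain ⟨x, hx0, hx⟩ := (mem_roots_iff_eigen Jc η).mp hη
  set ΛA := A.charpoly.roots.toFinset with hΛA
  set ΛB := B.charpoly.roots.toFinset with hΛB
  set P : Polynomial ℂ :=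
    ∏ p ∈ ΛA ×ˢ ΛB, (X - C (c0 + c1 * p.1 + c2 * p.2 + c3 * (p.1 * p.2))) ^ (na + no) with hP
  have hpure : ∀ (v : Fin na → ℂ) (w : Fin no → ℂ), (aeval Jc P) *ᵥ pt v w = 0 := by
    intro v w
    obtain ⟨c, hc, hcsum⟩ := gen_decomp A v
    obtain ⟨b, hb, hbsum⟩ := gen_decomp B w
    rw [← hcsum, ← hbsum, pt_finsupp, mulVec_sum']
    refine Finset.sum_eq_zero fun lam hlam => ?_
    rw [mulVec_sum']
    refine Finset.sum_eq_zero fun mu hmu => ?_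
    have hlamA : lam ∈ ΛA := by
      rw [hΛA, Multiset.mem_toFinset, mem_roots A.charpoly_monic.ne_zero, IsRoot.def,
        eval_charpoly']
      exact (hc lam hlam).2
    have hmuB : mu ∈ ΛB := by
      rw [hΛB, Multiset.mem_toFinset, mem_roots B.charpoly_monic.ne_zero, IsRoot.def,
        eval_charpoly']
      exact (hb mu hmu).2
    have hmem : (lam, mu) ∈ ΛA ×ˢ ΛB := Finset.mem_product.mpr ⟨hlamA, hmuB⟩
    have hsplit := Finset.prod_erase_mul (ΛA ×ˢ ΛB)
      (fun p => (X - C (c0 + c1 * p.1 + c2 * p.2 + c3 * (p.1 * p.2))) ^ (na + no)) hmem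
    have haevalg : aeval Jc ((X - C (c0 + c1 * lam + c2 * mu + c3 * (lam * mu))) ^ (na + no))
        = (Jc - (c0 + c1 * lam + c2 * mu + c3 * (lam * mu)) • 1) ^ (na + no) := by
      rw [map_pow, map_sub, aeval_X, aeval_C, Algebra.algebraMap_eq_smul_one]
    have hkill := kill A B c0 c1 c2 c3 lam mu (c lam) (b mu) (hc lam hlam).1 (hb mu hmu).1
    rw [hP, ← hsplit, _root_.map_mul, ← Matrix.mulVec_mulVec, haevalg, hJc, hkill,
      Matrix.mulVec_zero]
  have h0 : P.eval η • x = 0 := by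
    rw [← aeval_mulVec Jc x η hx P]
    have hxdec : x = ∑ p : Fin na × Fin no, x p • (Pi.single p (1:ℂ) : Fin na × Fin no → ℂ) := by
      funext q
      rw [Finset.sum_apply]
      simp [Pi.single_apply]
    calc (aeval Jc P) *ᵥ x
        = (aeval Jc P) *ᵥ (∑ p : Fin na × Fin no, x p • (Pi.single p (1:ℂ) : Fin na × Fin no → ℂ)) := by
          rw [← hxdec]
      _ = ∑ p : Fin na × Fin no, x p • ((aeval Jc P) *ᵥ (Pi.single p (1:ℂ) : Fin na × Fin no → ℂ)) := by
          rw [mulVec_sum']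
          exact Finset.sum_congr rfl fun p _ => Matrix.mulVec_smul _ _ _
      _ = 0 := Finset.sum_eq_zero fun p _ => by
          rw [← pt_single, hpure, smul_zero]
  have hPη : P.eval η = 0 := by
    rcases smul_eq_zero.mp h0 with h | h
    · exact h
    · exact absurd h hx0
  rw [hP, eval_prod] at hPη
  obtain ⟨p, hpmem, hp0⟩ := Finset.prod_eq_zero_iff.mp hPη
  rw [eval_pow, eval_sub, eval_X, eval_C] at hp0
  have hf : η = c0 + c1 * p.1 + c2 * p.2 + c3 * (p.1 * p.2) :=
    sub_eq_zero.mp (pow_eq_zero_iff'.mp hp0).1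
  obtain ⟨h1, h2⟩ := Finset.mem_product.mp hpmem
  exact ⟨p.1, Multiset.mem_toFinset.mp h1, p.2, Multiset.mem_toFinset.mp h2, hf⟩

lemma eig_exists (A : Matrix (Fin na) (Fin na) ℂ) (B : Matrix (Fin no) (Fin no) ℂ)
    (c0 c1 c2 c3 lam mu : ℂ)
    (hlam : lam ∈ A.charpoly.roots) (hmu : mu ∈ B.charpoly.roots) :
    c0 + c1 * lam + c2 * mu + c3 * (lam * mu)
      ∈ (c0 • 1 + c1 • (A ⊗ₖ (1 : Matrix (Fin no) (Fin no) ℂ))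
        + c2 • ((1 : Matrix (Fin na) (Fin na) ℂ) ⊗ₖ B) + c3 • (A ⊗ₖ B)).charpoly.roots := by
  obtain ⟨v, hv0, hv⟩ := (mem_roots_iff_eigen A lam).mp hlam
  obtain ⟨w, hw0, hw⟩ := (mem_roots_iff_eigen B mu).mp hmu
  refine (mem_roots_iff_eigen _ _).mpr ⟨pt v w, ?_, ?_⟩
  · obtain ⟨i, hi⟩ := Function.ne_iff.mp hv0
    obtain ⟨j, hj⟩ := Function.ne_iff.mp hw0
    intro h
    have := congrFun h (i, j)
    simp only [pt, Pi.zero_apply, mul_eq_zero] at this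
    tauto
  · rw [Matrix.add_mulVec, Matrix.add_mulVec, Matrix.add_mulVec,
      Matrix.smul_mulVec, Matrix.smul_mulVec, Matrix.smul_mulVec,
      Matrix.smul_mulVec, Matrix.one_mulVec, kron_mulVec, kron_mulVec, kron_mulVec,
      Matrix.one_mulVec, Matrix.one_mulVec, hv, hw]
    funext p
    simp only [pt, Pi.add_apply, Pi.smul_apply, smul_eq_mul]
    ring

end StmtAux

open Kronecker in
lemma map_smul' {m n : Type*} (r : ℝ) (M : Matrix m n ℝ) :
    (r • M).map Complex.ofReal = (r : ℂ) • M.map Complex.ofReal := by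
  ext i j
  simp [Matrix.map_apply, Complex.ofReal_mul]

open Kronecker in
lemma map_kron {a b : ℕ} (X : Matrix (Fin a) (Fin a) ℝ) (Y : Matrix (Fin b) (Fin b) ℝ) :
    (X ⊗ₖ Y).map Complex.ofReal = (X.map Complex.ofReal) ⊗ₖ (Y.map Complex.ofReal) := by
  ext p q
  simp [Matrix.map_apply, kroneckerMap_apply, Complex.ofReal_mul]

open Kronecker in
lemma Jmap {Na No : ℕ} (Aa : Matrix (Fin Na) (Fin Na) ℝ)
    (Ao : Matrix (Fin No) (Fin No) ℝ) (d u α β γ δ : ℝ) :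
    (Jmat Aa Ao d u α β γ δ).map Complex.ofReal
      = ((-d + u * α : ℝ) : ℂ) • 1
        + ((u * γ : ℝ) : ℂ) • ((Aa.map Complex.ofReal) ⊗ₖ (1 : Matrix (Fin No) (Fin No) ℂ))
        + ((u * β : ℝ) : ℂ) • ((1 : Matrix (Fin Na) (Fin Na) ℂ) ⊗ₖ (Ao.map Complex.ofReal))
        + ((u * δ : ℝ) : ℂ) • ((Aa.map Complex.ofReal) ⊗ₖ (Ao.map Complex.ofReal)) := by
  rw [Jmat, Matrix.map_add, Matrix.map_add, Matrix.map_add, map_smul', map_smul', map_smul',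
    map_smul', map_kron, map_kron, map_kron,
    Matrix.map_one _ Complex.ofReal_zero Complex.ofReal_one,
    Matrix.map_one _ Complex.ofReal_zero Complex.ofReal_one,
    Matrix.map_one _ Complex.ofReal_zero Complex.ofReal_one]
  all_goals exact fun a₁ a₂ => Complex.ofReal_add a₁ a₂

open StmtAux in
theorem stmt5 {Na No : ℕ} (Aa : Matrix (Fin Na) (Fin Na) ℝ)
    (Ao : Matrix (Fin No) (Fin No) ℝ) (d α β γ δ ξmax : ℝ)
    (hd : 0 < d) (hα : 0 ≤ α) (hβ : 0 ≤ β) (hγ : 0 ≤ γ) (hδ : 0 ≤ δ)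
    (hattain : ∃ lam ∈ spectrumM Aa, ∃ mu ∈ spectrumM Ao,
      α + γ * lam.re + β * mu.re + δ * (lam * mu).re = ξmax)
    (hub : ∀ lam ∈ spectrumM Aa, ∀ mu ∈ spectrumM Ao,
      α + γ * lam.re + β * mu.re + δ * (lam * mu).re ≤ ξmax)
    (hξ : 0 < ξmax) :
    (∀ u : ℝ, 0 ≤ u → u < d / ξmax →
      ∀ η ∈ spectrumM (Jmat Aa Ao d u α β γ δ), η.re < 0) ∧
    (∀ u : ℝ, d / ξmax < u →
      ∃ η ∈ spectrumM (Jmat Aa Ao d u α β γ δ), 0 < η.re) := by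
  constructor
  · intro u hu0 hu η hη
    have hη' : η ∈ (((Jmat Aa Ao d u α β γ δ).map Complex.ofReal)).charpoly.roots := hη
    rw [Jmap] at hη'
    obtain ⟨lam, hlam, mu, hmu, hform⟩ := eig_form _ _ _ _ _ _ _ hη'
    have hξle := hub lam hlam mu hmu
    have hre : η.re = -d + u * (α + γ * lam.re + β * mu.re + δ * (lam * mu).re) := by
      rw [hform]
      simp only [Complex.add_re, Complex.mul_re, Complex.ofReal_re, Complex.ofReal_im,
        zero_mul, sub_zero]
      ring
    have h1 : u * (α + γ * lam.re + β * mu.re + δ * (lam * mu).re) ≤ u * ξmax :=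
      mul_le_mul_of_nonneg_left hξle hu0
    have h2 : u * ξmax < d := (lt_div_iff₀ hξ).mp hu
    linarith
  · intro u hu
    obtain ⟨lam, hlam, mu, hmu, hξeq⟩ := hattain
    have hmem := eig_exists (Aa.map Complex.ofReal) (Ao.map Complex.ofReal)
      ((-d + u * α : ℝ) : ℂ) ((u * γ : ℝ) : ℂ) ((u * β : ℝ) : ℂ) ((u * δ : ℝ) : ℂ)
      lam mu hlam hmu
    refine ⟨((-d + u * α : ℝ) : ℂ) + ((u * γ : ℝ) : ℂ) * lam + ((u * β : ℝ) : ℂ) * mu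
      + ((u * δ : ℝ) : ℂ) * (lam * mu), ?_, ?_⟩
    · show _ ∈ (((Jmat Aa Ao d u α β γ δ).map Complex.ofReal)).charpoly.roots
      rw [Jmap]
      exact hmem
    · have h2 : d < u * ξmax := (div_lt_iff₀ hξ).mp hu
      simp only [Complex.mul_re] at hξeq
      simp only [Complex.add_re, Complex.mul_re, Complex.ofReal_re, Complex.ofReal_im,
        zero_mul, sub_zero]
      have h3 : u * (α + γ * lam.re + β * mu.re + δ * (lam.re * mu.re - lam.im * mu.im))
          = u * ξmax := by rw [hξeq]
      linarith [h2, h3]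
end

section
/- Let A_a and A_o be real symmetric square matrices, each switching isomorphic to an entrywise nonnegative irreducible matrix (Class II), and each sign-symmetric, i.e. for each of them there exist a switching matrix Θ' and permutation matrix P' with Θ'P'AP'ᵀΘ' = −A. Then the set Λ₂ := {(λ,μ) ∈ σ(A_a)×σ(A_o) : λμ = max over σ(A_a)×σ(A_o) of λ'μ'} (all eigenvalues being real) equals the two-element set {(ρ(A_a), ρ(A_o)), (−ρ(A_a), −ρ(A_o))}. -/
open Matrix Polynomial

/-- Class I: switching isomorphic to an eventually positive matrix. -/
def ClassI {n : ℕ} (A : Matrix (Fin n) (Fin n) ℝ) : Prop :=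
  ∃ Θ P : Matrix (Fin n) (Fin n) ℝ, IsSwitching Θ ∧ IsPermMatrix P ∧
    EventuallyPositive (Θ * P * A * Pᵀ * Θ)

/-- Class II: switching isomorphic to an entrywise nonnegative irreducible matrix. -/
def ClassII {n : ℕ} (A : Matrix (Fin n) (Fin n) ℝ) : Prop :=
  ∃ Θ P : Matrix (Fin n) (Fin n) ℝ, IsSwitching Θ ∧ IsPermMatrix P ∧
    IrreducibleNonneg (Θ * P * A * Pᵀ * Θ)

/-- The maximal real part of the eigenvalues. -/
noncomputable def maxRe {m : Type*} [Fintype m] [DecidableEq m]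
    (A : Matrix m m ℝ) : ℝ :=
  sSup {r : ℝ | ∃ z ∈ spectrumM A, z.re = r}

/-- The maximal real part of pairwise products of eigenvalues of two matrices. -/
noncomputable def maxReProd {m m' : Type*} [Fintype m] [DecidableEq m]
    [Fintype m'] [DecidableEq m'] (Aa : Matrix m m ℝ) (Ao : Matrix m' m' ℝ) : ℝ :=
  sSup {r : ℝ | ∃ z ∈ spectrumM Aa, ∃ w ∈ spectrumM Ao, (z * w).re = r}

/-- Sign-symmetric: switching isomorphic to its negation. -/
def SignSymmetric {n : ℕ} (A : Matrix (Fin n) (Fin n) ℝ) : Prop :=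
  ∃ Θ P : Matrix (Fin n) (Fin n) ℝ, IsSwitching Θ ∧ IsPermMatrix P ∧
    Θ * P * A * Pᵀ * Θ = -A

section MyHelpers
variable {n : Type*} [Fintype n] [DecidableEq n] {R : Type*} [CommRing R]

lemma my_charpoly_conj (U A V : Matrix n n R) (h : U * V = 1) :
    (U * A * V).charpoly = A.charpoly := by
  let f : Matrix n n R →+* Matrix n n R[X] := (C : R →+* R[X]).mapMatrix
  have hUV : f U * f V = 1 := by rw [← _root_.map_mul, h, _root_.map_one]
  have hsc : f U * Matrix.scalar n (X : R[X]) * f V = Matrix.scalar n (X : R[X]) := by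
    rw [← (Matrix.scalar_commute (X : R[X]) (fun r' => Commute.all _ _) (f U)).eq,
      mul_assoc, hUV, mul_one]
  have hm : charmatrix (U * A * V) = f U * charmatrix A * f V := by
    show Matrix.scalar n (X : R[X]) - f (U * A * V) = f U * (Matrix.scalar n (X:R[X]) - f A) * f V
    rw [_root_.map_mul, _root_.map_mul, Matrix.mul_sub, Matrix.sub_mul, hsc]
  unfold Matrix.charpoly
  rw [hm, det_mul, det_mul]
  have h2 : (f U).det * (f V).det = 1 := by rw [← det_mul, hUV, det_one]
  calc (f U).det * (charmatrix A).det * (f V).det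
      = (charmatrix A).det * ((f U).det * (f V).det) := by ring
    _ = (charmatrix A).det := by rw [h2, mul_one]

lemma my_eval_charpoly (A : Matrix n n R) (t : R) :
    A.charpoly.eval t = (Matrix.scalar n t - A).det := by
  unfold Matrix.charpoly
  rw [← Polynomial.coe_evalRingHom, RingHom.map_det]
  congr 1
  ext i j
  by_cases hij : i = j <;>
    simp [charmatrix_apply, hij, Matrix.scalar_apply, Matrix.diagonal_apply, Matrix.sub_apply]

lemma switching_mul_self {N : ℕ} {Θ : Matrix (Fin N) (Fin N) ℝ} (h : IsSwitching Θ) :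
    Θ * Θ = 1 := by
  obtain ⟨θ, hθ, rfl⟩ := h
  rw [Matrix.diagonal_mul_diagonal]
  have : (fun i => θ i * θ i) = fun _ => (1:ℝ) := by
    funext i; rcases hθ i with h | h <;> rw [h] <;> norm_num
  rw [this, Matrix.diagonal_one]

lemma perm_mul_transpose {N : ℕ} {P : Matrix (Fin N) (Fin N) ℝ} (h : IsPermMatrix P) :
    P * Pᵀ = 1 := by
  obtain ⟨σ, rfl⟩ := h
  ext i j
  simp only [Matrix.mul_apply, Matrix.transpose_apply, Matrix.of_apply]
  rw [Finset.sum_eq_single (σ.symm i)]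
  · by_cases hij : i = j <;>
      simp [hij, Equiv.apply_symm_apply, Equiv.symm_apply_eq, Matrix.one_apply, eq_comm]
  · intro k _ hk
    have : ¬ σ k = i := fun hc => hk (by simp [← hc])
    simp [this]
  · simp

/-- charpoly of the negation equals charpoly, over ℝ, for sign-symmetric matrices. -/
lemma signsymm_charpoly {N : ℕ} {A : Matrix (Fin N) (Fin N) ℝ} (h : SignSymmetric A) :
    (-A).charpoly = A.charpoly := by
  obtain ⟨Θ, P, hΘ, hP, heq⟩ := h
  have hUV : (Θ * P) * (Pᵀ * Θ) = 1 := by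
    have h1 := perm_mul_transpose hP
    have h2 := switching_mul_self hΘ
    calc (Θ * P) * (Pᵀ * Θ) = Θ * (P * Pᵀ) * Θ := by simp only [mul_assoc]
      _ = 1 := by rw [h1, mul_one, h2]
  calc (-A).charpoly = ((Θ * P) * A * (Pᵀ * Θ)).charpoly := by
        rw [show (Θ * P) * A * (Pᵀ * Θ) = Θ * P * A * Pᵀ * Θ by simp only [mul_assoc], heq]
    _ = A.charpoly := my_charpoly_conj _ _ _ hUV

lemma map_ofReal_charpoly {N : ℕ} (A : Matrix (Fin N) (Fin N) ℝ) :
    (A.map Complex.ofReal).charpoly = A.charpoly.map Complex.ofRealHom := by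
  rw [← Matrix.charpoly_map]
  congr 1

lemma neg_mem_spectrumM {N : ℕ} {A : Matrix (Fin N) (Fin N) ℝ} (hss : SignSymmetric A)
    {z : ℂ} (hz : z ∈ spectrumM A) : -z ∈ spectrumM A := by
  classical
  set M : Matrix (Fin N) (Fin N) ℂ := A.map Complex.ofReal with hM
  have hnegmap : (-A).map Complex.ofReal = -M := by
    ext i j; simp [hM]
  have hcp : (-M).charpoly = M.charpoly := by
    rw [← hnegmap, map_ofReal_charpoly, map_ofReal_charpoly, signsymm_charpoly hss]
  have hne : M.charpoly ≠ 0 := (Matrix.charpoly_monic M).ne_zero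
  rw [spectrumM, mem_roots hne] at hz ⊢
  have h1 : M.charpoly.IsRoot (-z) ↔ ((Matrix.scalar (Fin N) (-z)) - M).det = 0 := by
    rw [IsRoot, my_eval_charpoly]
  rw [h1]
  have h2 : (Matrix.scalar (Fin N) (-z)) - M = -((Matrix.scalar (Fin N) z) - (-M)) := by
    rw [_root_.map_neg]; abel
  rw [h2, Matrix.det_neg]
  have h3 : ((Matrix.scalar (Fin N) z) - (-M)).det = 0 := by
    rw [← my_eval_charpoly, hcp]
    exact hz
  rw [h3, mul_zero]

lemma isHermitian_map_ofReal {N : ℕ} {A : Matrix (Fin N) (Fin N) ℝ} (hs : A.IsSymm) :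
    (A.map Complex.ofReal).IsHermitian := by
  ext i j
  simp only [Matrix.conjTranspose_apply, Matrix.map_apply, Complex.star_def,
    Complex.conj_ofReal]
  rw [hs.apply]

lemma herm_spectrum {N : ℕ} {A : Matrix (Fin N) (Fin N) ℝ} (hs : A.IsSymm) :
    ∃ f : Fin N → ℝ,
      spectrumM A = Finset.univ.val.map (fun i => ((f i : ℝ) : ℂ)) ∧
      ((∀ i, f i = 0) → A = 0) := by
  have hH : (A.map Complex.ofReal).IsHermitian := isHermitian_map_ofReal hs
  have hU : (hH.eigenvectorUnitary : Matrix (Fin N) (Fin N) ℂ) *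
      star (hH.eigenvectorUnitary : Matrix (Fin N) (Fin N) ℂ) = 1 := by
    exact Matrix.mem_unitaryGroup_iff.mp hH.eigenvectorUnitary.2
  refine ⟨hH.eigenvalues, ?_, ?_⟩
  · have hcp : (A.map Complex.ofReal).charpoly
        = (Matrix.diagonal (RCLike.ofReal ∘ hH.eigenvalues) : Matrix (Fin N) (Fin N) ℂ).charpoly := by
      conv_lhs => rw [hH.spectral_theorem]
      exact my_charpoly_conj _ _ _ hU
    have hdm : charmatrix (Matrix.diagonal (RCLike.ofReal ∘ hH.eigenvalues) : Matrix (Fin N) (Fin N) ℂ)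
        = Matrix.diagonal (fun i => (X : ℂ[X]) - C ((hH.eigenvalues i : ℝ) : ℂ)) := by
      ext i j
      by_cases hij : i = j <;>
        simp [charmatrix_apply, hij, Matrix.diagonal_apply, RCLike.ofReal]
    have hd : (Matrix.diagonal (RCLike.ofReal ∘ hH.eigenvalues) : Matrix (Fin N) (Fin N) ℂ).charpoly
        = ((Finset.univ.val.map (fun i => ((hH.eigenvalues i : ℝ) : ℂ))).map
            (fun a => (X : ℂ[X]) - C a)).prod := by
      unfold Matrix.charpoly
      rw [hdm, Matrix.det_diagonal, Multiset.map_map]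
      rfl
    rw [spectrumM, hcp, hd, Polynomial.roots_multiset_prod_X_sub_C]
  · intro h0
    have hD : (Matrix.diagonal (RCLike.ofReal ∘ hH.eigenvalues) : Matrix (Fin N) (Fin N) ℂ) = 0 := by
      have : (RCLike.ofReal ∘ hH.eigenvalues : Fin N → ℂ) = fun _ => 0 := by
        funext i; simp [h0 i]
      rw [this, Matrix.diagonal_zero]
    have hM0 : A.map Complex.ofReal = 0 := by
      rw [hH.spectral_theorem, hD, _root_.map_zero]
    ext i j
    have := congrFun (congrFun hM0 i) j
    simpa [Matrix.map_apply, Complex.ofReal_eq_zero] using this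

lemma key_lemma {N : ℕ} (hN : 0 < N) (A : Matrix (Fin N) (Fin N) ℝ)
    (hs : A.IsSymm) (hcl : ClassII A) (hss : SignSymmetric A) :
    0 < specRadius A ∧ ((specRadius A : ℝ) : ℂ) ∈ spectrumM A ∧
      (-((specRadius A : ℝ) : ℂ)) ∈ spectrumM A ∧
      ∀ z ∈ spectrumM A, ∃ x : ℝ, z = (x : ℂ) ∧ |x| ≤ specRadius A := by
  obtain ⟨f, hspec, hzero⟩ := herm_spectrum hs
  have hreal : ∀ z ∈ spectrumM A, ∃ i : Fin N, z = ((f i : ℝ) : ℂ) := by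
    intro z hz
    rw [hspec, Multiset.mem_map] at hz
    obtain ⟨i, _, hi⟩ := hz
    exact ⟨i, hi.symm⟩
  have hmem : ∀ i : Fin N, ((f i : ℝ) : ℂ) ∈ spectrumM A := by
    intro i
    rw [hspec, Multiset.mem_map]
    exact ⟨i, Finset.mem_val.mpr (Finset.mem_univ i), rfl⟩
  set Rs : Set ℝ := {r : ℝ | ∃ z ∈ spectrumM A, ‖z‖ = r} with hRs
  have hRfin : Rs.Finite := by
    have : Rs = (fun z : ℂ => ‖z‖) '' ((spectrumM A).toFinset : Set ℂ) := by
      ext r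
      simp [hRs, Multiset.mem_toFinset]
    rw [this]
    exact ((spectrumM A).toFinset.finite_toSet).image _
  have i0 : Fin N := ⟨0, hN⟩
  have hRne : Rs.Nonempty := ⟨‖((f i0 : ℝ) : ℂ)‖, ⟨_, hmem i0, rfl⟩⟩
  have hub : ∀ z ∈ spectrumM A, ‖z‖ ≤ specRadius A := fun z hz =>
    le_csSup hRfin.bddAbove ⟨z, hz, rfl⟩
  have hmemR : specRadius A ∈ Rs := Set.Nonempty.csSup_mem hRne hRfin
  obtain ⟨z0, hz0, habs⟩ := hmemR
  obtain ⟨i1, rfl⟩ := hreal z0 hz0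
  rw [Complex.norm_real, Real.norm_eq_abs] at habs
  have hrnonneg : 0 ≤ specRadius A := habs ▸ abs_nonneg _
  have hbound : ∀ z ∈ spectrumM A, ∃ x : ℝ, z = (x : ℂ) ∧ |x| ≤ specRadius A := by
    intro z hz
    obtain ⟨i, rfl⟩ := hreal z hz
    refine ⟨f i, rfl, ?_⟩
    rw [← Real.norm_eq_abs, ← Complex.norm_real]
    exact hub _ hz
  have hpm : ((specRadius A : ℝ) : ℂ) ∈ spectrumM A ∧
      (-((specRadius A : ℝ) : ℂ)) ∈ spectrumM A := by
    rcases (abs_eq hrnonneg).mp habs with h | h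
    · rw [← h]
      exact ⟨hz0, neg_mem_spectrumM hss hz0⟩
    · have h1 : ((f i1 : ℝ) : ℂ) = -((specRadius A : ℝ) : ℂ) := by
        rw [h]; push_cast; ring
      rw [h1] at hz0
      exact ⟨by simpa using neg_mem_spectrumM hss hz0, hz0⟩
  have hrpos : 0 < specRadius A := by
    rcases lt_or_eq_of_le hrnonneg with h | h
    · exact h
    · exfalso
      have hA0 : A = 0 := by
        apply hzero
        intro i
        have h2 := hub _ (hmem i)
        rw [Complex.norm_real, Real.norm_eq_abs, ← h] at h2
        exact abs_nonpos_iff.mp h2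
      obtain ⟨Θ, P, _, _, hirr⟩ := hcl
      rw [hA0] at hirr
      have h3 : Θ * P * (0 : Matrix (Fin N) (Fin N) ℝ) * Pᵀ * Θ = 0 := by simp
      rw [h3] at hirr
      obtain ⟨k, hk, hpos⟩ := hirr.2 i0 i0
      rw [zero_pow hk.ne'] at hpos
      simp at hpos
  exact ⟨hrpos, hpm.1, hpm.2, hbound⟩
end MyHelpers

theorem stmt8 {Na No : ℕ} (hNa : 0 < Na) (hNo : 0 < No)
    (Aa : Matrix (Fin Na) (Fin Na) ℝ) (Ao : Matrix (Fin No) (Fin No) ℝ)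
    (hsa : Aa.IsSymm) (hso : Ao.IsSymm)
    (ha : ClassII Aa) (ho : ClassII Ao)
    (hssa : SignSymmetric Aa) (hsso : SignSymmetric Ao) :
    {p : ℂ × ℂ | p.1 ∈ spectrumM Aa ∧ p.2 ∈ spectrumM Ao ∧
        (p.1 * p.2).re = maxReProd Aa Ao} =
      {(((specRadius Aa : ℂ)), ((specRadius Ao : ℂ))),
        ((-(specRadius Aa : ℂ)), (-(specRadius Ao : ℂ)))} := by
  obtain ⟨hra, hmema, hmemna, hba⟩ := key_lemma hNa Aa hsa ha hssa
  obtain ⟨hro, hmemo, hmemno, hbo⟩ := key_lemma hNo Ao hso ho hsso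
  set ra := specRadius Aa with hrae
  set ro := specRadius Ao with hroe
  have hmax : maxReProd Aa Ao = ra * ro := by
    have hub : ∀ t ∈ {r : ℝ | ∃ z ∈ spectrumM Aa, ∃ w ∈ spectrumM Ao, (z * w).re = r},
        t ≤ ra * ro := by
      rintro t ⟨z, hz, w, hw, rfl⟩
      obtain ⟨x, rfl, hx⟩ := hba z hz
      obtain ⟨y, rfl, hy⟩ := hbo w hw
      rw [← Complex.ofReal_mul, Complex.ofReal_re]
      calc x * y ≤ |x * y| := le_abs_self _
        _ = |x| * |y| := abs_mul _ _
        _ ≤ ra * ro := mul_le_mul hx hy (abs_nonneg _) (le_of_lt hra)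
    have hmm : ra * ro ∈ {r : ℝ | ∃ z ∈ spectrumM Aa, ∃ w ∈ spectrumM Ao, (z * w).re = r} :=
      ⟨_, hmema, _, hmemo, by rw [← Complex.ofReal_mul, Complex.ofReal_re]⟩
    exact le_antisymm (csSup_le ⟨_, hmm⟩ hub) (le_csSup ⟨ra * ro, hub⟩ hmm)
  ext ⟨z, w⟩
  simp only [Set.mem_setOf_eq, Set.mem_insert_iff, Set.mem_singleton_iff, Prod.mk.injEq]
  constructor
  · rintro ⟨hz, hw, hre⟩
    obtain ⟨x, rfl, hx⟩ := hba z hz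
    obtain ⟨y, rfl, hy⟩ := hbo w hw
    rw [hmax, ← Complex.ofReal_mul, Complex.ofReal_re] at hre
    have hxa : |x| = ra := by
      by_contra hne
      have hlt : |x| < ra := lt_of_le_of_ne hx hne
      have hlt2 : x * y < ra * ro :=
        calc x * y ≤ |x| * |y| := by rw [← abs_mul]; exact le_abs_self _
          _ ≤ |x| * ro := mul_le_mul_of_nonneg_left hy (abs_nonneg _)
          _ < ra * ro := mul_lt_mul_of_pos_right hlt hro
      linarith
    have hya : |y| = ro := by
      by_contra hne
      have hlt : |y| < ro := lt_of_le_of_ne hy hne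
      have hlt2 : x * y < ra * ro :=
        calc x * y ≤ |x| * |y| := by rw [← abs_mul]; exact le_abs_self _
          _ ≤ ra * |y| := mul_le_mul_of_nonneg_right hx (abs_nonneg _)
          _ < ra * ro := mul_lt_mul_of_pos_left hlt hra
      linarith
    rcases (abs_eq (le_of_lt hra)).mp hxa with hx1 | hx1
    · left
      have hy1 : y = ro := by
        rw [hx1] at hre
        exact mul_left_cancel₀ (ne_of_gt hra) hre
      rw [hx1, hy1]
      exact ⟨rfl, rfl⟩
    · right
      have hy1 : y = -ro := by
        have h2 : ra * y = ra * (-ro) := by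
          rw [hx1] at hre; linarith
        exact mul_left_cancel₀ (ne_of_gt hra) h2
      rw [hx1, hy1]
      constructor <;> push_cast <;> ring
  · rintro (⟨rfl, rfl⟩ | ⟨rfl, rfl⟩)
    · exact ⟨hmema, hmemo, by rw [hmax, ← Complex.ofReal_mul, Complex.ofReal_re]⟩
    · refine ⟨by simpa using hmemna, by simpa using hmemno, ?_⟩
      rw [hmax]
      have h4 : (-(ra : ℂ)) * (-(ro : ℂ)) = ((ra * ro : ℝ) : ℂ) := by push_cast; ring
      rw [h4, Complex.ofReal_re]
end

section
/- Let A_a and A_o be real symmetric square matrices, each switching isomorphic to an entrywise nonnegative irreducible matrix (Class II). (a) If the spectra of both A_a and A_o are symmetric about the origin (λ ∈ σ(A) iff −λ ∈ σ(A) with equal multiplicity, equivalently the characteristic polynomial p satisfies p(−x) = (−1)ⁿ p(x)), then the set Λ₂ := {(λ,μ) ∈ σ(A_a)×σ(A_o) : λμ = max over σ(A_a)×σ(A_o) of λ'μ'} equals {(ρ(A_a), ρ(A_o)), (−ρ(A_a), −ρ(A_o))}. (b) If the spectrum of at least one of A_a, A_o is not symmetric about the origin, then Λ₂ equals the singleton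 {(ρ(A_a), ρ(A_o))}, which coincides with Λ₁ := {(λ,μ) : λ = max σ(A_a), μ = max σ(A_o)}. -/
open Matrix Polynomial

lemma charpoly_conj_orth {n : Type*} [Fintype n] [DecidableEq n] {R : Type*} [CommRing R]
    (Q A : Matrix n n R) (h1 : Q * Qᵀ = 1) :
    (Q * A * Qᵀ).charpoly = A.charpoly := by
  have h1' : (Q.map C) * (Qᵀ.map C) = 1 := by
    rw [← Matrix.map_mul, h1]; simp [Matrix.map_one]
  have key : charmatrix (Q * A * Qᵀ) = (Q.map C) * charmatrix A * (Qᵀ.map C) := by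
    rw [charmatrix, charmatrix, Matrix.mul_sub, Matrix.sub_mul]
    congr 1
    · rw [mul_assoc, scalar_commute (X : R[X]) (fun r => Commute.all _ _) _, ← mul_assoc, h1']
      simp
    · simp only [RingHom.mapMatrix_apply]
      rw [← Matrix.map_mul, ← Matrix.map_mul]
  rw [Matrix.charpoly, key, det_mul, det_mul, mul_comm ((Q.map C).det), mul_assoc,
    ← det_mul, h1', det_one, mul_one, Matrix.charpoly]

lemma charpoly_diag {n : Type*} [Fintype n] [DecidableEq n] {R : Type*} [CommRing R]
    (d : n → R) : (diagonal d).charpoly = ∏ i, (X - C (d i)) := by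
  have : charmatrix (diagonal d) = diagonal (fun i => X - C (d i)) := by
    ext i j
    by_cases h : i = j
    · subst h; simp
    · simp [h, diagonal_apply_ne _ h]
  rw [Matrix.charpoly, this, det_diagonal]

lemma roots_charpoly_neg {N : ℕ} (M : Matrix (Fin N) (Fin N) ℂ) :
    ((-M).charpoly).roots = (M.charpoly.roots).map (fun z => -z) := by
  classical
  set q := M.charpoly with hq
  have hmon : q.Monic := M.charpoly_monic
  have hsplit : q.Splits := IsAlgClosed.splits q
  have hcard : q.roots.card = N := by
    rw [(splits_iff_card_roots).mp hsplit, hq, Matrix.charpoly_natDegree_eq_dim]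
    simp
  have hprod : q = (q.roots.map (fun r => X - C r)).prod :=
    (hsplit.eq_prod_roots_of_monic hmon)
  -- the comp identity
  have hcomp : (-M).charpoly = (-1 : ℂ[X]) ^ N * (aeval (-X : ℂ[X]) q) := by
    have hmap : (aeval (-X : ℂ[X])).toRingHom.mapMatrix (charmatrix M) = -(charmatrix (-M)) := by
      ext i j
      by_cases h : i = j
      · subst h; simp [charmatrix_apply_eq, Matrix.neg_apply]; ring
      · simp [charmatrix_apply_ne _ _ _ h, Matrix.neg_apply, h]
    have := (aeval (-X : ℂ[X])).toRingHom.map_det (charmatrix M)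
    rw [hmap, Matrix.det_neg] at this
    have h2 : aeval (-X : ℂ[X]) q = (-1:ℂ[X]) ^ N * (charmatrix (-M)).det := by
      simp at this; exact this
    rw [Matrix.charpoly, h2, ← mul_assoc, ← mul_pow]
    simp
  have haq : aeval (-X : ℂ[X]) q = (-1:ℂ[X])^N * ((q.roots.map (fun z => -z)).map
      (fun r => X - C r)).prod := by
    conv_lhs => rw [hprod]
    rw [map_multiset_prod]
    rw [Multiset.map_map, Multiset.map_map]
    have : ∀ r : ℂ, (aeval (-X : ℂ[X])) (X - C r) = (-1:ℂ[X]) * (X - C (-r)) := by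
      intro r; simp; ring
    rw [show (⇑(aeval (-X : ℂ[X])) ∘ fun r => X - C r) = (fun r => (-1:ℂ[X]) * (X - C (-r))) from funext fun r => this r]
    rw [Multiset.prod_map_mul]
    simp [hcard, Multiset.map_map, Multiset.map_const', Multiset.prod_replicate, Function.comp]
  rw [hcomp, haq, ← mul_assoc, ← mul_pow]
  simp only [neg_mul_neg, one_mul, one_pow]
  rw [roots_multiset_prod_X_sub_C]

variable {N : ℕ} {B : Matrix (Fin N) (Fin N) ℝ}

lemma isHermitian_of_isSymm (hs : B.IsSymm) : B.IsHermitian := by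
  rw [Matrix.IsHermitian, conjTranspose_eq_transpose_of_trivial]; exact hs

lemma unit_mul (hH : B.IsHermitian) :
    (hH.eigenvectorUnitary : Matrix (Fin N) (Fin N) ℝ) *
      (hH.eigenvectorUnitary : Matrix (Fin N) (Fin N) ℝ)ᵀ = 1 := by
  rw [← conjTranspose_eq_transpose_of_trivial]
  exact Matrix.mem_unitaryGroup_iff.mp hH.eigenvectorUnitary.2

lemma spectral' (hH : B.IsHermitian) :
    B = (hH.eigenvectorUnitary : Matrix (Fin N) (Fin N) ℝ) * diagonal hH.eigenvalues *
      (hH.eigenvectorUnitary : Matrix (Fin N) (Fin N) ℝ)ᵀ := by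
  conv_lhs => rw [hH.spectral_theorem]
  rw [show diagonal (RCLike.ofReal ∘ hH.eigenvalues) = diagonal hH.eigenvalues by
    simp [RCLike.ofReal_real_eq_id]]
  rw [Unitary.conjStarAlgAut_apply, Matrix.star_eq_conjTranspose, conjTranspose_eq_transpose_of_trivial]

lemma charpoly_eq_prod (hH : B.IsHermitian) :
    B.charpoly = ∏ i, (X - C (hH.eigenvalues i)) := by
  conv_lhs => rw [spectral' hH]
  rw [charpoly_conj_orth _ _ (unit_mul hH), charpoly_diag]

lemma spectrumM_eq (hH : B.IsHermitian) :
    spectrumM B = Finset.univ.val.map (fun i => ((hH.eigenvalues i : ℝ) : ℂ)) := by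
  have hmap : B.map Complex.ofReal = B.map (Complex.ofRealHom : ℝ →+* ℂ) := rfl
  rw [spectrumM, hmap, Matrix.charpoly_map, charpoly_eq_prod hH, Polynomial.map_prod]
  simp only [Polynomial.map_sub, Polynomial.map_X, Polynomial.map_C, Complex.ofRealHom_eq_coe]
  rw [Finset.prod_eq_multiset_prod]
  rw [show (Multiset.map (fun i => X - C ((hH.eigenvalues i : ℝ) : ℂ)) Finset.univ.val)
    = (Multiset.map (fun i => ((hH.eigenvalues i : ℝ):ℂ)) Finset.univ.val).map
        (fun r => X - C r) by rw [Multiset.map_map]; rfl]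
  rw [roots_multiset_prod_X_sub_C]

lemma psd_shift (hH : B.IsHermitian) {M : ℝ} (hM : ∀ i, hH.eigenvalues i ≤ M) :
    PosSemidef (M • (1 : Matrix (Fin N) (Fin N) ℝ) - B) := by
  set U := (hH.eigenvectorUnitary : Matrix (Fin N) (Fin N) ℝ) with hU
  have h1 : U * Uᵀ = 1 := unit_mul hH
  have key : M • (1 : Matrix (Fin N) (Fin N) ℝ) - B
      = U * diagonal (fun i => M - hH.eigenvalues i) * Uᵀ := by
    conv_lhs => rw [spectral' hH]
    rw [show diagonal (fun i => M - hH.eigenvalues i)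
        = M • (1 : Matrix (Fin N) (Fin N) ℝ) - diagonal hH.eigenvalues by
      rw [smul_one_eq_diagonal, diagonal_sub]]
    rw [Matrix.mul_sub, Matrix.sub_mul]
    congr 1
    rw [Matrix.mul_smul, Matrix.mul_one, Matrix.smul_mul, h1]
  rw [key, show Uᵀ = Uᴴ from (conjTranspose_eq_transpose_of_trivial U).symm]
  exact (posSemidef_diagonal_iff.mpr fun i => sub_nonneg.mpr (hM i)).mul_mul_conjTranspose_same U

lemma rayleigh_le (hH : B.IsHermitian) {M : ℝ} (hM : ∀ i, hH.eigenvalues i ≤ M)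
    (x : Fin N → ℝ) : x ⬝ᵥ (B *ᵥ x) ≤ M * (x ⬝ᵥ x) := by
  have h := (psd_shift hH hM).dotProduct_mulVec_nonneg x
  rw [star_trivial, Matrix.sub_mulVec, Matrix.smul_mulVec, Matrix.one_mulVec,
    dotProduct_sub, dotProduct_smul] at h
  simpa [smul_eq_mul] using sub_nonneg.mp h

lemma rayleigh_eq (hH : B.IsHermitian) {M : ℝ} (hM : ∀ i, hH.eigenvalues i ≤ M)
    (x : Fin N → ℝ) (h : x ⬝ᵥ (B *ᵥ x) = M * (x ⬝ᵥ x)) : B *ᵥ x = M • x := by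
  have h0 : star x ⬝ᵥ ((M • (1 : Matrix (Fin N) (Fin N) ℝ) - B) *ᵥ x) = 0 := by
    rw [star_trivial, Matrix.sub_mulVec, Matrix.smul_mulVec, Matrix.one_mulVec,
      dotProduct_sub, dotProduct_smul, h, smul_eq_mul, sub_self]
  have := ((psd_shift hH hM).dotProduct_mulVec_zero_iff x).mp h0
  rw [Matrix.sub_mulVec, Matrix.smul_mulVec, Matrix.one_mulVec, sub_eq_zero] at this
  exact this.symm

lemma quad_abs_le (hnn : ∀ i j, 0 ≤ B i j) (v : Fin N → ℝ) :
    |v ⬝ᵥ (B *ᵥ v)| ≤ (fun j => |v j|) ⬝ᵥ (B *ᵥ (fun j => |v j|)) := by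
  simp only [dotProduct, mulVec, dotProduct]
  calc |∑ j, v j * ∑ l, B j l * v l| ≤ ∑ j, |v j * ∑ l, B j l * v l| :=
        Finset.abs_sum_le_sum_abs _ _
    _ ≤ ∑ j, |v j| * ∑ l, B j l * |v l| := by
        apply Finset.sum_le_sum; intro j _
        rw [abs_mul]
        refine mul_le_mul_of_nonneg_left ?_ (abs_nonneg _)
        calc |∑ l, B j l * v l| ≤ ∑ l, |B j l * v l| := Finset.abs_sum_le_sum_abs _ _
          _ = ∑ l, B j l * |v l| := by
              refine Finset.sum_congr rfl fun l _ => ?_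
              rw [abs_mul, abs_of_nonneg (hnn j l)]

lemma abs_dot_self (v : Fin N → ℝ) : (fun j => |v j|) ⬝ᵥ (fun j => |v j|) = v ⬝ᵥ v := by
  simp only [dotProduct]
  exact Finset.sum_congr rfl fun j _ => abs_mul_abs_self (v j)

lemma eig_abs_le (hH : B.IsHermitian) (hnn : ∀ i j, 0 ≤ B i j) {M : ℝ}
    (hM : ∀ i, hH.eigenvalues i ≤ M) (i : Fin N) : |hH.eigenvalues i| ≤ M := by
  set v : Fin N → ℝ := ⇑(hH.eigenvectorBasis i) with hv
  have hBv : B *ᵥ v = hH.eigenvalues i • v := hH.mulVec_eigenvectorBasis i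
  have hvne : v ≠ 0 := by
    intro h
    exact hH.eigenvectorBasis.orthonormal.ne_zero i (by ext j; exact congrFun h j)
  have hvv : 0 < v ⬝ᵥ v := by
    have hne : v ⬝ᵥ v ≠ 0 := fun h => hvne (dotProduct_self_eq_zero.mp h)
    have hge : 0 ≤ v ⬝ᵥ v := by
      simp only [dotProduct]
      exact Finset.sum_nonneg fun j _ => mul_self_nonneg _
    exact hge.lt_of_ne (Ne.symm hne)
  have key : |hH.eigenvalues i| * (v ⬝ᵥ v) ≤ M * (v ⬝ᵥ v) := by
    calc |hH.eigenvalues i| * (v ⬝ᵥ v) = |hH.eigenvalues i * (v ⬝ᵥ v)| := by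
          rw [abs_mul, abs_of_nonneg hvv.le]
      _ = |v ⬝ᵥ (B *ᵥ v)| := by rw [hBv, dotProduct_smul, smul_eq_mul]
      _ ≤ (fun j => |v j|) ⬝ᵥ (B *ᵥ (fun j => |v j|)) := quad_abs_le hnn v
      _ ≤ M * ((fun j => |v j|) ⬝ᵥ (fun j => |v j|)) := rayleigh_le hH hM _
      _ = M * (v ⬝ᵥ v) := by rw [abs_dot_self]
  exact le_of_mul_le_mul_right key hvv

lemma dot_self_pos {v : Fin N → ℝ} (hv : v ≠ 0) : 0 < v ⬝ᵥ v := by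
  have hne : v ⬝ᵥ v ≠ 0 := fun h => hv (dotProduct_self_eq_zero.mp h)
  have hge : 0 ≤ v ⬝ᵥ v := by
    simp only [dotProduct]
    exact Finset.sum_nonneg fun j _ => mul_self_nonneg _
  exact hge.lt_of_ne (Ne.symm hne)

lemma pow_entries_nonneg (hnn : ∀ i j, 0 ≤ B i j) (k : ℕ) : ∀ i j, 0 ≤ (B ^ k) i j := by
  induction k with
  | zero => intro i j; by_cases h : i = j <;> simp [h, Matrix.one_apply]
  | succ k ih =>
      intro i j
      rw [pow_succ, Matrix.mul_apply]
      exact Finset.sum_nonneg fun l _ => mul_nonneg (ih i l) (hnn l j)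

lemma pow_mulVec_eig {u : Fin N → ℝ} {M : ℝ} (hBu : B *ᵥ u = M • u) (k : ℕ) :
    (B ^ k) *ᵥ u = M ^ k • u := by
  induction k with
  | zero => simp
  | succ k ih =>
      rw [pow_succ', ← Matrix.mulVec_mulVec, ih, Matrix.mulVec_smul, hBu, smul_smul, pow_succ',
        mul_comm]

lemma B_ne_zero (hN : 0 < N) (hirr : IrreducibleNonneg B) : B ≠ 0 := by
  obtain ⟨k, hk, hpos⟩ := hirr.2 ⟨0, hN⟩ ⟨0, hN⟩
  intro h
  rw [h, zero_pow hk.ne'] at hpos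
  simp at hpos

lemma M_pos (hN : 0 < N) (hH : B.IsHermitian) (hirr : IrreducibleNonneg B) {M : ℝ}
    (hM : ∀ i, hH.eigenvalues i ≤ M) (habs : ∀ i, |hH.eigenvalues i| ≤ M) : 0 < M := by
  by_contra h
  push_neg at h
  have hev : hH.eigenvalues = fun _ => 0 := by
    funext i
    have := (habs i).trans h
    have := abs_nonneg (hH.eigenvalues i)
    have : |hH.eigenvalues i| = 0 := le_antisymm (by linarith) (by linarith)
    exact abs_eq_zero.mp this
  apply B_ne_zero hN hirr
  conv_lhs => rw [spectral' hH]
  rw [hev]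
  simp [show (diagonal fun _ : Fin N => (0:ℝ)) = 0 from diagonal_zero]

lemma charpoly_neg_eq (hH : B.IsHermitian) (hirr : IrreducibleNonneg B) {M : ℝ}
    (hM : ∀ i, hH.eigenvalues i ≤ M) (hMpos : 0 < M)
    (hex : ∃ i, hH.eigenvalues i = -M) :
    (-B).charpoly = B.charpoly := by
  classical
  obtain ⟨i, hi⟩ := hex
  have hnn := hirr.1
  set v : Fin N → ℝ := ⇑(hH.eigenvectorBasis i) with hvdef
  have hBv : B *ᵥ v = (-M) • v := by
    have := hH.mulVec_eigenvectorBasis i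
    rwa [hi] at this
  have hvne : v ≠ 0 := by
    intro h
    exact hH.eigenvectorBasis.orthonormal.ne_zero i (by ext j; exact congrFun h j)
  have hvv : 0 < v ⬝ᵥ v := dot_self_pos hvne
  set u : Fin N → ℝ := fun j => |v j| with hudef
  have hu0 : ∀ j, 0 ≤ u j := fun j => abs_nonneg _
  have hune : u ≠ 0 := by
    intro h
    apply hvne
    funext j
    have := congrFun h j
    simpa [hudef, abs_eq_zero] using this
  have huu : u ⬝ᵥ u = v ⬝ᵥ v := abs_dot_self v
  -- equality in Rayleigh for u
  have heq : u ⬝ᵥ (B *ᵥ u) = M * (u ⬝ᵥ u) := by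
    have hle : u ⬝ᵥ (B *ᵥ u) ≤ M * (u ⬝ᵥ u) := rayleigh_le hH hM u
    have hge : M * (u ⬝ᵥ u) ≤ u ⬝ᵥ (B *ᵥ u) := by
      have h1 : |v ⬝ᵥ (B *ᵥ v)| ≤ u ⬝ᵥ (B *ᵥ u) := quad_abs_le hnn v
      have h2 : v ⬝ᵥ (B *ᵥ v) = -M * (v ⬝ᵥ v) := by
        rw [hBv, dotProduct_smul]; simp [smul_eq_mul]
      have h3 : |(-M) * (v ⬝ᵥ v)| = M * (v ⬝ᵥ v) := by
        rw [abs_mul, abs_neg, abs_of_nonneg hMpos.le, abs_of_nonneg hvv.le]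
      rw [h2, h3] at h1
      rw [huu]
      exact h1
    linarith
  have hBu : B *ᵥ u = M • u := rayleigh_eq hH hM u heq
  -- positivity of u
  have hupos : ∀ j, 0 < u j := by
    intro j'
    obtain ⟨j, hj⟩ := Function.ne_iff.mp hune
    have hju : 0 < u j := (hu0 j).lt_of_ne (Ne.symm hj)
    obtain ⟨k, hk, hBk⟩ := hirr.2 j' j
    have hpow : (B ^ k) *ᵥ u = M ^ k • u := pow_mulVec_eig hBu k
    have h1 : (B ^ k *ᵥ u) j' = M ^ k * u j' := by rw [hpow]; simp [smul_eq_mul]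
    have h2 : 0 < (B ^ k *ᵥ u) j' := by
      rw [Matrix.mulVec, dotProduct]
      have : ∀ l ∈ Finset.univ, 0 ≤ (B ^ k) j' l * u l :=
        fun l _ => mul_nonneg (pow_entries_nonneg hnn k j' l) (hu0 l)
      calc (0:ℝ) < (B ^ k) j' j * u j := mul_pos hBk hju
        _ ≤ ∑ l, (B ^ k) j' l * u l := Finset.single_le_sum this (Finset.mem_univ j)
    rw [h1] at h2
    nlinarith [pow_pos hMpos k, hu0 j']
  -- signs
  set s : Fin N → ℝ := fun j => if v j < 0 then (-1:ℝ) else 1 with hsdef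
  have hs2 : ∀ j, s j * s j = 1 := by
    intro j; by_cases h : v j < 0 <;> simp [hsdef, h]
  have hsv : ∀ j, v j = s j * u j := by
    intro j
    by_cases h : v j < 0
    · simp [hsdef, hudef, h, abs_of_neg h]
    · simp [hsdef, hudef, h, abs_of_nonneg (not_lt.mp h)]
  have hkey : ∀ i' j, s i' * B i' j * s j = - B i' j := by
    intro i' j
    have hrow_v : ∑ l, B i' l * (s l * u l) = -M * (s i' * u i') := by
      have h := congrFun hBv i'
      simp only [Matrix.mulVec, dotProduct, Pi.smul_apply, smul_eq_mul] at h
      calc ∑ l, B i' l * (s l * u l) = ∑ l, B i' l * v l :=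
            Finset.sum_congr rfl fun l _ => by rw [← hsv l]
        _ = -M * v i' := h
        _ = -M * (s i' * u i') := by rw [← hsv i']
    have hrow_u : ∑ l, B i' l * u l = M * u i' := by
      have := congrFun hBu i'
      simpa [Matrix.mulVec, dotProduct, smul_eq_mul] using this
    have hzero : ∑ l, B i' l * u l * (1 + s i' * s l) = 0 := by
      have hexp : ∑ l, B i' l * u l * (1 + s i' * s l)
          = (∑ l, B i' l * u l) + s i' * ∑ l, B i' l * (s l * u l) := by
        rw [Finset.mul_sum, ← Finset.sum_add_distrib]
        exact Finset.sum_congr rfl fun l _ => by ring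
      rw [hexp, hrow_u, hrow_v]
      linear_combination (-(M * u i')) * hs2 i'
    have hterm : B i' j * u j * (1 + s i' * s j) = 0 := by
      have hnonneg : ∀ l ∈ Finset.univ, 0 ≤ B i' l * u l * (1 + s i' * s l) := by
        intro l _
        apply mul_nonneg (mul_nonneg (hnn i' l) (hu0 l))
        have : s i' * s l = 1 ∨ s i' * s l = -1 := by
          by_cases h1 : v i' < 0 <;> by_cases h2 : v l < 0 <;> simp [hsdef, h1, h2]
        rcases this with h | h <;> rw [h] <;> norm_num
      exact (Finset.sum_eq_zero_iff_of_nonneg hnonneg).mp hzero j (Finset.mem_univ j)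
    have hBterm : B i' j * (1 + s i' * s j) = 0 := by
      have huj := (hupos j).ne'
      rcases mul_eq_zero.mp hterm with h | h
      · rcases mul_eq_zero.mp h with h' | h'
        · rw [h', zero_mul]
        · exact absurd h' huj
      · rw [h, mul_zero]
    linear_combination hBterm
  set D : Matrix (Fin N) (Fin N) ℝ := diagonal s with hD
  have hDBD : D * B * D = -B := by
    ext i' j
    rw [Matrix.mul_diagonal, Matrix.diagonal_mul, Matrix.neg_apply]
    exact hkey i' j
  have hDD : D * Dᵀ = 1 := by
    rw [hD, diagonal_transpose, diagonal_mul_diagonal]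
    rw [show (fun j => s j * s j) = fun _ => (1:ℝ) from funext hs2, diagonal_one]
  have hDt : D * B * D = D * B * Dᵀ := by rw [hD, diagonal_transpose]
  rw [← hDBD, hDt, charpoly_conj_orth D B hDD]

lemma spectrumM_charpoly {N : ℕ} (A : Matrix (Fin N) (Fin N) ℝ) :
    spectrumM A = ((A.charpoly).map (Complex.ofRealHom : ℝ →+* ℂ)).roots := by
  rw [spectrumM, show A.map Complex.ofReal = A.map (Complex.ofRealHom : ℝ →+* ℂ) from rfl,
    Matrix.charpoly_map]

lemma master {N : ℕ} (hN : 0 < N) (A : Matrix (Fin N) (Fin N) ℝ)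
    (hs : A.IsSymm) (hc : ClassII A) :
    ∃ M : ℝ, 0 < M ∧ specRadius A = M ∧ maxRe A = M ∧
      ((M : ℂ)) ∈ spectrumM A ∧
      (∀ z ∈ spectrumM A, ∃ t : ℝ, z = (t : ℂ) ∧ |t| ≤ M) ∧
      ((((-M : ℝ) : ℂ)) ∈ spectrumM A → spectrumM A = (spectrumM A).map (fun z => -z)) := by
  classical
  obtain ⟨Θ, P, ⟨θ, hθ, hΘeq⟩, ⟨σ, hPeq⟩, hB⟩ := hc
  set B := Θ * P * A * Pᵀ * Θ with hBdef
  have hΘt : Θᵀ = Θ := by rw [hΘeq, diagonal_transpose]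
  have hΘΘ : Θ * Θ = 1 := by
    rw [hΘeq, diagonal_mul_diagonal]
    rw [show (fun i => θ i * θ i) = fun _ => (1:ℝ) from funext fun i => by
      rcases hθ i with h | h <;> rw [h] <;> norm_num, diagonal_one]
  have hPP : P * Pᵀ = 1 := by
    ext i j
    rw [Matrix.mul_apply, Matrix.one_apply]
    simp only [hPeq, Matrix.transpose_apply, Matrix.of_apply]
    rw [Finset.sum_eq_single (σ.symm i)]
    · by_cases h : i = j <;> simp [Equiv.apply_symm_apply, h]
    · intro k _ hk
      have : σ k ≠ i := fun h => hk (by rw [← h]; simp)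
      simp [this]
    · simp
  have hQ : (Θ * P) * (Θ * P)ᵀ = 1 := by
    rw [Matrix.transpose_mul, hΘt]
    calc Θ * P * (Pᵀ * Θ) = Θ * (P * Pᵀ) * Θ := by
          rw [Matrix.mul_assoc, Matrix.mul_assoc, Matrix.mul_assoc]
      _ = 1 := by rw [hPP, Matrix.mul_one, hΘΘ]
  have hBQ : B = (Θ * P) * A * (Θ * P)ᵀ := by
    rw [hBdef, Matrix.transpose_mul, hΘt]
    noncomm_ring
  have hcharB : B.charpoly = A.charpoly := by
    rw [hBQ, charpoly_conj_orth _ _ hQ]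
  have hBsym : B.IsSymm := by
    rw [Matrix.IsSymm, hBQ]
    generalize Θ * P = Q
    rw [Matrix.transpose_mul, Matrix.transpose_mul, Matrix.transpose_transpose, hs.eq,
      Matrix.mul_assoc]
  have hH : B.IsHermitian := isHermitian_of_isSymm hBsym
  have hne : (Finset.univ : Finset (Fin N)).Nonempty := ⟨⟨0, hN⟩, Finset.mem_univ _⟩
  set M : ℝ := Finset.univ.sup' hne hH.eigenvalues with hMdef
  have hM : ∀ i, hH.eigenvalues i ≤ M := fun i => Finset.le_sup' _ (Finset.mem_univ i)
  obtain ⟨iM, _, hiM⟩ := Finset.exists_mem_eq_sup' hne hH.eigenvalues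
  have habs : ∀ i, |hH.eigenvalues i| ≤ M := eig_abs_le hH hB.1 hM
  have hMpos : 0 < M := M_pos hN hH hB hM habs
  have hspecAB : spectrumM A = spectrumM B := by
    rw [spectrumM_charpoly, spectrumM_charpoly, hcharB]
  have hspec : spectrumM A = Finset.univ.val.map (fun i => ((hH.eigenvalues i : ℝ) : ℂ)) := by
    rw [hspecAB, spectrumM_eq hH]
  have hmem : ∀ z, z ∈ spectrumM A ↔ ∃ i, ((hH.eigenvalues i : ℝ) : ℂ) = z := by
    intro z
    rw [hspec, Multiset.mem_map]
    constructor
    · rintro ⟨i, _, h⟩; exact ⟨i, h⟩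
    · rintro ⟨i, h⟩; exact ⟨i, Finset.mem_univ_val _, h⟩
  have hMmem : ((M : ℝ) : ℂ) ∈ spectrumM A := (hmem _).mpr ⟨iM, by rw [← hiM]⟩
  have hreal : ∀ z ∈ spectrumM A, ∃ t : ℝ, z = (t : ℂ) ∧ |t| ≤ M := by
    intro z hz
    obtain ⟨i, hi⟩ := (hmem z).mp hz
    exact ⟨hH.eigenvalues i, hi.symm, habs i⟩
  refine ⟨M, hMpos, ?_, ?_, hMmem, hreal, ?_⟩
  · -- specRadius
    apply IsGreatest.csSup_eq
    constructor
    · exact ⟨(M : ℂ), hMmem, by rw [Complex.norm_real, Real.norm_eq_abs, abs_of_pos hMpos]⟩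
    · rintro r ⟨z, hz, rfl⟩
      obtain ⟨t, rfl, ht⟩ := hreal z hz
      rwa [Complex.norm_real, Real.norm_eq_abs]
  · -- maxRe
    apply IsGreatest.csSup_eq
    constructor
    · exact ⟨(M : ℂ), hMmem, by rw [Complex.ofReal_re]⟩
    · rintro r ⟨z, hz, rfl⟩
      obtain ⟨t, rfl, ht⟩ := hreal z hz
      rw [Complex.ofReal_re]
      exact le_trans (le_abs_self t) ht
  · -- symmetry from -M
    intro hneg
    obtain ⟨i, hi⟩ := (hmem _).mp hneg
    have hiev : hH.eigenvalues i = -M := by exact_mod_cast hi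
    have hcpneg : (-B).charpoly = B.charpoly := charpoly_neg_eq hH hB hM hMpos ⟨i, hiev⟩
    have hmapneg : (-B).map (Complex.ofRealHom : ℝ →+* ℂ) = -(B.map Complex.ofRealHom) := by
      ext i' j'
      simp [Matrix.map_apply]
    have h1 : spectrumM A = spectrumM (-B) := by
      rw [hspecAB, spectrumM_charpoly, spectrumM_charpoly, hcpneg]
    have h2 : spectrumM (-B) = (spectrumM B).map (fun z => -z) := by
      rw [spectrumM_charpoly, spectrumM_charpoly, ← Matrix.charpoly_map, ← Matrix.charpoly_map,
        hmapneg]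
      exact roots_charpoly_neg (B.map (Complex.ofRealHom : ℝ →+* ℂ))
    rw [hspecAB]
    rw [hspecAB] at h1
    exact h1.trans h2

theorem stmt9 {Na No : ℕ} (hNa : 0 < Na) (hNo : 0 < No)
    (Aa : Matrix (Fin Na) (Fin Na) ℝ) (Ao : Matrix (Fin No) (Fin No) ℝ)
    (hsa : Aa.IsSymm) (hso : Ao.IsSymm)
    (ha : ClassII Aa) (ho : ClassII Ao) :
    -- (a) spectra of both matrices symmetric about the origin
    ((spectrumM Aa = (spectrumM Aa).map (fun z => -z) ∧
      spectrumM Ao = (spectrumM Ao).map (fun z => -z)) →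
      {p : ℂ × ℂ | p.1 ∈ spectrumM Aa ∧ p.2 ∈ spectrumM Ao ∧
          (p.1 * p.2).re = maxReProd Aa Ao} =
        {(((specRadius Aa : ℂ)), ((specRadius Ao : ℂ))),
          ((-(specRadius Aa : ℂ)), (-(specRadius Ao : ℂ)))}) ∧
    -- (b) at least one spectrum not symmetric about the origin
    ((spectrumM Aa ≠ (spectrumM Aa).map (fun z => -z) ∨
      spectrumM Ao ≠ (spectrumM Ao).map (fun z => -z)) →
      {p : ℂ × ℂ | p.1 ∈ spectrumM Aa ∧ p.2 ∈ spectrumM Ao ∧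
          (p.1 * p.2).re = maxReProd Aa Ao} =
        {(((specRadius Aa : ℂ)), ((specRadius Ao : ℂ)))} ∧
      {p : ℂ × ℂ | p.1 ∈ spectrumM Aa ∧ p.2 ∈ spectrumM Ao ∧
          (p.1 * p.2).re = maxReProd Aa Ao} =
        {p : ℂ × ℂ | p.1 ∈ spectrumM Aa ∧ p.2 ∈ spectrumM Ao ∧
          p.1 = ((maxRe Aa : ℂ)) ∧ p.2 = ((maxRe Ao : ℂ))}) := by
  obtain ⟨Ma, hMa0, hra, hmra, hMamem, hreala, hsyma⟩ := master hNa Aa hsa ha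
  obtain ⟨Mo, hMo0, hro, hmro, hMomem, hrealo, hsymo⟩ := master hNo Ao hso ho
  have hprod : maxReProd Aa Ao = Ma * Mo := by
    apply IsGreatest.csSup_eq
    constructor
    · refine ⟨(Ma : ℂ), hMamem, (Mo : ℂ), hMomem, ?_⟩
      rw [← Complex.ofReal_mul, Complex.ofReal_re]
    · rintro r ⟨z, hz, w, hw, rfl⟩
      obtain ⟨t, rfl, ht⟩ := hreala z hz
      obtain ⟨u, rfl, hu⟩ := hrealo w hw
      rw [← Complex.ofReal_mul, Complex.ofReal_re]
      calc t * u ≤ |t * u| := le_abs_self _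
        _ = |t| * |u| := abs_mul t u
        _ ≤ Ma * Mo := mul_le_mul ht hu (abs_nonneg u) hMa0.le
  -- characterization of maximizing pairs
  have hchar : ∀ p : ℂ × ℂ, (p.1 ∈ spectrumM Aa ∧ p.2 ∈ spectrumM Ao ∧
      (p.1 * p.2).re = maxReProd Aa Ao) →
      (p.1 = (Ma : ℂ) ∧ p.2 = (Mo : ℂ)) ∨ (p.1 = -(Ma : ℂ) ∧ p.2 = -(Mo : ℂ)) := by
    rintro p ⟨h1, h2, h3⟩
    obtain ⟨t, hpt, ht⟩ := hreala p.1 h1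
    obtain ⟨u, hpu, hu⟩ := hrealo p.2 h2
    rw [hprod, hpt, hpu, ← Complex.ofReal_mul, Complex.ofReal_re] at h3
    have htu : t * u = Ma * Mo := h3
    have htabs := abs_le.mp ht
    have huabs := abs_le.mp hu
    rcases lt_trichotomy t 0 with hlt | heq | hgt
    · right
      have hu0 : u < 0 := by nlinarith
      have hteq : t = -Ma := by
        by_contra hne
        have : -Ma < t := lt_of_le_of_ne htabs.1 (Ne.symm hne)
        nlinarith
      have hueq : u = -Mo := by nlinarith [hteq]
      rw [hpt, hpu, hteq, hueq]
      constructor <;> push_cast <;> ring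
    · exfalso; rw [heq] at htu; nlinarith
    · left
      have hu0 : 0 < u := by nlinarith
      have hteq : t = Ma := by
        by_contra hne
        have : t < Ma := lt_of_le_of_ne htabs.2 hne
        nlinarith
      have hueq : u = Mo := by nlinarith [hteq]
      rw [hpt, hpu, hteq, hueq]
      exact ⟨rfl, rfl⟩
  have hmemMM : ((Ma : ℂ), (Mo : ℂ)) ∈ {p : ℂ × ℂ | p.1 ∈ spectrumM Aa ∧ p.2 ∈ spectrumM Ao ∧
      (p.1 * p.2).re = maxReProd Aa Ao} := by
    refine ⟨hMamem, hMomem, ?_⟩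
    rw [hprod, ← Complex.ofReal_mul, Complex.ofReal_re]
  constructor
  · -- part (a)
    rintro ⟨hsa', hso'⟩
    have hnegA : -(Ma : ℂ) ∈ spectrumM Aa := by
      rw [hsa', Multiset.mem_map]
      exact ⟨(Ma : ℂ), hMamem, rfl⟩
    have hnegO : -(Mo : ℂ) ∈ spectrumM Ao := by
      rw [hso', Multiset.mem_map]
      exact ⟨(Mo : ℂ), hMomem, rfl⟩
    rw [hra, hro]
    ext p
    simp only [Set.mem_setOf_eq, Set.mem_insert_iff, Set.mem_singleton_iff]
    constructor
    · intro hp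
      rcases hchar p hp with ⟨h1, h2⟩ | ⟨h1, h2⟩
      · left; rw [Prod.ext_iff]; exact ⟨h1, h2⟩
      · right; rw [Prod.ext_iff]; exact ⟨h1, h2⟩
    · rintro (rfl | rfl)
      · exact hmemMM
      · refine ⟨hnegA, hnegO, ?_⟩
        rw [hprod]
        have : (-(Ma:ℂ)) * (-(Mo:ℂ)) = ((Ma * Mo : ℝ) : ℂ) := by push_cast; ring
        rw [this, Complex.ofReal_re]
  · -- part (b)
    intro hb
    have hnoneg : ∀ p : ℂ × ℂ, (p.1 ∈ spectrumM Aa ∧ p.2 ∈ spectrumM Ao ∧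
        (p.1 * p.2).re = maxReProd Aa Ao) → p = ((Ma : ℂ), (Mo : ℂ)) := by
      intro p hp
      rcases hchar p hp with ⟨h1, h2⟩ | ⟨h1, h2⟩
      · rw [Prod.ext_iff]; exact ⟨h1, h2⟩
      · exfalso
        have hA : spectrumM Aa = (spectrumM Aa).map (fun z => -z) := by
          apply hsyma
          rw [show (((-Ma : ℝ) : ℂ)) = -(Ma : ℂ) by push_cast; ring, ← h1]
          exact hp.1
        have hO : spectrumM Ao = (spectrumM Ao).map (fun z => -z) := by
          apply hsymo
          rw [show (((-Mo : ℝ) : ℂ)) = -(Mo : ℂ) by push_cast; ring, ← h2]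
          exact hp.2.1
        rcases hb with h | h
        · exact h hA
        · exact h hO
    have hset1 : {p : ℂ × ℂ | p.1 ∈ spectrumM Aa ∧ p.2 ∈ spectrumM Ao ∧
        (p.1 * p.2).re = maxReProd Aa Ao} = {((Ma : ℂ), (Mo : ℂ))} := by
      ext p
      simp only [Set.mem_setOf_eq, Set.mem_singleton_iff]
      constructor
      · exact hnoneg p
      · rintro rfl; exact hmemMM
    constructor
    · rw [hra, hro]; exact hset1
    · rw [hset1, hmra, hmro]
      ext p
      simp only [Set.mem_singleton_iff, Set.mem_setOf_eq]
      constructor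
      · rintro rfl; exact ⟨hMamem, hMomem, rfl, rfl⟩
      · rintro ⟨_, _, h1, h2⟩
        rw [Prod.ext_iff]; exact ⟨h1, h2⟩
end

section
/- Let A_a be a real N_a×N_a matrix, A_o a real N_o×N_o matrix, d > 0, α, β, γ, δ ≥ 0. Suppose λ ∈ σ(A_a) and μ ∈ σ(A_o) are real simple eigenvalues, K₀ := α + γλ + βμ + δλμ > 0, and for every pair (λ',μ') ∈ σ(A_a)×σ(A_o) with (λ',μ') ≠ (λ,μ) one has α + γ Re λ' + β Re μ' + δ Re(λ'μ') < K₀. Let u* := d/K₀ and J(u) := (−d + uα) I_{N_aN_o} + uγ (A_a ⊗ I_{N_o}) + uβ (I_{N_a} ⊗ A_o) + uδ (A_a ⊗ A_o). Then 0 is a simple eigenvalue of J(u*), the kernel of J(u*) is spanned by v_a ⊗ v_o where v_a, v_o are eigenvectors of A_a, A_o for λ, μ respectively, and every nonzero eigenvalue of J(u*) has strictly negative real part. -/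
open Matrix Polynomial

namespace Stmt14Aux

open Matrix Polynomial Module Kronecker

variable {K : Type*} [Field K]

/-! ### Basic charpoly facts -/

lemma eval_charpoly' {n : Type*} [Fintype n] [DecidableEq n] (M : Matrix n n K) (t : K) :
    M.charpoly.eval t = (t • (1 : Matrix n n K) - M).det := by
  have h : (M.charmatrix.map (Polynomial.evalRingHom t)) = t • (1 : Matrix n n K) - M := by
    ext i j
    by_cases hij : i = j
    · subst hij
      simp [charmatrix_apply_eq, Matrix.one_apply]
    · simp [charmatrix_apply_ne _ _ _ hij, Matrix.one_apply, hij]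
  calc M.charpoly.eval t = (Polynomial.evalRingHom t) M.charmatrix.det := rfl
    _ = ((M.charmatrix.map (Polynomial.evalRingHom t))).det := RingHom.map_det _ _
    _ = (t • (1 : Matrix n n K) - M).det := by rw [h]

lemma root_charpoly_of_eig {n : Type*} [Fintype n] [DecidableEq n] (M : Matrix n n K)
    (t : K) (v : n → K) (hv : v ≠ 0) (heig : M *ᵥ v = t • v) :
    t ∈ M.charpoly.roots := by
  rw [Polynomial.mem_roots (M.charpoly_monic.ne_zero)]
  show M.charpoly.eval t = 0
  rw [eval_charpoly', ← Matrix.exists_mulVec_eq_zero_iff]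
  exact ⟨v, hv, by rw [Matrix.sub_mulVec, Matrix.smul_mulVec, Matrix.one_mulVec, heig,
    sub_self]⟩

lemma charpoly_sub_smul_one {n : Type*} [Fintype n] [DecidableEq n] (M : Matrix n n K) (t : K) :
    (M - t • (1 : Matrix n n K)).charpoly = M.charpoly.comp (X + C t) := by
  have hcomp : ∀ p : K[X], p.comp (X + C t) = (Polynomial.aeval (X + C t)) p := fun p => by
    rw [Polynomial.aeval_def, Polynomial.eval₂_eq_eval_map, Polynomial.comp, Polynomial.eval_map]
    rfl
  have h : ((M.charmatrix.map (Polynomial.aeval (R := K) (X + C t) : K[X] →ₐ[K] K[X]))) =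
      (M - t • (1 : Matrix n n K)).charmatrix := by
    ext i j
    by_cases hij : i = j
    · subst hij
      simp [charmatrix_apply_eq, Matrix.one_apply]
      ring
    · simp [charmatrix_apply_ne _ _ _ hij, Matrix.one_apply, hij]
  rw [Matrix.charpoly, ← h, Matrix.charpoly, hcomp]
  exact (RingHom.map_det ((Polynomial.aeval (R := K) (X + C t)).toRingHom) M.charmatrix).symm

lemma mulVecLin_smul' {n : Type*} [Fintype n] (t : K) (M : Matrix n n K) :
    (t • M).mulVecLin = t • M.mulVecLin := by
  refine LinearMap.ext fun v => funext fun i => ?_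
  simp [Matrix.mulVecLin_apply, Matrix.smul_mulVec]

lemma mulVecLin_sub_smul_one {n : Type*} [Fintype n] [DecidableEq n] (M : Matrix n n K) (t : K) :
    (M - t • (1 : Matrix n n K)).mulVecLin = M.mulVecLin - t • (1 : Module.End K (n → K)) := by
  refine LinearMap.ext fun v => funext fun i => ?_
  simp [Matrix.mulVecLin_apply, Matrix.sub_mulVec, Matrix.smul_mulVec,
    Matrix.one_mulVec]

lemma mulVecLin_pow {n : Type*} [Fintype n] [DecidableEq n] (M : Matrix n n K) (k : ℕ) :
    (M ^ k).mulVecLin = M.mulVecLin ^ k := by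
  induction k with
  | zero =>
    rw [pow_zero, pow_zero, Matrix.mulVecLin_one]
    exact Module.End.one_eq_id.symm
  | succ k ih =>
    rw [pow_succ, Matrix.mulVecLin_mul, ih, ← Module.End.mul_eq_comp, ← pow_succ]

lemma pow_shift_mulVec {n : Type*} [Fintype n] [DecidableEq n] (M : Matrix n n K) (t : K)
    (k : ℕ) (v : n → K) :
    ((M.mulVecLin - t • (1 : Module.End K (n → K))) ^ k) v
      = ((M - t • (1 : Matrix n n K)) ^ k) *ᵥ v := by
  rw [← mulVecLin_sub_smul_one, ← mulVecLin_pow]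
  rfl

lemma finrank_maxGen_eq_rootMultiplicity {n : Type*} [Fintype n] [DecidableEq n]
    (M : Matrix n n K) (t : K) :
    Module.finrank K (Module.End.maxGenEigenspace M.mulVecLin t)
      = M.charpoly.rootMultiplicity t := by
  have h2 : Module.End.maxGenEigenspace M.mulVecLin t
      = Module.End.maxGenEigenspace (M - t • (1 : Matrix n n K)).mulVecLin 0 := by
    ext x
    rw [Module.End.mem_maxGenEigenspace, Module.End.mem_maxGenEigenspace]
    simp only [mulVecLin_sub_smul_one, zero_smul, sub_zero]
  rw [h2, LinearMap.finrank_maxGenEigenspace_zero_eq]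
  have h3 : LinearMap.charpoly ((M - t • (1 : Matrix n n K)).mulVecLin)
      = (M - t • (1 : Matrix n n K)).charpoly := by
    rw [← LinearMap.charpoly_toMatrix ((M - t • (1 : Matrix n n K)).mulVecLin)
      (Pi.basisFun K n)]
    congr 1
    rw [LinearMap.toMatrix_eq_toMatrix']
    rw [← Matrix.toLin'_apply']
    exact LinearMap.toMatrix'_toLin' _
  rw [h3, charpoly_sub_smul_one, Polynomial.rootMultiplicity_eq_natTrailingDegree]

/-! ### Restriction helpers -/

variable {V : Type*} [AddCommGroup V] [Module K V]

lemma restrict_one' {S : Submodule K V} :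
    (LinearMap.restrict (1 : Module.End K V) (fun x (hx : x ∈ S) => hx : ∀ x ∈ S, (1 : Module.End K V) x ∈ S)) = 1 := by
  ext x
  simp [LinearMap.restrict_apply]

lemma mapsTo_pow {S : Submodule K V} {f : Module.End K V}
    (hf : ∀ x ∈ S, f x ∈ S) (k : ℕ) : ∀ x ∈ S, (f ^ k) x ∈ S := by
  induction k with
  | zero => intro x hx; simpa using hx
  | succ k ih =>
    intro x hx
    rw [pow_succ']
    exact hf _ (ih x hx)

lemma restrict_mul' {S : Submodule K V} {f g : Module.End K V}
    (hf : ∀ x ∈ S, f x ∈ S) (hg : ∀ x ∈ S, g x ∈ S) :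
    LinearMap.restrict (f * g) (fun x hx => hf _ (hg x hx)) =
      LinearMap.restrict f hf * LinearMap.restrict g hg := by
  ext x
  simp [LinearMap.restrict_apply, Module.End.mul_apply]

lemma restrict_pow_apply {S : Submodule K V} {f : Module.End K V}
    (hf : ∀ x ∈ S, f x ∈ S) (k : ℕ) (x : S) :
    (((LinearMap.restrict f hf) ^ k) x : V) = (f ^ k) (x : V) := by
  induction k with
  | zero => simp
  | succ k ih =>
    rw [pow_succ', pow_succ', Module.End.mul_apply, Module.End.mul_apply,
      LinearMap.restrict_coe_apply, ih]

/-- Descend to an honest eigenvector. -/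
lemma descent (g : Module.End K V) :
    ∀ (k : ℕ) (x : V), x ≠ 0 → (g ^ k) x = 0 → ∃ y, y ≠ 0 ∧ g y = 0 := by
  intro k
  induction k with
  | zero => intro x hx h; exact absurd (by simpa using h) hx
  | succ k ih =>
    intro x hx h
    by_cases h' : (g ^ k) x = 0
    · exact ih x hx h'
    · refine ⟨(g ^ k) x, h', ?_⟩
      rw [← Module.End.mul_apply, ← pow_succ']
      exact h

lemma exists_eigenvector_of_maxGen_ne_bot {f : Module.End K V} {t : K}
    (h : Module.End.maxGenEigenspace f t ≠ ⊥) :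
    ∃ v : V, v ≠ 0 ∧ f v = t • v := by
  obtain ⟨x, hx, hx0⟩ := (Submodule.ne_bot_iff _).mp h
  obtain ⟨k, hk⟩ := (Module.End.mem_maxGenEigenspace _ _ _).mp hx
  obtain ⟨y, hy0, hy⟩ := descent (f - t • 1) k x hx0 hk
  refine ⟨y, hy0, ?_⟩
  have h2 : f y - t • y = 0 := by simpa using hy
  have := sub_eq_zero.mp h2
  simpa using this

/-! ### The key nilpotency argument -/

lemma maxGen_uniform_bound [FiniteDimensional K V] (f : Module.End K V) (t : K) :
    ∀ x ∈ Module.End.maxGenEigenspace f t,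
      ((f - t • (1 : Module.End K V)) ^ (Module.finrank K V)) x = 0 := by
  intro x hx
  rw [Module.End.maxGenEigenspace_eq_genEigenspace_finrank, Module.End.genEigenspace_nat] at hx
  simpa using hx

lemma core [FiniteDimensional K V]
    (P Q : Module.End K V) (hPQ : Commute P Q) (c g b e η lam' mu' : K)
    (hS : Module.End.maxGenEigenspace
        (c • (1 : Module.End K V) + g • P + b • Q + e • (P * Q)) η ⊓
      Module.End.maxGenEigenspace P lam' ⊓ Module.End.maxGenEigenspace Q mu' ≠ ⊥) :
    η = c + g * lam' + b * mu' + e * (lam' * mu') := by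
  set J : Module.End K V := c • (1 : Module.End K V) + g • P + b • Q + e • (P * Q) with hJdef
  set f : K := c + g * lam' + b * mu' + e * (lam' * mu') with hfdef
  set S : Submodule K V := Module.End.maxGenEigenspace J η ⊓
      Module.End.maxGenEigenspace P lam' ⊓ Module.End.maxGenEigenspace Q mu' with hSdef
  have hJP : Commute J P := by
    rw [hJdef]
    refine Commute.add_left (Commute.add_left (Commute.add_left ?_ ?_) ?_) ?_
    · exact (Commute.one_left P).smul_left c
    · exact (Commute.refl P).smul_left g
    · exact hPQ.symm.smul_left b
    · exact (((Commute.refl P).mul_left hPQ.symm)).smul_left e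
  have hJQ : Commute J Q := by
    rw [hJdef]
    refine Commute.add_left (Commute.add_left (Commute.add_left ?_ ?_) ?_) ?_
    · exact (Commute.one_left Q).smul_left c
    · exact hPQ.smul_left g
    · exact (Commute.refl Q).smul_left b
    · exact ((hPQ.mul_left (Commute.refl Q))).smul_left e
  -- S is invariant under J, P, Q
  have hinv : ∀ (T : Module.End K V), Commute J T → Commute P T → Commute Q T →
      ∀ x ∈ S, T x ∈ S := by
    intro T h1 h2 h3 x hx
    refine ⟨⟨?_, ?_⟩, ?_⟩
    · exact Module.End.mapsTo_maxGenEigenspace_of_comm h1 η hx.1.1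
    · exact Module.End.mapsTo_maxGenEigenspace_of_comm h2 lam' hx.1.2
    · exact Module.End.mapsTo_maxGenEigenspace_of_comm h3 mu' hx.2
  have hSJ : ∀ x ∈ S, J x ∈ S :=
    hinv J (Commute.refl J) hJP.symm hJQ.symm
  have hSP : ∀ x ∈ S, P x ∈ S := hinv P hJP (Commute.refl P) hPQ.symm
  have hSQ : ∀ x ∈ S, Q x ∈ S := hinv Q hJQ hPQ (Commute.refl Q)
  -- the four shifted operators
  set E : Module.End K V := J - η • 1 with hEdef
  set D : Module.End K V := J - f • 1 with hDdef
  set Xp : Module.End K V := P - lam' • 1 with hXpdef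
  set Xq : Module.End K V := Q - mu' • 1 with hXqdef
  have hsmul_mem : ∀ (t : K) (x : V), x ∈ S → (t • (1 : Module.End K V)) x ∈ S := by
    intro t x hx
    simpa using S.smul_mem t hx
  have hSE : ∀ x ∈ S, E x ∈ S := fun x hx => by
    rw [hEdef]; exact S.sub_mem (hSJ x hx) (hsmul_mem η x hx)
  have hSD : ∀ x ∈ S, D x ∈ S := fun x hx => by
    rw [hDdef]; exact S.sub_mem (hSJ x hx) (hsmul_mem f x hx)
  have hSXp : ∀ x ∈ S, Xp x ∈ S := fun x hx => by
    rw [hXpdef]; exact S.sub_mem (hSP x hx) (hsmul_mem lam' x hx)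
  have hSXq : ∀ x ∈ S, Xq x ∈ S := fun x hx => by
    rw [hXqdef]; exact S.sub_mem (hSQ x hx) (hsmul_mem mu' x hx)
  set r : ℕ := Module.finrank K V with hrdef
  set NE : Module.End K S := LinearMap.restrict E hSE with hNEdef
  set ND : Module.End K S := LinearMap.restrict D hSD with hNDdef
  set Np : Module.End K S := LinearMap.restrict Xp hSXp with hNpdef
  set Nq : Module.End K S := LinearMap.restrict Xq hSXq with hNqdef
  have hrestr_pow_zero : ∀ (F : Module.End K V) (hF : ∀ x ∈ S, F x ∈ S),
      (∀ x ∈ S, (F ^ r) x = 0) → IsNilpotent (LinearMap.restrict F hF) := by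
    intro F hF h
    refine ⟨r, ?_⟩
    ext x
    rw [restrict_pow_apply hF r x]
    simpa using h x.1 x.2
  have hNEnil : IsNilpotent NE := by
    refine hrestr_pow_zero E hSE fun x hx => ?_
    exact maxGen_uniform_bound J η x hx.1.1
  have hNpnil : IsNilpotent Np := by
    refine hrestr_pow_zero Xp hSXp fun x hx => ?_
    exact maxGen_uniform_bound P lam' x hx.1.2
  have hNqnil : IsNilpotent Nq := by
    refine hrestr_pow_zero Xq hSXq fun x hx => ?_
    exact maxGen_uniform_bound Q mu' x hx.2
  -- algebraic identity for D
  have hD : D = (g + e * mu') • Xp + (b + e * lam') • Xq + e • (Xp * Xq) := by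
    rw [hDdef, hXpdef, hXqdef, hJdef, hfdef]
    simp only [mul_sub, sub_mul, smul_sub, sub_smul, add_smul, smul_smul,
      smul_mul_assoc, mul_smul_comm, one_mul, mul_one, smul_add, add_mul, mul_add]
    module
  -- restricted identity
  have hND : ND = (g + e * mu') • Np + (b + e * lam') • Nq + e • (Np * Nq) := by
    ext x
    simp only [hNDdef, hNpdef, hNqdef, LinearMap.add_apply, LinearMap.smul_apply,
      Module.End.mul_apply, Submodule.coe_add, Submodule.coe_smul,
      LinearMap.restrict_coe_apply]
    rw [hD]
    simp [LinearMap.add_apply, LinearMap.smul_apply, Module.End.mul_apply]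
  have hNpNq : Commute Np Nq := by
    have hXpXq : Commute Xp Xq := by
      rw [hXpdef, hXqdef]
      refine Commute.sub_left (Commute.sub_right hPQ ((Commute.one_right P).smul_right mu')) ?_
      exact Commute.sub_right ((Commute.one_left Q).smul_left lam')
        (((Commute.one_left _).smul_left lam').smul_right mu')
    refine LinearMap.ext fun x => Subtype.ext ?_
    rw [Module.End.mul_apply, Module.End.mul_apply, LinearMap.restrict_coe_apply,
      LinearMap.restrict_coe_apply, LinearMap.restrict_coe_apply,
      LinearMap.restrict_coe_apply]
    simpa [Module.End.mul_apply] using LinearMap.congr_fun hXpXq (x : V)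
  have hNDnil : IsNilpotent ND := by
    rw [hND]
    have h1 : IsNilpotent ((g + e * mu') • Np) := hNpnil.smul _
    have h2 : IsNilpotent ((b + e * lam') • Nq) := hNqnil.smul _
    have h3 : IsNilpotent (e • (Np * Nq)) := (hNpNq.isNilpotent_mul_right hNpnil).smul _
    have c12 : Commute ((g + e * mu') • Np) ((b + e * lam') • Nq) :=
      (hNpNq.smul_left _).smul_right _
    have c13 : Commute ((g + e * mu') • Np) (e • (Np * Nq)) :=
      (((Commute.refl Np).mul_right hNpNq).smul_left _).smul_right _
    have c23 : Commute ((b + e * lam') • Nq) (e • (Np * Nq)) :=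
      (((hNpNq.symm.mul_right (Commute.refl Nq))).smul_left _).smul_right _
    exact (Commute.add_left c13 c23).isNilpotent_add
      (c12.isNilpotent_add h1 h2) h3
  -- difference of the two restrictions is the scalar (f - η)
  have hdiff : NE - ND = (f - η) • (1 : Module.End K S) := by
    ext x
    simp only [hNEdef, hNDdef, LinearMap.sub_apply, Submodule.coe_sub,
      LinearMap.smul_apply, Module.End.one_apply, Submodule.coe_smul,
      LinearMap.restrict_coe_apply, hEdef, hDdef]
    simp only [LinearMap.sub_apply, LinearMap.smul_apply, Module.End.one_apply, sub_smul]
    abel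
  have hcomm : Commute NE ND := by
    have : NE = ND + (f - η) • (1 : Module.End K S) := by
      rw [← hdiff]; abel
    rw [this]
    exact Commute.add_left (Commute.refl ND) ((Commute.one_left ND).smul_left _)
  have hscal : IsNilpotent ((f - η) • (1 : Module.End K S)) := by
    rw [← hdiff]
    exact hcomm.isNilpotent_sub hNEnil hNDnil
  obtain ⟨x0, hx0S, hx0⟩ := (Submodule.ne_bot_iff S).mp hS
  obtain ⟨m, hm⟩ := hscal
  have hm' : ((f - η) ^ m) • (⟨x0, hx0S⟩ : S) = 0 := by
    have := LinearMap.congr_fun hm (⟨x0, hx0S⟩ : S)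
    rwa [_root_.smul_pow, one_pow, LinearMap.smul_apply, Module.End.one_apply,
      LinearMap.zero_apply] at this
  have hx0' : (⟨x0, hx0S⟩ : S) ≠ 0 := by
    intro h
    exact hx0 (by simpa using congrArg (Subtype.val) h)
  have hpow : (f - η) ^ m = 0 := by
    rcases smul_eq_zero.mp hm' with h | h
    · exact h
    · exact absurd h hx0'
  have : f - η = 0 := by
    rcases Nat.eq_zero_or_pos m with hm0 | hm0
    · rw [hm0, pow_zero] at hpow
      exact absurd hpow one_ne_zero
    · exact pow_eq_zero_iff hm0.ne' |>.mp hpow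
  have := sub_eq_zero.mp this
  rw [hfdef] at this
  exact this.symm

lemma decomp [IsAlgClosed K] [FiniteDimensional K V]
    (P Q : Module.End K V) (hPQ : Commute P Q) (p : Submodule K V)
    (hP : ∀ x ∈ p, P x ∈ p) (hQ : ∀ x ∈ p, Q x ∈ p) :
    p = ⨆ lam' : K, ⨆ mu' : K,
      (p ⊓ Module.End.maxGenEigenspace P lam' ⊓ Module.End.maxGenEigenspace Q mu') := by
  have h1 := Submodule.eq_iSup_inf_genEigenspace (f := P) (p := p) ⊤ hP
    (Module.End.iSup_maxGenEigenspace_eq_top P)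
  refine h1.trans (iSup_congr fun lam' => ?_)
  exact Submodule.eq_iSup_inf_genEigenspace (f := Q)
    (p := p ⊓ Module.End.maxGenEigenspace P lam') ⊤
    (fun x hx => ⟨hQ x hx.1, Module.End.mapsTo_maxGenEigenspace_of_comm hPQ lam' hx.2⟩)
    (Module.End.iSup_maxGenEigenspace_eq_top Q)

/-! ### Kronecker helpers -/

lemma kron_mulVec_left {Na No : ℕ} (A : Matrix (Fin Na) (Fin Na) K)
    (x : Fin Na × Fin No → K) (i : Fin Na) (j : Fin No) :
    ((A ⊗ₖ (1 : Matrix (Fin No) (Fin No) K)) *ᵥ x) (i, j)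
      = (A *ᵥ fun k => x (k, j)) i := by
  simp only [Matrix.mulVec, dotProduct, Fintype.sum_prod_type,
    Matrix.kroneckerMap_apply, Matrix.one_apply, mul_ite, ite_mul, mul_one, mul_zero,
    zero_mul, one_mul]
  rw [Finset.sum_comm]
  simp

lemma kron_mulVec_right {Na No : ℕ} (B : Matrix (Fin No) (Fin No) K)
    (x : Fin Na × Fin No → K) (i : Fin Na) (j : Fin No) :
    (((1 : Matrix (Fin Na) (Fin Na) K) ⊗ₖ B) *ᵥ x) (i, j)
      = (B *ᵥ fun l => x (i, l)) j := by
  simp only [Matrix.mulVec, dotProduct, Fintype.sum_prod_type,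
    Matrix.kroneckerMap_apply, Matrix.one_apply, mul_ite, ite_mul, mul_one, mul_zero,
    zero_mul, one_mul]
  simp

lemma kron_mulVec {Na No : ℕ} (A : Matrix (Fin Na) (Fin Na) K) (B : Matrix (Fin No) (Fin No) K)
    (v : Fin Na → K) (w : Fin No → K) :
    (A ⊗ₖ B) *ᵥ (fun p => v p.1 * w p.2) = fun p => (A *ᵥ v) p.1 * (B *ᵥ w) p.2 := by
  funext p
  rcases p with ⟨i, j⟩
  simp only [Matrix.mulVec, dotProduct, Fintype.sum_prod_type,
    Matrix.kroneckerMap_apply]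
  calc ∑ k, ∑ l, A i k * B j l * (v k * w l)
      = ∑ k, ∑ l, (A i k * v k) * (B j l * w l) := by
        refine Finset.sum_congr rfl fun k _ => Finset.sum_congr rfl fun l _ => by ring
    _ = (∑ k, A i k * v k) * (∑ l, B j l * w l) := (Finset.sum_mul_sum _ _ _ _).symm

lemma kron_one_pow {Na No : ℕ} (A : Matrix (Fin Na) (Fin Na) K) (k : ℕ) :
    (A ⊗ₖ (1 : Matrix (Fin No) (Fin No) K)) ^ k
      = (A ^ k) ⊗ₖ (1 : Matrix (Fin No) (Fin No) K) := by
  induction k with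
  | zero => simp [Matrix.one_kronecker_one]
  | succ k ih => rw [pow_succ, pow_succ, ih, ← Matrix.mul_kronecker_mul, one_mul]

lemma one_kron_pow {Na No : ℕ} (B : Matrix (Fin No) (Fin No) K) (k : ℕ) :
    ((1 : Matrix (Fin Na) (Fin Na) K) ⊗ₖ B) ^ k
      = (1 : Matrix (Fin Na) (Fin Na) K) ⊗ₖ (B ^ k) := by
  induction k with
  | zero => simp [Matrix.one_kronecker_one]
  | succ k ih => rw [pow_succ, pow_succ, ih, ← Matrix.mul_kronecker_mul, one_mul]

lemma kron_shift_left {Na No : ℕ} (A : Matrix (Fin Na) (Fin Na) K) (t : K) :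
    (A - t • (1 : Matrix (Fin Na) (Fin Na) K)) ⊗ₖ (1 : Matrix (Fin No) (Fin No) K)
      = A ⊗ₖ (1 : Matrix (Fin No) (Fin No) K)
        - t • (1 : Matrix (Fin Na × Fin No) (Fin Na × Fin No) K) := by
  ext ⟨i, j⟩ ⟨k, l⟩
  by_cases hik : i = k <;> by_cases hjl : j = l <;>
    simp [Matrix.kroneckerMap_apply, Matrix.one_apply, Matrix.sub_apply, Matrix.smul_apply,
      Prod.ext_iff, hik, hjl, sub_mul]

lemma kron_shift_right {Na No : ℕ} (B : Matrix (Fin No) (Fin No) K) (t : K) :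
    (1 : Matrix (Fin Na) (Fin Na) K) ⊗ₖ (B - t • (1 : Matrix (Fin No) (Fin No) K))
      = (1 : Matrix (Fin Na) (Fin Na) K) ⊗ₖ B
        - t • (1 : Matrix (Fin Na × Fin No) (Fin Na × Fin No) K) := by
  ext ⟨i, j⟩ ⟨k, l⟩
  by_cases hik : i = k <;> by_cases hjl : j = l <;>
    simp [Matrix.kroneckerMap_apply, Matrix.one_apply, Matrix.sub_apply, Matrix.smul_apply,
      Prod.ext_iff, hik, hjl, mul_sub]

lemma mulVecLin_mul' {n : Type*} [Fintype n] (M N : Matrix n n K) :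
    (M * N).mulVecLin = M.mulVecLin * N.mulVecLin := by
  rw [Matrix.mulVecLin_mul, Module.End.mul_eq_comp]

lemma commute_comb_left (P Q : Module.End K V) (hPQ : Commute P Q) (c g b e : K) :
    Commute (c • (1 : Module.End K V) + g • P + b • Q + e • (P * Q)) P := by
  refine Commute.add_left (Commute.add_left (Commute.add_left ?_ ?_) ?_) ?_
  · exact (Commute.one_left P).smul_left c
  · exact (Commute.refl P).smul_left g
  · exact hPQ.symm.smul_left b
  · exact (((Commute.refl P).mul_left hPQ.symm)).smul_left e

lemma commute_comb_right (P Q : Module.End K V) (hPQ : Commute P Q) (c g b e : K) :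
    Commute (c • (1 : Module.End K V) + g • P + b • Q + e • (P * Q)) Q := by
  refine Commute.add_left (Commute.add_left (Commute.add_left ?_ ?_) ?_) ?_
  · exact (Commute.one_left Q).smul_left c
  · exact hPQ.smul_left g
  · exact (Commute.refl Q).smul_left b
  · exact ((hPQ.mul_left (Commute.refl Q))).smul_left e

lemma maxGen_col {Na No : ℕ} (A : Matrix (Fin Na) (Fin Na) K) (t : K)
    (x : Fin Na × Fin No → K)
    (hx : x ∈ Module.End.maxGenEigenspace
      (A ⊗ₖ (1 : Matrix (Fin No) (Fin No) K)).mulVecLin t) (j : Fin No) :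
    (fun i => x (i, j)) ∈ Module.End.maxGenEigenspace A.mulVecLin t := by
  rw [Module.End.mem_maxGenEigenspace] at hx ⊢
  obtain ⟨k, hk⟩ := hx
  refine ⟨k, ?_⟩
  have hk' : (((A - t • 1) ^ k) ⊗ₖ (1 : Matrix (Fin No) (Fin No) K)) *ᵥ x = 0 := by
    rw [← kron_one_pow, kron_shift_left, ← pow_shift_mulVec]
    exact hk
  rw [pow_shift_mulVec]
  funext i
  have h2 := congrFun hk' (i, j)
  rw [kron_mulVec_left] at h2
  simpa using h2

lemma maxGen_row {Na No : ℕ} (B : Matrix (Fin No) (Fin No) K) (t : K)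
    (x : Fin Na × Fin No → K)
    (hx : x ∈ Module.End.maxGenEigenspace
      ((1 : Matrix (Fin Na) (Fin Na) K) ⊗ₖ B).mulVecLin t) (i : Fin Na) :
    (fun j => x (i, j)) ∈ Module.End.maxGenEigenspace B.mulVecLin t := by
  rw [Module.End.mem_maxGenEigenspace] at hx ⊢
  obtain ⟨k, hk⟩ := hx
  refine ⟨k, ?_⟩
  have hk' : ((1 : Matrix (Fin Na) (Fin Na) K) ⊗ₖ ((B - t • 1) ^ k)) *ᵥ x = 0 := by
    rw [← one_kron_pow, kron_shift_right, ← pow_shift_mulVec]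
    exact hk
  rw [pow_shift_mulVec]
  funext j
  have h2 := congrFun hk' (i, j)
  rw [kron_mulVec_right] at h2
  simpa using h2

lemma spec_of_maxGen_left {Na No : ℕ} (A : Matrix (Fin Na) (Fin Na) K) (t : K)
    (h : Module.End.maxGenEigenspace
      (A ⊗ₖ (1 : Matrix (Fin No) (Fin No) K)).mulVecLin t ≠ ⊥) :
    t ∈ A.charpoly.roots := by
  obtain ⟨x, hx0, hx⟩ := exists_eigenvector_of_maxGen_ne_bot h
  obtain ⟨⟨i0, j0⟩, hp⟩ := Function.ne_iff.mp hx0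
  refine root_charpoly_of_eig A t (fun i => x (i, j0)) ?_ ?_
  · intro h0
    exact hp (by simpa using congrFun h0 i0)
  · funext i
    have h2 := congrFun hx (i, j0)
    rw [Matrix.mulVecLin_apply] at h2
    rw [show (A *ᵥ fun k => x (k, j0)) i
        = ((A ⊗ₖ (1 : Matrix (Fin No) (Fin No) K)) *ᵥ x) (i, j0) from
      (kron_mulVec_left A x i j0).symm, h2]
    simp

lemma spec_of_maxGen_right {Na No : ℕ} (B : Matrix (Fin No) (Fin No) K) (t : K)
    (h : Module.End.maxGenEigenspace
      ((1 : Matrix (Fin Na) (Fin Na) K) ⊗ₖ B).mulVecLin t ≠ ⊥) :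
    t ∈ B.charpoly.roots := by
  obtain ⟨x, hx0, hx⟩ := exists_eigenvector_of_maxGen_ne_bot h
  obtain ⟨⟨i0, j0⟩, hp⟩ := Function.ne_iff.mp hx0
  refine root_charpoly_of_eig B t (fun j => x (i0, j)) ?_ ?_
  · intro h0
    exact hp (by simpa using congrFun h0 j0)
  · funext j
    have h2 := congrFun hx (i0, j)
    rw [Matrix.mulVecLin_apply] at h2
    rw [show (B *ᵥ fun l => x (i0, l)) j
        = (((1 : Matrix (Fin Na) (Fin Na) K) ⊗ₖ B) *ᵥ x) (i0, j) from
      (kron_mulVec_right B x i0 j).symm, h2]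
    simp

lemma map_mulVec_ofReal {n m : Type*} [Fintype n] (M : Matrix m n ℝ) (v : n → ℝ) :
    (M.map Complex.ofReal) *ᵥ (fun i => ((v i : ℝ) : ℂ)) = fun i => (((M *ᵥ v) i : ℝ) : ℂ) := by
  funext i
  simp only [Matrix.mulVec, dotProduct, Matrix.map_apply]
  push_cast
  rfl

end Stmt14Aux

theorem stmt14 {Na No : ℕ} (Aa : Matrix (Fin Na) (Fin Na) ℝ)
    (Ao : Matrix (Fin No) (Fin No) ℝ) (d α β γ δ lam mu K₀ ustar : ℝ)
    (hd : 0 < d) (hα : 0 ≤ α) (hβ : 0 ≤ β) (hγ : 0 ≤ γ) (hδ : 0 ≤ δ)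
    (hlam : ((lam : ℂ)) ∈ spectrumM Aa)
    (hlams : Polynomial.rootMultiplicity ((lam : ℂ))
      ((Aa.map Complex.ofReal).charpoly) = 1)
    (hmu : ((mu : ℂ)) ∈ spectrumM Ao)
    (hmus : Polynomial.rootMultiplicity ((mu : ℂ))
      ((Ao.map Complex.ofReal).charpoly) = 1)
    (hK₀def : K₀ = α + γ * lam + β * mu + δ * lam * mu)
    (hK₀ : 0 < K₀)
    (hdom : ∀ lam' ∈ spectrumM Aa, ∀ mu' ∈ spectrumM Ao,
      (lam', mu') ≠ (((lam : ℂ)), ((mu : ℂ))) →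
      α + γ * lam'.re + β * mu'.re + δ * (lam' * mu').re < K₀)
    (hust : ustar = d / K₀) :
    (0 : ℂ) ∈ spectrumM (Jmat Aa Ao d ustar α β γ δ) ∧
    Polynomial.rootMultiplicity (0 : ℂ)
      (((Jmat Aa Ao d ustar α β γ δ).map Complex.ofReal).charpoly) = 1 ∧
    (∃ va : Fin Na → ℝ, ∃ vo : Fin No → ℝ, va ≠ 0 ∧ vo ≠ 0 ∧
      Aa.mulVec va = lam • va ∧ Ao.mulVec vo = mu • vo ∧
      LinearMap.ker (Jmat Aa Ao d ustar α β γ δ).mulVecLin =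
        Submodule.span ℝ {(fun p => va p.1 * vo p.2 : Fin Na × Fin No → ℝ)}) ∧
    (∀ η ∈ spectrumM (Jmat Aa Ao d ustar α β γ δ), η ≠ 0 → η.re < 0) := by
  classical
  have hK0ne : K₀ ≠ 0 := ne_of_gt hK₀
  have hu : 0 < ustar := by rw [hust]; positivity
  have huK : ustar * K₀ = d := by rw [hust]; field_simp
  -- complex matrices
  set Ac : Matrix (Fin Na) (Fin Na) ℂ := Aa.map Complex.ofReal with hAc
  set Bc : Matrix (Fin No) (Fin No) ℂ := Ao.map Complex.ofReal with hBc
  set Pm : Matrix (Fin Na × Fin No) (Fin Na × Fin No) ℂ :=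
    Matrix.kroneckerMap (· * ·) Ac (1 : Matrix (Fin No) (Fin No) ℂ) with hPm
  set Qm : Matrix (Fin Na × Fin No) (Fin Na × Fin No) ℂ :=
    Matrix.kroneckerMap (· * ·) (1 : Matrix (Fin Na) (Fin Na) ℂ) Bc with hQm
  set Jc : Matrix (Fin Na × Fin No) (Fin Na × Fin No) ℂ :=
    (Jmat Aa Ao d ustar α β γ δ).map Complex.ofReal with hJcdef
  -- real eigenvectors
  have hrealroot : ∀ {n : ℕ} (M : Matrix (Fin n) (Fin n) ℝ) (t : ℝ),
      ((t : ℂ)) ∈ ((M.map Complex.ofReal).charpoly).roots →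
      ∃ v : Fin n → ℝ, v ≠ 0 ∧ M *ᵥ v = t • v := by
    intro n M t ht
    have h1 : ((M.map Complex.ofReal).charpoly) = (M.charpoly).map (Complex.ofRealHom) := by
      have := Matrix.charpoly_map M (Complex.ofRealHom : ℝ →+* ℂ)
      simpa [Complex.ofRealHom] using this
    rw [h1] at ht
    have hne : (M.charpoly).map (Complex.ofRealHom : ℝ →+* ℂ) ≠ 0 := by
      simpa using (M.charpoly_monic.map (Complex.ofRealHom : ℝ →+* ℂ)).ne_zero
    have hroot := (Polynomial.mem_roots hne).mp ht
    have heval : (M.charpoly).eval t = 0 := by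
      have h2 : (Complex.ofRealHom : ℝ →+* ℂ) ((M.charpoly).eval t) = 0 := by
        rw [← Polynomial.eval₂_at_apply, ← Polynomial.eval_map]
        exact hroot
      rw [Complex.ofRealHom_eq_coe] at h2
      exact_mod_cast h2
    have hdet : (t • (1 : Matrix (Fin n) (Fin n) ℝ) - M).det = 0 := by
      rw [← Stmt14Aux.eval_charpoly']; exact heval
    obtain ⟨v, hv0, hv⟩ := (Matrix.exists_mulVec_eq_zero_iff).mpr hdet
    refine ⟨v, hv0, ?_⟩
    rw [Matrix.sub_mulVec, Matrix.smul_mulVec, Matrix.one_mulVec, sub_eq_zero] at hv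
    exact hv.symm
  obtain ⟨va, hva0, hvaeig⟩ := hrealroot Aa lam hlam
  obtain ⟨vo, hvo0, hvoeig⟩ := hrealroot Ao mu hmu
  obtain ⟨i0, hi0⟩ := Function.ne_iff.mp hva0
  obtain ⟨j0, hj0⟩ := Function.ne_iff.mp hvo0
  -- complex eigenvectors
  set vac : Fin Na → ℂ := fun i => ((va i : ℝ) : ℂ) with hvac_def
  set voc : Fin No → ℂ := fun j => ((vo j : ℝ) : ℂ) with hvoc_def
  have hvac0 : vac ≠ 0 := fun h => hi0 (by simpa [hvac_def] using congrFun h i0)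
  have hvoc0 : voc ≠ 0 := fun h => hj0 (by simpa [hvoc_def] using congrFun h j0)
  have hvaceig : Ac *ᵥ vac = (lam : ℂ) • vac := by
    rw [hAc, hvac_def, Stmt14Aux.map_mulVec_ofReal]
    funext i
    rw [hvaeig]
    push_cast
    simp
  have hvoceig : Bc *ᵥ voc = (mu : ℂ) • voc := by
    rw [hBc, hvoc_def, Stmt14Aux.map_mulVec_ofReal]
    funext j
    rw [hvoeig]
    push_cast
    simp
  -- the real kernel vector
  have hscal : (-d + ustar * α) + ustar * γ * lam + ustar * β * mu
      + ustar * δ * (lam * mu) = 0 := by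
    rw [hK₀def] at huK
    linear_combination huK
  have hJw : (Jmat Aa Ao d ustar α β γ δ) *ᵥ (fun p => va p.1 * vo p.2) = 0 := by
    show ((-d + ustar * α) • (1 : Matrix (Fin Na × Fin No) (Fin Na × Fin No) ℝ)
      + (ustar * γ) • (Matrix.kroneckerMap (· * ·) Aa (1 : Matrix (Fin No) (Fin No) ℝ))
      + (ustar * β) • (Matrix.kroneckerMap (· * ·) (1 : Matrix (Fin Na) (Fin Na) ℝ) Ao)
      + (ustar * δ) • (Matrix.kroneckerMap (· * ·) Aa Ao)) *ᵥ (fun p => va p.1 * vo p.2) = 0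
    funext p
    rw [Matrix.add_mulVec, Matrix.add_mulVec, Matrix.add_mulVec]
    simp only [Matrix.smul_mulVec, Matrix.one_mulVec, Stmt14Aux.kron_mulVec,
      Matrix.one_mulVec, hvaeig, hvoeig, Pi.add_apply, Pi.smul_apply, smul_eq_mul,
      Pi.zero_apply]
    linear_combination (va p.1 * vo p.2) * hscal
  -- the complex structure of Jc
  set cC : ℂ := ((-d + ustar * α : ℝ) : ℂ) with hcC
  set gC : ℂ := ((ustar * γ : ℝ) : ℂ) with hgC
  set bC : ℂ := ((ustar * β : ℝ) : ℂ) with hbC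
  set eC : ℂ := ((ustar * δ : ℝ) : ℂ) with heC
  have hPmQm : Pm * Qm = Matrix.kroneckerMap (· * ·) Ac Bc := by
    have := Matrix.mul_kronecker_mul Ac (1 : Matrix (Fin Na) (Fin Na) ℂ)
      (1 : Matrix (Fin No) (Fin No) ℂ) Bc
    simpa [hPm, hQm] using this.symm
  have hQmPm : Qm * Pm = Matrix.kroneckerMap (· * ·) Ac Bc := by
    have := Matrix.mul_kronecker_mul (1 : Matrix (Fin Na) (Fin Na) ℂ) Ac
      Bc (1 : Matrix (Fin No) (Fin No) ℂ)
    simpa [hPm, hQm] using this.symm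
  have hJc : Jc = cC • (1 : Matrix (Fin Na × Fin No) (Fin Na × Fin No) ℂ)
      + gC • Pm + bC • Qm + eC • (Pm * Qm) := by
    rw [hPmQm]
    ext ⟨i, j⟩ ⟨k, l⟩
    simp only [hJcdef, Jmat, Matrix.map_apply, Matrix.add_apply, Matrix.smul_apply,
      Matrix.kroneckerMap_apply, Matrix.one_apply, smul_eq_mul, hPm, hQm, hAc, hBc,
      hcC, hgC, hbC, heC, Prod.mk.injEq]
    push_cast [apply_ite Complex.ofReal]
    by_cases hik : i = k <;> by_cases hjl : j = l <;> simp [hik, hjl]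
  set Pl : Module.End ℂ (Fin Na × Fin No → ℂ) := Pm.mulVecLin with hPl
  set Ql : Module.End ℂ (Fin Na × Fin No → ℂ) := Qm.mulVecLin with hQl
  set Jl : Module.End ℂ (Fin Na × Fin No → ℂ) := Jc.mulVecLin with hJldef
  have hPQcomm : Commute Pl Ql := by
    show Pl * Ql = Ql * Pl
    rw [hPl, hQl, ← Stmt14Aux.mulVecLin_mul', ← Stmt14Aux.mulVecLin_mul', hPmQm, hQmPm]
  have hJl : Jl = cC • (1 : Module.End ℂ (Fin Na × Fin No → ℂ)) + gC • Pl + bC • Ql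
      + eC • (Pl * Ql) := by
    rw [hJldef, hJc, Matrix.mulVecLin_add, Matrix.mulVecLin_add, Matrix.mulVecLin_add,
      Stmt14Aux.mulVecLin_smul', Stmt14Aux.mulVecLin_smul', Stmt14Aux.mulVecLin_smul',
      Stmt14Aux.mulVecLin_smul', Matrix.mulVecLin_one, Stmt14Aux.mulVecLin_mul',
      hPl, hQl]
    rfl
  have hcommJP : Commute Jl Pl := by
    rw [hJl]; exact Stmt14Aux.commute_comb_left Pl Ql hPQcomm cC gC bC eC
  have hcommJQ : Commute Jl Ql := by
    rw [hJl]; exact Stmt14Aux.commute_comb_right Pl Ql hPQcomm cC gC bC eC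
  -- the eigenvalue function
  set fC : ℂ → ℂ → ℂ := fun l m => cC + gC * l + bC * m + eC * (l * m) with hfC
  have hf0 : fC (lam : ℂ) (mu : ℂ) = 0 := by
    rw [show fC (lam : ℂ) (mu : ℂ)
        = (((-d + ustar * α) + ustar * γ * lam + ustar * β * mu
            + ustar * δ * (lam * mu) : ℝ) : ℂ) by
      rw [hfC, hcC, hgC, hbC, heC]; push_cast; ring]
    rw [hscal, Complex.ofReal_zero]
  have hdomC : ∀ lam' mu' : ℂ, lam' ∈ spectrumM Aa → mu' ∈ spectrumM Ao →
      (lam', mu') ≠ (((lam : ℂ)), ((mu : ℂ))) → (fC lam' mu').re < 0 := by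
    intro lam' mu' hl hm hne
    have hre : (fC lam' mu').re = (-d + ustar * α) + ustar * γ * lam'.re
        + ustar * β * mu'.re + ustar * δ * (lam' * mu').re := by
      simp [hfC, hcC, hgC, hbC, heC, Complex.add_re, Complex.mul_re, Complex.ofReal_re,
        Complex.ofReal_im]
    have hlt := hdom lam' hl mu' hm hne
    have hmul := mul_lt_mul_of_pos_left hlt hu
    rw [huK] at hmul
    rw [hre]
    have hexp : ustar * (α + γ * lam'.re + β * mu'.re + δ * (lam' * mu').re)
        = ustar * α + ustar * γ * lam'.re + ustar * β * mu'.re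
          + ustar * δ * (lam' * mu').re := by ring
    linarith [hmul, hexp]
  -- the core dictionary
  have main_eig : ∀ η lam' mu' : ℂ,
      (Module.End.maxGenEigenspace Jl η ⊓ Module.End.maxGenEigenspace Pl lam'
        ⊓ Module.End.maxGenEigenspace Ql mu') ≠ ⊥ →
      η = fC lam' mu' ∧ lam' ∈ spectrumM Aa ∧ mu' ∈ spectrumM Ao := by
    intro η lam' mu' hS
    have hS' : (Module.End.maxGenEigenspace
        (cC • (1 : Module.End ℂ (Fin Na × Fin No → ℂ)) + gC • Pl + bC • Ql + eC • (Pl * Ql)) η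
        ⊓ Module.End.maxGenEigenspace Pl lam'
        ⊓ Module.End.maxGenEigenspace Ql mu') ≠ ⊥ := by
      rw [← hJl]; exact hS
    have hUne : Module.End.maxGenEigenspace Pl lam' ≠ ⊥ := by
      intro hU
      exact hS (le_bot_iff.mp (le_trans (le_trans inf_le_left inf_le_right) hU.le))
    have hWne : Module.End.maxGenEigenspace Ql mu' ≠ ⊥ := by
      intro hW
      exact hS (le_bot_iff.mp (le_trans inf_le_right hW.le))
    refine ⟨Stmt14Aux.core Pl Ql hPQcomm cC gC bC eC η lam' mu' hS', ?_, ?_⟩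
    · exact Stmt14Aux.spec_of_maxGen_left Ac lam' (by rw [← hPl] at *; exact hUne)
    · exact Stmt14Aux.spec_of_maxGen_right Bc mu' (by rw [← hQl] at *; exact hWne)
  -- decomposition of generalized eigenspaces of Jl
  have hdecomp : ∀ η : ℂ, Module.End.maxGenEigenspace Jl η
      = ⨆ lam' : ℂ, ⨆ mu' : ℂ, (Module.End.maxGenEigenspace Jl η
          ⊓ Module.End.maxGenEigenspace Pl lam' ⊓ Module.End.maxGenEigenspace Ql mu') := by
    intro η
    exact Stmt14Aux.decomp Pl Ql hPQcomm (Module.End.maxGenEigenspace Jl η)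
      (fun x hx => Module.End.mapsTo_maxGenEigenspace_of_comm hcommJP η hx)
      (fun x hx => Module.End.mapsTo_maxGenEigenspace_of_comm hcommJQ η hx)
  -- the complex kernel vector
  set wc : Fin Na × Fin No → ℂ := fun p => vac p.1 * voc p.2 with hwc_def
  have hvaci0 : vac i0 ≠ 0 := by
    simp only [hvac_def, ne_eq, Complex.ofReal_eq_zero]; exact hi0
  have hvocj0 : voc j0 ≠ 0 := by
    simp only [hvoc_def, ne_eq, Complex.ofReal_eq_zero]; exact hj0
  have hwc0 : wc ≠ 0 := by
    intro h
    have h1 := congrFun h (i0, j0)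
    simp only [hwc_def, Pi.zero_apply] at h1
    rcases mul_eq_zero.mp h1 with h2 | h2
    · exact hvaci0 h2
    · exact hvocj0 h2
  have hJwc : Jl wc = 0 := by
    rw [hJldef]
    rw [Matrix.mulVecLin_apply]
    have : wc = fun p => (((fun q => va q.1 * vo q.2 : Fin Na × Fin No → ℝ) p : ℝ) : ℂ) := by
      funext p
      simp [hwc_def, hvac_def, hvoc_def]
    rw [this, hJcdef, Stmt14Aux.map_mulVec_ofReal, hJw]
    funext p
    simp
  have hwc_mem : wc ∈ Module.End.maxGenEigenspace Jl 0 := by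
    rw [Module.End.mem_maxGenEigenspace]
    exact ⟨1, by simpa using hJwc⟩
  -- the one-dimensional joint eigenspace
  have hGaspan : Module.End.maxGenEigenspace Ac.mulVecLin (lam : ℂ)
      = Submodule.span ℂ {vac} := by
    have hmem : vac ∈ Module.End.maxGenEigenspace Ac.mulVecLin (lam : ℂ) := by
      rw [Module.End.mem_maxGenEigenspace]
      refine ⟨1, ?_⟩
      simp only [pow_one, LinearMap.sub_apply, Matrix.mulVecLin_apply, LinearMap.smul_apply,
        Module.End.one_apply, hvaceig]
      simp
    have hfin : Module.finrank ℂ (Module.End.maxGenEigenspace Ac.mulVecLin (lam : ℂ)) = 1 := by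
      rw [Stmt14Aux.finrank_maxGen_eq_rootMultiplicity]
      exact hlams
    refine (Submodule.eq_of_le_of_finrank_le ?_ ?_).symm
    · rw [Submodule.span_le, Set.singleton_subset_iff]; exact hmem
    · rw [finrank_span_singleton hvac0, hfin]
  have hGospan : Module.End.maxGenEigenspace Bc.mulVecLin (mu : ℂ)
      = Submodule.span ℂ {voc} := by
    have hmem : voc ∈ Module.End.maxGenEigenspace Bc.mulVecLin (mu : ℂ) := by
      rw [Module.End.mem_maxGenEigenspace]
      refine ⟨1, ?_⟩
      simp only [pow_one, LinearMap.sub_apply, Matrix.mulVecLin_apply, LinearMap.smul_apply,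
        Module.End.one_apply, hvoceig]
      simp
    have hfin : Module.finrank ℂ (Module.End.maxGenEigenspace Bc.mulVecLin (mu : ℂ)) = 1 := by
      rw [Stmt14Aux.finrank_maxGen_eq_rootMultiplicity]
      exact hmus
    refine (Submodule.eq_of_le_of_finrank_le ?_ ?_).symm
    · rw [Submodule.span_le, Set.singleton_subset_iff]; exact hmem
    · rw [finrank_span_singleton hvoc0, hfin]
  have hUW_le : Module.End.maxGenEigenspace Pl (lam : ℂ)
      ⊓ Module.End.maxGenEigenspace Ql (mu : ℂ) ≤ Submodule.span ℂ {wc} := by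
    rintro x ⟨hxP, hxQ⟩
    have hcol : ∀ j, ∃ cj : ℂ, x ∘ (fun i => (i, j)) = cj • vac := by
      intro j
      have h1 := Stmt14Aux.maxGen_col Ac (lam : ℂ) x (by rw [← hPl] at *; exact hxP) j
      rw [hGaspan, Submodule.mem_span_singleton] at h1
      obtain ⟨cj, hcj⟩ := h1
      exact ⟨cj, hcj.symm⟩
    have hrow : ∀ i, ∃ di : ℂ, x ∘ (fun j => (i, j)) = di • voc := by
      intro i
      have h1 := Stmt14Aux.maxGen_row Bc (mu : ℂ) x (by rw [← hQl] at *; exact hxQ) i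
      rw [hGospan, Submodule.mem_span_singleton] at h1
      obtain ⟨di, hdi⟩ := h1
      exact ⟨di, hdi.symm⟩
    choose cf hcf using hcol
    choose df hdf using hrow
    rw [Submodule.mem_span_singleton]
    refine ⟨df i0 / vac i0, ?_⟩
    funext ⟨i, j⟩
    have h1 : x (i, j) = cf j * vac i := by
      simpa using congrFun (hcf j) i
    have h1' : x (i0, j) = cf j * vac i0 := by
      simpa using congrFun (hcf j) i0
    have h2 : x (i0, j) = df i0 * voc j := by
      simpa using congrFun (hdf i0) j
    have hcfj : cf j = df i0 * voc j / vac i0 := by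
      field_simp
      rw [← h1', h2]
      try ring
    show (df i0 / vac i0) * wc (i, j) = x (i, j)
    rw [h1, hcfj, hwc_def]
    field_simp
  -- maxGen Jl 0 = span wc
  have hmaxJ0 : Module.End.maxGenEigenspace Jl 0 = Submodule.span ℂ {wc} := by
    refine le_antisymm ?_ ?_
    · rw [hdecomp 0]
      refine iSup_le fun lam' => iSup_le fun mu' => ?_
      by_cases hS : (Module.End.maxGenEigenspace Jl 0
          ⊓ Module.End.maxGenEigenspace Pl lam' ⊓ Module.End.maxGenEigenspace Ql mu') = ⊥
      · rw [hS]; exact bot_le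
      · obtain ⟨heq, hl, hm⟩ := main_eig 0 lam' mu' hS
        have heqp : (lam', mu') = (((lam : ℂ)), ((mu : ℂ))) := by
          by_contra hne
          have := hdomC lam' mu' hl hm hne
          rw [← heq] at this
          simp at this
        obtain ⟨hl', hm'⟩ := Prod.mk.injEq .. ▸ heqp
        rw [Prod.mk.injEq] at heqp
        rw [heqp.1, heqp.2]
        refine le_trans ?_ hUW_le
        exact le_inf (le_trans inf_le_left inf_le_right) inf_le_right
    · rw [Submodule.span_le, Set.singleton_subset_iff]
      exact hwc_mem
  -- Part 2 : root multiplicity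
  have hpart2 : Polynomial.rootMultiplicity (0 : ℂ)
      (((Jmat Aa Ao d ustar α β γ δ).map Complex.ofReal).charpoly) = 1 := by
    rw [← hJcdef, ← Stmt14Aux.finrank_maxGen_eq_rootMultiplicity, ← hJldef, hmaxJ0,
      finrank_span_singleton hwc0]
  -- Part 1 : membership
  have hJcne : Jc.charpoly ≠ 0 := Jc.charpoly_monic.ne_zero
  have hpart1 : (0 : ℂ) ∈ spectrumM (Jmat Aa Ao d ustar α β γ δ) := by
    show (0 : ℂ) ∈ Jc.charpoly.roots
    rw [Polynomial.mem_roots hJcne]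
    rw [← Polynomial.rootMultiplicity_pos hJcne]
    rw [show Jc.charpoly = ((Jmat Aa Ao d ustar α β γ δ).map Complex.ofReal).charpoly from
      by rw [hJcdef]]
    rw [hpart2]
    norm_num
  -- Part 4 : all other eigenvalues have negative real part
  have hpart4 : ∀ η ∈ spectrumM (Jmat Aa Ao d ustar α β γ δ), η ≠ 0 → η.re < 0 := by
    intro η hη hη0
    have hη' : η ∈ Jc.charpoly.roots := hη
    have hroot := (Polynomial.mem_roots hJcne).mp hη'
    have hdet : (η • (1 : Matrix (Fin Na × Fin No) (Fin Na × Fin No) ℂ) - Jc).det = 0 := by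
      rw [← Stmt14Aux.eval_charpoly']; exact hroot
    obtain ⟨x, hx0, hx⟩ := (Matrix.exists_mulVec_eq_zero_iff).mpr hdet
    have hxeig : Jl x = η • x := by
      rw [Matrix.sub_mulVec, Matrix.smul_mulVec, Matrix.one_mulVec, sub_eq_zero] at hx
      rw [hJldef, Matrix.mulVecLin_apply, hx.symm]
    have hne : Module.End.maxGenEigenspace Jl η ≠ ⊥ := by
      rw [Submodule.ne_bot_iff]
      refine ⟨x, ?_, hx0⟩
      rw [Module.End.mem_maxGenEigenspace]
      refine ⟨1, ?_⟩
      simp [pow_one, LinearMap.sub_apply, hxeig, sub_self]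
    have : ∃ lam' mu' : ℂ, (Module.End.maxGenEigenspace Jl η
        ⊓ Module.End.maxGenEigenspace Pl lam' ⊓ Module.End.maxGenEigenspace Ql mu') ≠ ⊥ := by
      by_contra hcon
      push_neg at hcon
      apply hne
      rw [hdecomp η]
      simp only [hcon]
      simp
    obtain ⟨lam', mu', hS⟩ := this
    obtain ⟨heq, hl, hm⟩ := main_eig η lam' mu' hS
    have hnep : (lam', mu') ≠ (((lam : ℂ)), ((mu : ℂ))) := by
      intro hcon
      rw [Prod.mk.injEq] at hcon
      rw [hcon.1, hcon.2, hf0] at heq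
      exact hη0 heq
    rw [heq]
    exact hdomC lam' mu' hl hm hnep
  -- Part 3 : the kernel
  have hpart3 : LinearMap.ker (Jmat Aa Ao d ustar α β γ δ).mulVecLin =
      Submodule.span ℝ {(fun p => va p.1 * vo p.2 : Fin Na × Fin No → ℝ)} := by
    refine le_antisymm ?_ ?_
    · intro x hx
      have hx' : (Jmat Aa Ao d ustar α β γ δ) *ᵥ x = 0 := by
        simpa [Matrix.mulVecLin_apply] using hx
      have hxc : (fun p => ((x p : ℝ) : ℂ)) ∈ Module.End.maxGenEigenspace Jl 0 := by
        rw [Module.End.mem_maxGenEigenspace]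
        refine ⟨1, ?_⟩
        have : Jl (fun p => ((x p : ℝ) : ℂ)) = 0 := by
          rw [hJldef, Matrix.mulVecLin_apply, hJcdef, Stmt14Aux.map_mulVec_ofReal, hx']
          funext p
          simp
        simpa using this
      rw [hmaxJ0, Submodule.mem_span_singleton] at hxc
      obtain ⟨t, ht⟩ := hxc
      have h00 := congrFun ht (i0, j0)
      simp only [hwc_def, Pi.smul_apply, smul_eq_mul] at h00
      set s : ℝ := x (i0, j0) / (va i0 * vo j0) with hs
      have hvv : ((va i0 * vo j0 : ℝ) : ℂ) ≠ 0 := by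
        push_cast
        exact mul_ne_zero hvaci0 hvocj0
      have hts : t = ((s : ℝ) : ℂ) := by
        rw [hs]
        push_cast
        rw [eq_div_iff (by push_cast at hvv ⊢; exact hvv)]
        rw [← h00, hvac_def, hvoc_def]
        try ring
      rw [Submodule.mem_span_singleton]
      refine ⟨s, ?_⟩
      funext p
      have hp := congrFun ht p
      simp only [hwc_def, Pi.smul_apply, smul_eq_mul] at hp
      rw [hts] at hp
      have : ((s * (va p.1 * vo p.2) : ℝ) : ℂ) = ((x p : ℝ) : ℂ) := by
        push_cast
        rw [← hp, hvac_def, hvoc_def]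
        try push_cast
        try ring
      have := Complex.ofReal_inj.mp this
      simpa [Pi.smul_apply, smul_eq_mul] using this
    · rw [Submodule.span_le, Set.singleton_subset_iff]
      show (Jmat Aa Ao d ustar α β γ δ).mulVecLin (fun p => va p.1 * vo p.2) = 0
      rw [Matrix.mulVecLin_apply, hJw]
  exact ⟨hpart1, hpart2, ⟨va, vo, hva0, hvo0, hvaeig, hvoeig, hpart3⟩, hpart4⟩
end
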